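/- arXiv:0912.1824 — 11 statements merged into one kernel-verified Lean document; each statement's English description precedes it below -/
import Mathlib

section
/- Let m be an even positive integer and θ = π − π/(2m). Let A^e be the m×m real matrix whose entry in row i (i = 1, …, m) and column 2k+1 is cos((2i−1)(2k+1)θ) and in row i and column 2k+2 is sin((2i−1)(2k+1)θ), for k = 0, …, m/2 − 1. Then A^e (A^e)^T = (m/2) I_m; in particular A^e is invertible, so for every right-hand side v ∈ ℝ^m the linear system A^e x = v has a unique solution. -/
private lemma sum_cos_odd (x : ℝ) (n : ℕ) :
    2 * Real.sin x * ∑ k ∈ Finset.range n, Real.cos ((2 * (k : ℝ) + 1) * x)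
      = Real.sin (2 * (n : ℝ) * x) := by
  induction n with
  | zero => simp
  | succ n ih =>
    rw [Finset.sum_range_succ, mul_add, ih]
    have h := Real.sin_sub_sin ((2 * (n : ℝ) + 2) * x) (2 * (n : ℝ) * x)
    have h1 : ((2 * (n : ℝ) + 2) * x - 2 * (n : ℝ) * x) / 2 = x := by ring
    have h2 : ((2 * (n : ℝ) + 2) * x + 2 * (n : ℝ) * x) / 2 = (2 * (n : ℝ) + 1) * x := by
      ring
    rw [h1, h2] at h
    push_cast
    have h3 : (2 * ((n : ℝ) + 1)) * x = (2 * (n : ℝ) + 2) * x := by ring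
    rw [h3]
    linarith [h]

private lemma sum_range_pair (f : ℕ → ℝ) (n : ℕ) :
    ∑ j ∈ Finset.range (2 * n), f j
      = ∑ k ∈ Finset.range n, (f (2 * k) + f (2 * k + 1)) := by
  induction n with
  | zero => simp
  | succ n ih =>
    rw [show 2 * (n + 1) = (2 * n + 1) + 1 from by ring, Finset.sum_range_succ,
      Finset.sum_range_succ, ih, Finset.sum_range_succ]
    ring

/-- Even-`m` part of Lemma 1: the matrix `A^e` with rows
`(cos(η_i), sin(η_i), cos(3η_i), sin(3η_i), …, cos((m−1)η_i), sin((m−1)η_i))`,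
`η_i = (2i−1)θ`, `θ = π − π/(2m)`, satisfies `A^e (A^e)^T = (m/2) I`; in particular
every linear system `A^e x = v` has a unique solution. -/
theorem stmt_2 (m : ℕ) (hm : Even m) (hm0 : 0 < m)
    (θ : ℝ) (hθ : θ = Real.pi - Real.pi / (2 * m))
    (A : Matrix (Fin m) (Fin m) ℝ)
    (hA : ∀ i j : Fin m, A i j =
      if j.val % 2 = 0
      then Real.cos ((2 * (i.val : ℝ) + 1) * ((j.val : ℝ) + 1) * θ)
      else Real.sin ((2 * (i.val : ℝ) + 1) * (j.val : ℝ) * θ)) :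
    A * A.transpose = ((m : ℝ) / 2) • (1 : Matrix (Fin m) (Fin m) ℝ) ∧
      ∀ v : Fin m → ℝ, ∃! x : Fin m → ℝ, A.mulVec x = v := by
  obtain ⟨n, hn⟩ := hm
  have hm2 : m = 2 * n := by omega
  have hn0 : 0 < n := by omega
  have hmR : (m : ℝ) = 2 * n := by rw [hm2]; push_cast; ring
  have hmR0 : (m : ℝ) ≠ 0 := by positivity
  have hnR0 : (n : ℝ) ≠ 0 := Nat.cast_ne_zero.mpr hn0.ne'
  have key : A * A.transpose = ((m : ℝ) / 2) • (1 : Matrix (Fin m) (Fin m) ℝ) := by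
    ext i i'
    set g : ℕ → ℝ := fun j =>
      (if j % 2 = 0
        then Real.cos ((2 * (i.val : ℝ) + 1) * ((j : ℝ) + 1) * θ)
        else Real.sin ((2 * (i.val : ℝ) + 1) * (j : ℝ) * θ)) *
      (if j % 2 = 0
        then Real.cos ((2 * (i'.val : ℝ) + 1) * ((j : ℝ) + 1) * θ)
        else Real.sin ((2 * (i'.val : ℝ) + 1) * (j : ℝ) * θ)) with hg
    have hsum : (A * A.transpose) i i' = ∑ j ∈ Finset.range m, g j := by
      rw [Matrix.mul_apply, ← Fin.sum_univ_eq_sum_range g m]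
      refine Finset.sum_congr rfl fun j _ => ?_
      rw [Matrix.transpose_apply, hA, hA, hg]
    have hpair : ∀ k : ℕ,
        g (2 * k) + g (2 * k + 1)
          = Real.cos ((2 * (i.val : ℝ) - 2 * (i'.val : ℝ)) * (2 * (k : ℝ) + 1) * θ) := by
      intro k
      have h0 : (2 * k) % 2 = 0 := by omega
      simp only [hg, if_pos h0, if_neg (by omega : ¬ (2 * k + 1) % 2 = 0)]
      push_cast
      have h := Real.cos_sub ((2 * (i.val : ℝ) + 1) * (2 * (k : ℝ) + 1) * θ)
        ((2 * (i'.val : ℝ) + 1) * (2 * (k : ℝ) + 1) * θ)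
      have harg : (2 * (i.val : ℝ) + 1) * (2 * (k : ℝ) + 1) * θ
          - (2 * (i'.val : ℝ) + 1) * (2 * (k : ℝ) + 1) * θ
          = (2 * (i.val : ℝ) - 2 * (i'.val : ℝ)) * (2 * (k : ℝ) + 1) * θ := by ring
      rw [harg] at h
      linarith [h]
    have hsum2 : (A * A.transpose) i i'
        = ∑ k ∈ Finset.range n,
            Real.cos ((2 * (i.val : ℝ) - 2 * (i'.val : ℝ)) * (2 * (k : ℝ) + 1) * θ) := by
      rw [hsum]
      conv_lhs => rw [hm2]
      rw [sum_range_pair]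
      exact Finset.sum_congr rfl fun k _ => hpair k
    by_cases hii : i = i'
    · subst hii
      simp only [sub_self, zero_mul, Real.cos_zero, Finset.sum_const,
        Finset.card_range, nsmul_eq_mul, mul_one] at hsum2
      rw [hsum2, Matrix.smul_apply, Matrix.one_apply_eq, smul_eq_mul, mul_one, hmR]
      ring
    · set e : ℤ := (i.val : ℤ) - i'.val with he
      have he0 : e ≠ 0 := by
        simp only [he, sub_ne_zero]
        exact_mod_cast fun h => hii (Fin.ext (by exact_mod_cast h))
      have hi1 := i.isLt
      have hi2 := i'.isLt
      have heub : e < (m : ℤ) := by omega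
      have helb : -(m : ℤ) < e := by omega
      set φ : ℝ := (e : ℝ) * Real.pi / m with hφ
      have hmpos : (0 : ℝ) < m := by positivity
      have hterm : ∀ k : ℕ,
          Real.cos ((2 * (i.val : ℝ) - 2 * (i'.val : ℝ)) * (2 * (k : ℝ) + 1) * θ)
            = Real.cos ((2 * (k : ℝ) + 1) * φ) := by
        intro k
        have hd : (2 * (i.val : ℝ) - 2 * (i'.val : ℝ)) = 2 * (e : ℝ) := by
          rw [he]; push_cast; ring
        have harg : (2 * (i.val : ℝ) - 2 * (i'.val : ℝ)) * (2 * (k : ℝ) + 1) * θ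
            = -((2 * (k : ℝ) + 1) * φ) + ((e * (2 * k + 1) : ℤ) : ℝ) * (2 * Real.pi) := by
          rw [hd, hθ, hφ]
          push_cast
          field_simp
          ring
        rw [harg, show -((2 * (k : ℝ) + 1) * φ) + ((e * (2 * k + 1) : ℤ) : ℝ) * (2 * Real.pi)
            = -(((2 * (k : ℝ) + 1) * φ) - ((e * (2 * k + 1) : ℤ) : ℝ) * (2 * Real.pi)) from by
          ring, Real.cos_neg, Real.cos_sub_int_mul_two_pi]
      have hub : (e : ℝ) < m := by exact_mod_cast heub
      have hlb : -(m : ℝ) < e := by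
        have : ((-(m : ℤ) : ℤ) : ℝ) < e := by exact_mod_cast helb
        push_cast at this
        linarith
      have hsφ : Real.sin φ ≠ 0 := by
        rcases lt_or_gt_of_ne he0 with h | h
        · have heR : (e : ℝ) < 0 := by exact_mod_cast h
          have h2 : φ < 0 :=
            div_neg_of_neg_of_pos (mul_neg_of_neg_of_pos heR Real.pi_pos) hmpos
          have h1 : -Real.pi < φ := by
            rw [hφ, lt_div_iff₀ hmpos]
            nlinarith [Real.pi_pos]
          have hp := Real.sin_pos_of_pos_of_lt_pi (show 0 < -φ by linarith)
            (by linarith)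
          rw [Real.sin_neg] at hp
          intro hc; rw [hc] at hp; linarith
        · have heR : (0 : ℝ) < (e : ℝ) := by exact_mod_cast h
          have h2 : 0 < φ := by rw [hφ]; positivity
          have h1 : φ < Real.pi := by
            rw [hφ, div_lt_iff₀ hmpos]
            nlinarith [Real.pi_pos]
          have hp := Real.sin_pos_of_pos_of_lt_pi h2 h1
          intro hc; rw [hc] at hp; linarith
      have hSsin := sum_cos_odd φ n
      have hzero : Real.sin (2 * (n : ℝ) * φ) = Real.sin ((e : ℝ) * Real.pi) := by
        congr 1
        rw [hφ, hmR]
        field_simp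
      rw [hzero, Real.sin_int_mul_pi e] at hSsin
      have hS : ∑ k ∈ Finset.range n, Real.cos ((2 * (k : ℝ) + 1) * φ) = 0 := by
        rcases mul_eq_zero.mp hSsin with h | h
        · exfalso
          rcases mul_eq_zero.mp h with h' | h'
          · norm_num at h'
          · exact hsφ h'
        · exact h
      rw [hsum2]
      simp only [hterm]
      rw [hS, Matrix.smul_apply, Matrix.one_apply_ne hii, smul_eq_mul, mul_zero]
  refine ⟨key, fun v => ?_⟩
  set B : Matrix (Fin m) (Fin m) ℝ := ((2 : ℝ) / m) • A.transpose with hB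
  have hAB : A * B = 1 := by
    rw [hB, Matrix.mul_smul, key, smul_smul,
      show (2 : ℝ) / m * ((m : ℝ) / 2) = 1 from by field_simp]
    simp
  have hBA : B * A = 1 := mul_eq_one_comm.mp hAB
  refine ⟨B.mulVec v, ?_, ?_⟩
  · show A.mulVec (B.mulVec v) = v
    rw [Matrix.mulVec_mulVec, hAB, Matrix.one_mulVec]
  · intro x hx
    have h := congrArg B.mulVec hx
    rwa [Matrix.mulVec_mulVec, hBA, Matrix.one_mulVec] at h
end

section
/- Let m be an even positive integer, and for k = 0, …, m/2 − 1 set μ_k = cos((1+2k)π/(2m)) > 0 and ω_k = sin((1+2k)π/(2m)) > 0. Let c_k, d_k be real numbers and define L : [0, ∞) → ℝ by L(t) = Σ_{k=0}^{m/2−1} e^{−μ_k t} [c_k cos(ω_k t) + d_k sin(ω_k t)]. Assume the (one-sided) derivatives at 0 satisfy L^{(j)}(0) = 0 for every odd j with 1 ≤ j ≤ 2m−3, and L^{(2m−1)}(0) = 1/2. Then ∫_{−∞}^{∞} L(|τ|) dτ = 1 and ∫_{−∞}^{∞} τ^k L(|τ|) dτ = 0 for every k = 1, …, 2m−1; that is,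 t ↦ L(|t|) is a kernel of order 2m. -/
open MeasureTheory Set Filter Topology Nat

lemma hasDerivAt_cexp_real (w : ℂ) (t : ℝ) :
    HasDerivAt (fun s : ℝ => Complex.exp (w * s)) (w * Complex.exp (w * t)) t := by
  have h : HasDerivAt (fun s : ℝ => (w * s : ℂ)) w t := by
    simpa using (Complex.ofRealCLM.hasDerivAt (x := t)).const_mul w
  simpa [mul_comm] using h.cexp

lemma integrableOn_pow_mul_cexp (w : ℂ) (hw : w.re < 0) (n : ℕ) :
    IntegrableOn (fun t : ℝ => (t : ℂ) ^ n * Complex.exp (w * t)) (Set.Ioi 0) := by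
  have hb : (0 : ℝ) < -w.re := by linarith
  have hmaj := integrableOn_rpow_mul_exp_neg_mul_rpow
    (lt_of_lt_of_le neg_one_lt_zero (Nat.cast_nonneg n)) (zero_lt_one' ℝ) hb
  have hg : IntegrableOn (fun t : ℝ => t ^ n * Real.exp (w.re * t)) (Set.Ioi 0) := by
    refine hmaj.congr_fun (fun t ht => ?_) measurableSet_Ioi
    dsimp only
    rw [Real.rpow_natCast, Real.rpow_one]
    ring_nf
  refine hg.mono' ?_ ?_
  · exact (Continuous.aestronglyMeasurable (by continuity)).restrict
  · filter_upwards [ae_restrict_mem measurableSet_Ioi] with t ht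
    have : ‖(t : ℂ) ^ n * Complex.exp (w * t)‖ = |t| ^ n * Real.exp (w.re * t) := by
      simp [map_mul, map_pow, Complex.norm_exp,
        Complex.mul_re, Complex.ofReal_re, Complex.ofReal_im]
    rw [this, abs_of_pos (by exact ht)]

lemma tendsto_pow_mul_cexp (w : ℂ) (hw : w.re < 0) (n : ℕ) :
    Tendsto (fun t : ℝ => (t : ℂ) ^ n * Complex.exp (w * t)) atTop (𝓝 0) := by
  rw [tendsto_zero_iff_norm_tendsto_zero]
  have hb : (0 : ℝ) < -w.re := by linarith
  have h0 : Tendsto (fun t : ℝ => ((-w.re) * t) ^ n * Real.exp (-((-w.re) * t))) atTop (𝓝 0) :=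
    (Real.tendsto_pow_mul_exp_neg_atTop_nhds_zero n).comp (tendsto_id.const_mul_atTop hb)
  have h1 : Tendsto (fun t : ℝ => t ^ n * Real.exp (w.re * t)) atTop (𝓝 0) := by
    have h2 := h0.const_mul ((-w.re) ^ n)⁻¹
    rw [mul_zero] at h2
    refine h2.congr (fun t => ?_)
    rw [mul_pow]
    field_simp
  refine h1.congr' ?_
  filter_upwards [Ioi_mem_atTop (0:ℝ)] with t ht
  simp [map_mul, map_pow, Complex.norm_exp,
    Complex.mul_re, abs_of_pos (mem_Ioi.mp ht)]

lemma integral_pow_mul_cexp (w : ℂ) (hw : w.re < 0) : ∀ n : ℕ,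
    ∫ t in Set.Ioi (0:ℝ), (t : ℂ) ^ n * Complex.exp (w * t) = (n ! : ℂ) / (-w) ^ (n + 1) := by
  have hw0 : w ≠ 0 := fun h => by simp [h] at hw
  intro n
  induction n with
  | zero =>
    have hderiv : ∀ x ∈ Set.Ici (0:ℝ),
        HasDerivAt (fun t : ℝ => Complex.exp (w * t) / w) (Complex.exp (w * x)) x := by
      intro x _
      have := (hasDerivAt_cexp_real w x).div_const w
      simpa [mul_div_cancel_left₀ _ hw0] using this
    have hint : IntegrableOn (fun t : ℝ => Complex.exp (w * t)) (Set.Ioi 0) := by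
      simpa using integrableOn_pow_mul_cexp w hw 0
    have htend : Tendsto (fun t : ℝ => Complex.exp (w * t) / w) atTop (𝓝 0) := by
      have := (tendsto_pow_mul_cexp w hw 0).div_const w
      simpa using this
    have key := integral_Ioi_of_hasDerivAt_of_tendsto' hderiv hint htend
    simp only [Complex.ofReal_zero, mul_zero, Complex.exp_zero, pow_zero, one_mul] at key ⊢
    rw [key]
    simp [Nat.factorial]
  | succ n ih =>
    have hderiv : ∀ x ∈ Set.Ici (0:ℝ),
        HasDerivAt (fun t : ℝ => (t : ℂ) ^ (n+1) * Complex.exp (w * t) / w)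
          (((n:ℂ)+1) / w * ((x : ℂ) ^ n * Complex.exp (w * x))
            + (x : ℂ) ^ (n+1) * Complex.exp (w * x)) x := by
      intro x _
      have h1 : HasDerivAt (fun t : ℝ => (t : ℂ) ^ (n+1)) (((n:ℂ)+1) * (x:ℂ) ^ n) x := by
        have h2 := (hasDerivAt_pow (n+1) ((x : ℂ))).comp_ofReal
        simp only [Nat.cast_add, Nat.cast_one, Nat.add_sub_cancel] at h2
        exact h2
      have := (h1.fun_mul (hasDerivAt_cexp_real w x)).div_const w
      refine this.congr_deriv (Eq.symm ?_)
      field_simp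
    have hint : IntegrableOn (fun t : ℝ =>
        ((n:ℂ)+1) / w * ((t : ℂ) ^ n * Complex.exp (w * t))
          + (t : ℂ) ^ (n+1) * Complex.exp (w * t)) (Set.Ioi 0) :=
      ((integrableOn_pow_mul_cexp w hw n).const_mul _).add (integrableOn_pow_mul_cexp w hw (n+1))
    have htend : Tendsto (fun t : ℝ => (t : ℂ) ^ (n+1) * Complex.exp (w * t) / w) atTop (𝓝 0) := by
      have := (tendsto_pow_mul_cexp w hw (n+1)).div_const w
      simpa using this
    have key := integral_Ioi_of_hasDerivAt_of_tendsto' hderiv hint htend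
    rw [MeasureTheory.integral_add ((integrableOn_pow_mul_cexp w hw n).const_mul _)
      (integrableOn_pow_mul_cexp w hw (n+1)), MeasureTheory.integral_const_mul, ih] at key
    have hnw : (-w) ^ (n+1) ≠ 0 := pow_ne_zero _ (neg_ne_zero.mpr hw0)
    have : ∫ t in Set.Ioi (0:ℝ), (t : ℂ) ^ (n+1) * Complex.exp (w * t)
        = -(((n:ℂ)+1) / w * ((n ! : ℂ) / (-w) ^ (n+1))) := by
      simp only [Complex.ofReal_zero, ne_eq, Nat.succ_ne_zero, not_false_eq_true, zero_pow,
        mul_zero, Complex.exp_zero, mul_one, zero_mul, zero_div, sub_zero, zero_sub,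
        neg_zero] at key
      linear_combination key
    rw [this, Nat.factorial_succ]
    push_cast
    rw [pow_succ (-w) (n+1), _root_.div_mul_div_comm, ← div_neg]
    congr 1
    ring

lemma iteratedDeriv_re_sum (s : Finset ℕ) (a w : ℕ → ℂ) (j : ℕ) :
    iteratedDeriv j (fun t : ℝ => (∑ k ∈ s, a k * Complex.exp (w k * t)).re)
      = fun t : ℝ => (∑ k ∈ s, a k * w k ^ j * Complex.exp (w k * t)).re := by
  induction j with
  | zero => simp
  | succ n ih =>
    rw [iteratedDeriv_succ, ih]
    funext t
    have h : HasDerivAt (fun t : ℝ => ∑ k ∈ s, a k * w k ^ n * Complex.exp (w k * t))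
        (∑ k ∈ s, a k * w k ^ (n+1) * Complex.exp (w k * t)) t := by
      refine HasDerivAt.fun_sum fun k _ => ?_
      have := (hasDerivAt_cexp_real (w k) t).const_mul (a k * w k ^ n)
      refine this.congr_deriv (Eq.symm ?_)
      ring
    have h2 : HasDerivAt (fun t : ℝ => (∑ k ∈ s, a k * w k ^ n * Complex.exp (w k * t)).re)
        ((∑ k ∈ s, a k * w k ^ (n+1) * Complex.exp (w k * t)).re) t :=
      Complex.reCLM.hasFDerivAt.comp_hasDerivAt t h
    exact h2.deriv


/-- Even-`m` case of the Proposition in Section 3.3 (β = 1): if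
`L(t) = Σ_{k<m/2} e^{−μ_k t}[c_k cos(ω_k t) + d_k sin(ω_k t)]` with
`μ_k = cos((1+2k)π/(2m))`, `ω_k = sin((1+2k)π/(2m))`, and the derivatives at `0` satisfy
`L^{(j)}(0) = 0` for odd `1 ≤ j ≤ 2m−3` and `L^{(2m−1)}(0) = 1/2`, then `t ↦ L(|t|)` is a
kernel of order `2m`. -/
theorem stmt_4 (m : ℕ) (hm : Even m) (hm0 : 0 < m)
    (c d : ℕ → ℝ) (L : ℝ → ℝ)
    (hL : ∀ t : ℝ, L t = ∑ k ∈ Finset.range (m / 2),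
      Real.exp (-(Real.cos ((1 + 2 * (k : ℝ)) * Real.pi / (2 * m))) * t) *
        (c k * Real.cos (Real.sin ((1 + 2 * (k : ℝ)) * Real.pi / (2 * m)) * t) +
         d k * Real.sin (Real.sin ((1 + 2 * (k : ℝ)) * Real.pi / (2 * m)) * t)))
    (hodd : ∀ j : ℕ, Odd j → 1 ≤ j → j ≤ 2 * m - 3 → iteratedDeriv j L 0 = 0)
    (htop : iteratedDeriv (2 * m - 1) L 0 = 1 / 2) :
    (∫ τ : ℝ, L |τ|) = 1 ∧
      ∀ k : ℕ, 1 ≤ k → k ≤ 2 * m - 1 → (∫ τ : ℝ, τ ^ k * L |τ|) = 0 := by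
  have hm2 : 2 ≤ m := by
    rcases hm with ⟨j, rfl⟩; omega
  set θ : ℕ → ℝ := fun k => (1 + 2 * (k : ℝ)) * Real.pi / (2 * m) with hθdef
  set w : ℕ → ℂ := fun k => (↑(-(Real.cos (θ k))) : ℂ) + (Real.sin (θ k) : ℂ) * Complex.I
    with hwdef
  set a : ℕ → ℂ := fun k => (c k : ℂ) - (d k : ℂ) * Complex.I with hadef
  -- basic bounds on θ
  have hθmem : ∀ k, k < m / 2 → 0 < θ k ∧ θ k < Real.pi / 2 := by
    intro k hk
    have hklt : (1 : ℝ) + 2 * k < m := by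
      have : 2 * k + 2 ≤ m := by omega
      have := (Nat.cast_le (α := ℝ)).mpr this
      push_cast at this
      linarith
    have hpi := Real.pi_pos
    constructor
    · apply _root_.div_pos (by positivity) (by positivity)
    · rw [div_lt_iff₀ (by positivity)]
      nlinarith
  have hwre : ∀ k, k < m / 2 → (w k).re < 0 := by
    intro k hk
    have h := hθmem k hk
    have : 0 < Real.cos (θ k) :=
      Real.cos_pos_of_mem_Ioo ⟨by linarith [h.1, Real.pi_pos], h.2⟩
    have hre : (w k).re = -Real.cos (θ k) := by
      simp only [hwdef, Complex.add_re, Complex.ofReal_re, Complex.mul_re,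
        Complex.ofReal_im, Complex.I_re, Complex.I_im]
      ring
    rw [hre]
    linarith
  -- L as a real part of a complex exponential sum
  have hLre : ∀ t : ℝ, L t = (∑ k ∈ Finset.range (m / 2),
      a k * Complex.exp (w k * t)).re := by
    intro t
    rw [hL t, Complex.re_sum]
    refine Finset.sum_congr rfl fun k _ => ?_
    simp only [hadef, hwdef, hθdef, Complex.mul_re, Complex.sub_re, Complex.sub_im,
      Complex.ofReal_re, Complex.ofReal_im, Complex.mul_re, Complex.mul_im,
      Complex.I_re, Complex.I_im, Complex.exp_re, Complex.exp_im,
      Complex.add_re, Complex.add_im]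
    ring
  have hLfun : L = fun t : ℝ => (∑ k ∈ Finset.range (m / 2),
      a k * Complex.exp (w k * t)).re := funext hLre
  -- w k as a complex exponential
  have hwexp : ∀ k, w k = -Complex.exp ((↑(-(θ k)) : ℂ) * Complex.I) := by
    intro k
    rw [Complex.exp_mul_I]
    simp [hwdef, ← Complex.ofReal_cos, ← Complex.ofReal_sin, Complex.ofReal_neg]
    ring
  -- the sums T n
  set T : ℕ → ℂ := fun n => ∑ k ∈ Finset.range (m / 2),
      a k * Complex.exp ((↑(-((n : ℝ) * θ k)) : ℂ) * Complex.I) with hTdef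
  have hpow : ∀ (j k : ℕ), w k ^ j
      = (-1 : ℂ) ^ j * Complex.exp ((↑(-((j : ℝ) * θ k)) : ℂ) * Complex.I) := by
    intro j k
    rw [hwexp k, neg_pow, ← Complex.exp_nat_mul]
    congr 2
    push_cast
    ring
  have hIter : ∀ j : ℕ, iteratedDeriv j L 0 = ((-1 : ℂ) ^ j * T j).re := by
    intro j
    rw [hLfun, iteratedDeriv_re_sum]
    simp only [Complex.ofReal_zero, mul_zero, Complex.exp_zero, mul_one, hTdef,
      Finset.mul_sum]
    congr 1
    refine Finset.sum_congr rfl fun k _ => ?_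
    rw [hpow j k]
    ring
  have hT : ∀ j : ℕ, Odd j → 1 ≤ j → j ≤ 2 * m - 3 → (T j).re = 0 := by
    intro j hj h1 h2
    have h := hodd j hj h1 h2
    rw [hIter j, hj.neg_one_pow] at h
    simpa using h
  have hTtop : (T (2 * m - 1)).re = -(1/2) := by
    have hoddm : Odd (2 * m - 1) := ⟨m - 1, by omega⟩
    have h := htop
    rw [hIter _, hoddm.neg_one_pow] at h
    simp only [neg_mul, one_mul, Complex.neg_re] at h
    linarith
  -- the key shift identity
  have hshift : ∀ n : ℕ, n ≤ 2 * m →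
      (∑ k ∈ Finset.range (m / 2),
        a k * Complex.exp ((↑((n : ℝ) * θ k) : ℂ) * Complex.I)) = - T (2 * m - n) := by
    intro n hn
    rw [hTdef, ← Finset.sum_neg_distrib]
    refine Finset.sum_congr rfl fun k hk => ?_
    have hexp : Complex.exp ((↑((n : ℝ) * θ k) : ℂ) * Complex.I)
        = - Complex.exp ((↑(-((((2 * m - n : ℕ)) : ℝ) * θ k)) : ℂ) * Complex.I) := by
      have hcast : (((2 * m - n : ℕ)) : ℝ) = 2 * m - n := by
        push_cast [Nat.cast_sub hn]; ring
      have h2m : (2 * (m : ℝ)) * θ k = (1 + 2 * k) * Real.pi := by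
        rw [hθdef]
        field_simp
      have hsplit : (↑((n : ℝ) * θ k) : ℂ) * Complex.I
          = (↑(-((((2 * m - n : ℕ)) : ℝ) * θ k)) : ℂ) * Complex.I
            + (↑((2 * (m:ℝ)) * θ k) : ℂ) * Complex.I := by
        rw [hcast]
        push_cast
        ring
      rw [hsplit, Complex.exp_add, h2m]
      have : Complex.exp ((↑((1 + 2 * (k:ℝ)) * Real.pi) : ℂ) * Complex.I) = -1 := by
        have : ((↑((1 + 2 * (k:ℝ)) * Real.pi) : ℂ) * Complex.I)
            = ((1 + 2 * k : ℕ) : ℂ) * (Real.pi * Complex.I) := by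
          push_cast
          ring
        rw [this, Complex.exp_nat_mul, Complex.exp_pi_mul_I]
        exact (Odd.neg_one_pow ⟨k, by ring⟩)
      rw [this]
      ring
    rw [hexp]
    ring
  -- the integral formula
  have hInt : ∀ p : ℕ, (∫ t in Set.Ioi (0:ℝ), t ^ p * L t)
      = (p)! * (∑ k ∈ Finset.range (m / 2),
          a k * Complex.exp ((↑(((p+1 : ℕ) : ℝ) * θ k) : ℂ) * Complex.I)).re := by
    intro p
    have hptwise : ∀ t : ℝ, t ^ p * L t = (∑ k ∈ Finset.range (m / 2),
        a k * ((t:ℂ) ^ p * Complex.exp (w k * t))).re := by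
      intro t
      rw [hLre t, ← Complex.re_ofReal_mul, Finset.mul_sum]
      congr 1
      refine Finset.sum_congr rfl fun k _ => ?_
      push_cast
      ring
    have hmem : ∀ k ∈ Finset.range (m / 2), (w k).re < 0 := fun k hk =>
      hwre k (Finset.mem_range.mp hk)
    have hgint : IntegrableOn (fun t : ℝ => ∑ k ∈ Finset.range (m / 2),
        a k * ((t:ℂ) ^ p * Complex.exp (w k * t))) (Set.Ioi 0) :=
      integrable_finset_sum _ fun k hk =>
        ((integrableOn_pow_mul_cexp (w k) (hmem k hk) p).const_mul (a k))
    calc (∫ t in Set.Ioi (0:ℝ), t ^ p * L t)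
        = ∫ t in Set.Ioi (0:ℝ), (∑ k ∈ Finset.range (m / 2),
            a k * ((t:ℂ) ^ p * Complex.exp (w k * t))).re := by
          refine setIntegral_congr_fun measurableSet_Ioi fun t _ => hptwise t
      _ = (∫ t in Set.Ioi (0:ℝ), ∑ k ∈ Finset.range (m / 2),
            a k * ((t:ℂ) ^ p * Complex.exp (w k * t))).re := by
          exact (ContinuousLinearMap.integral_comp_comm Complex.reCLM hgint)
      _ = (∑ k ∈ Finset.range (m / 2),
            a k * ((p ! : ℂ) / (-(w k)) ^ (p + 1))).re := by
          congr 1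
          rw [MeasureTheory.integral_finset_sum _ (fun k hk =>
            (integrableOn_pow_mul_cexp (w k) (hmem k hk) p).const_mul (a k))]
          refine Finset.sum_congr rfl fun k hk => ?_
          rw [MeasureTheory.integral_const_mul, integral_pow_mul_cexp (w k) (hmem k hk) p]
      _ = ((p ! : ℂ) * ∑ k ∈ Finset.range (m / 2),
            a k * Complex.exp ((↑(((p+1 : ℕ) : ℝ) * θ k) : ℂ) * Complex.I)).re := by
          congr 1
          rw [Finset.mul_sum]
          refine Finset.sum_congr rfl fun k hk => ?_
          have hnw : -(w k) = Complex.exp ((↑(-(θ k)) : ℂ) * Complex.I) := by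
            rw [hwexp k]; ring
          have hpw : (-(w k)) ^ (p+1)
              = Complex.exp (-((↑(((p+1 : ℕ) : ℝ) * θ k) : ℂ) * Complex.I)) := by
            rw [hnw, ← Complex.exp_nat_mul]
            congr 1
            push_cast
            ring
          rw [hpw, div_eq_mul_inv, ← Complex.exp_neg, neg_neg]
          ring
      _ = (p)! * (∑ k ∈ Finset.range (m / 2),
            a k * Complex.exp ((↑(((p+1 : ℕ) : ℝ) * θ k) : ℂ) * Complex.I)).re := by
          rw [Complex.mul_re]
          simp
  constructor
  · rw [integral_comp_abs (f := L)]
    have h0 : (∫ t in Set.Ioi (0:ℝ), L t) = ∫ t in Set.Ioi (0:ℝ), t ^ 0 * L t := by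
      simp
    rw [h0, hInt 0]
    simp only [Nat.zero_add]
    rw [hshift 1 (by omega)]
    rw [Complex.neg_re, hTtop]
    norm_num
  · intro k hk1 hk2
    rcases Nat.even_or_odd k with hke | hko
    · have hb' := hke
      obtain ⟨b, hb⟩ := hb'
      have habs : (∫ τ : ℝ, τ ^ k * L |τ|) = ∫ τ : ℝ, (fun t => t ^ k * L t) |τ| := by
        congr 1
        funext τ
        simp only
        rw [hke.pow_abs]
      have hca : (∫ τ : ℝ, (fun t => t ^ k * L t) |τ|)
          = 2 * ∫ t in Set.Ioi (0:ℝ), t ^ k * L t :=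
        integral_comp_abs (f := fun t => t ^ k * L t)
      rw [habs, hca, hInt k, hshift (k+1) (by omega)]
      have hoddj : Odd (2 * m - (k+1)) := ⟨m - b - 1, by omega⟩
      rw [Complex.neg_re, hT _ hoddj (by omega) (by omega)]
      norm_num
    · have h1 : ∫ x : ℝ, (fun y : ℝ => y ^ k * L |y|) (-x) = ∫ x : ℝ, x ^ k * L |x| :=
        MeasureTheory.integral_neg_eq_self (fun y : ℝ => y ^ k * L |y|) volume
      have h2 : ∀ x : ℝ, (fun y : ℝ => y ^ k * L |y|) (-x) = -(x ^ k * L |x|) := by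
        intro x
        simp only
        rw [abs_neg, hko.neg_pow]
        ring
      simp only [h2] at h1
      rw [MeasureTheory.integral_neg] at h1
      linarith
end

section
/- Let m be an even positive integer, β > 0, and for k = 0, …, m/2 − 1 set μ_k = cos((1+2k)π/(2m)) > 0 and ω_k = sin((1+2k)π/(2m)) > 0. Let c_k, d_k be real numbers and define L(t) = Σ_{k=0}^{m/2−1} β e^{−βμ_k t} [c_k cos(ω_k β t) + d_k sin(ω_k β t)] for t ≥ 0. Assume the (one-sided) derivatives at 0 satisfy L^{(j)}(0) = 0 for every odd j with 1 ≤ j ≤ 2m−3 and L^{(2m−1)}(0) = β^{2m}/2. Then for every continuous function G : [0,1] → ℝ, the function F_0(t) = ∫_0^1 L(|t−s|) G(s) ds is 2m times continuously differentiable on [0,1] and satisfies β^{−2m} F_0^{(2m)}(t) + F_0(t) = G(t) for all t ∈ [0,1]. -/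
open intervalIntegral MeasureTheory Set Finset


noncomputable def GreenPhi (n2 : ℕ) (a r : ℕ → ℂ) (g : ℝ → ℝ) (j : ℕ) (t : ℝ) : ℂ :=
  ∑ k ∈ Finset.range n2,
    (a k * r k ^ j * Complex.exp (r k * t) * ∫ s in (0:ℝ)..t, Complex.exp (-r k * s) * (g s : ℂ))
    + ∑ k ∈ Finset.range n2,
    (a k * (-r k) ^ j * Complex.exp (-r k * t) * ∫ s in t..(1:ℝ), Complex.exp (r k * s) * (g s : ℂ))

noncomputable def GreenPsi (n2 : ℕ) (a r : ℕ → ℂ) (g : ℝ → ℝ) (j : ℕ) (t : ℝ) : ℝ :=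
  (GreenPhi n2 a r g j t).re

private lemma re_mul_ofReal (z : ℂ) (x : ℝ) : (z * (x:ℂ)).re = z.re * x := by
  simp [Complex.mul_re]

private lemma cexp_real_hasDerivAt (z : ℂ) (t : ℝ) :
    HasDerivAt (fun t : ℝ => Complex.exp (z * t)) (z * Complex.exp (z * t)) t := by
  have h : HasDerivAt (fun w : ℂ => Complex.exp (z * w)) (z * Complex.exp (z * (t:ℂ))) (t : ℂ) := by
    have h1 : HasDerivAt (fun w : ℂ => z * w) (z * 1) (t:ℂ) := (hasDerivAt_id (t:ℂ)).const_mul z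
    exact ((Complex.hasDerivAt_exp (z * (t:ℂ))).comp (t:ℂ) h1).congr_deriv (by ring)
  exact h.comp_ofReal

private lemma my_hasDerivAt_re {f : ℝ → ℂ} {f' : ℂ} {t : ℝ} (hf : HasDerivAt f f' t) :
    HasDerivAt (fun t => (f t).re) f'.re t := by
  have := Complex.reCLM.hasFDerivAt.comp_hasDerivAt t hf
  simp only [Function.comp_def, Complex.reCLM_apply] at this
  exact this

private lemma greenPhi_hasDerivAt (n2 : ℕ) (a r : ℕ → ℂ) (g : ℝ → ℝ) (hg : Continuous g)
    (j : ℕ) (t : ℝ) :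
    HasDerivAt (GreenPhi n2 a r g j)
      (GreenPhi n2 a r g (j+1) t
        + (∑ k ∈ Finset.range n2, (a k * r k ^ j - a k * (-r k) ^ j)) * (g t : ℂ)) t := by
  have hc : ∀ z : ℂ, Continuous (fun s : ℝ => Complex.exp (z * s) * (g s : ℂ)) := fun z =>
    (Complex.continuous_exp.comp (continuous_const.mul Complex.continuous_ofReal)).mul
      (Complex.continuous_ofReal.comp hg)
  have hI : ∀ k : ℕ, HasDerivAt (fun u : ℝ => ∫ s in (0:ℝ)..u, Complex.exp (-r k * s) * (g s : ℂ))
      (Complex.exp (-r k * t) * (g t : ℂ)) t := fun k =>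
    ((hc (-r k)).integral_hasStrictDerivAt 0 t).hasDerivAt
  have hJ : ∀ k : ℕ, HasDerivAt (fun u : ℝ => ∫ s in u..(1:ℝ), Complex.exp (r k * s) * (g s : ℂ))
      (-(Complex.exp (r k * t) * (g t : ℂ))) t := fun k =>
    integral_hasDerivAt_left ((hc (r k)).intervalIntegrable t 1)
      ((hc (r k)).stronglyMeasurableAtFilter _ _) (hc (r k)).continuousAt
  have h1 : ∀ k : ℕ, HasDerivAt
      (fun t : ℝ => a k * r k ^ j * Complex.exp (r k * t)
          * ∫ s in (0:ℝ)..t, Complex.exp (-r k * s) * (g s : ℂ))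
      (a k * r k ^ (j+1) * Complex.exp (r k * t)
          * (∫ s in (0:ℝ)..t, Complex.exp (-r k * s) * (g s : ℂ))
        + a k * r k ^ j * (g t : ℂ)) t := by
    intro k
    have hE : HasDerivAt (fun t : ℝ => a k * r k ^ j * Complex.exp (r k * t))
        (a k * r k ^ (j+1) * Complex.exp (r k * t)) t := by
      have := (cexp_real_hasDerivAt (r k) t).const_mul (a k * r k ^ j)
      exact this.congr_deriv (by ring)
    have := hE.mul (hI k)
    refine this.congr_deriv (Eq.symm ?_)
    have he : Complex.exp (r k * t) * Complex.exp (-r k * t) = 1 := by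
      rw [← Complex.exp_add, show r k * (t:ℂ) + -r k * (t:ℂ) = 0 by ring, Complex.exp_zero]
    linear_combination (-(a k * r k ^ j * (g t : ℂ))) * he
  have h2 : ∀ k : ℕ, HasDerivAt
      (fun t : ℝ => a k * (-r k) ^ j * Complex.exp (-r k * t)
          * ∫ s in t..(1:ℝ), Complex.exp (r k * s) * (g s : ℂ))
      (a k * (-r k) ^ (j+1) * Complex.exp (-r k * t)
          * (∫ s in t..(1:ℝ), Complex.exp (r k * s) * (g s : ℂ))
        - a k * (-r k) ^ j * (g t : ℂ)) t := by
    intro k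
    have hE : HasDerivAt (fun t : ℝ => a k * (-r k) ^ j * Complex.exp (-r k * t))
        (a k * (-r k) ^ (j+1) * Complex.exp (-r k * t)) t := by
      have := (cexp_real_hasDerivAt (-r k) t).const_mul (a k * (-r k) ^ j)
      exact this.congr_deriv (by ring)
    have := hE.mul (hJ k)
    refine this.congr_deriv (Eq.symm ?_)
    have he : Complex.exp (-r k * t) * Complex.exp (r k * t) = 1 := by
      rw [← Complex.exp_add, show -r k * (t:ℂ) + r k * (t:ℂ) = 0 by ring, Complex.exp_zero]
    linear_combination (a k * (-r k) ^ j * (g t : ℂ)) * he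
  have hsumA : HasDerivAt (fun y : ℝ => ∑ k ∈ Finset.range n2,
      (a k * r k ^ j * Complex.exp (r k * y) * ∫ s in (0:ℝ)..y, Complex.exp (-r k * s) * (g s : ℂ)))
      (∑ k ∈ Finset.range n2,
        ((a k * r k ^ (j+1) * Complex.exp (r k * t)
            * ∫ s in (0:ℝ)..t, Complex.exp (-r k * s) * (g s : ℂ))
          + a k * r k ^ j * (g t : ℂ))) t := HasDerivAt.fun_sum fun k _ => h1 k
  have hsumB : HasDerivAt (fun y : ℝ => ∑ k ∈ Finset.range n2,
      (a k * (-r k) ^ j * Complex.exp (-r k * y) * ∫ s in y..(1:ℝ), Complex.exp (r k * s) * (g s : ℂ)))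
      (∑ k ∈ Finset.range n2,
        ((a k * (-r k) ^ (j+1) * Complex.exp (-r k * t)
            * ∫ s in t..(1:ℝ), Complex.exp (r k * s) * (g s : ℂ))
          - a k * (-r k) ^ j * (g t : ℂ))) t := HasDerivAt.fun_sum fun k _ => h2 k
  have hsum := hsumA.add hsumB
  have heq : GreenPhi n2 a r g j = fun (y : ℝ) =>
      (∑ k ∈ Finset.range n2,
        (a k * r k ^ j * Complex.exp (r k * y) * ∫ s in (0:ℝ)..y, Complex.exp (-r k * s) * (g s : ℂ)))
      + ∑ k ∈ Finset.range n2,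
        (a k * (-r k) ^ j * Complex.exp (-r k * y) * ∫ s in y..(1:ℝ), Complex.exp (r k * s) * (g s : ℂ)) := rfl
  rw [heq]
  refine hsum.congr_deriv (Eq.symm ?_)
  rw [GreenPhi, Finset.sum_sub_distrib, sub_mul, Finset.sum_mul, Finset.sum_mul,
    Finset.sum_add_distrib, Finset.sum_sub_distrib]
  ring


private lemma root_pow (m k : ℕ) (hm0 : 0 < m) (β : ℝ) :
    ((β:ℂ) * (-(Real.cos ((1 + 2*(k:ℝ)) * Real.pi / (2*m))) +
        (Real.sin ((1 + 2*(k:ℝ)) * Real.pi / (2*m))) * Complex.I)) ^ (2*m) = -(β:ℂ)^(2*m) := by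
  set θ : ℝ := (1 + 2*(k:ℝ)) * Real.pi / (2*m) with hθdef
  have h1 : (-(Real.cos θ : ℂ) + (Real.sin θ : ℂ) * Complex.I) = -Complex.exp (-(θ:ℂ) * Complex.I) := by
    rw [Complex.exp_mul_I]
    rw [Complex.cos_neg, Complex.sin_neg, ← Complex.ofReal_cos, ← Complex.ofReal_sin]
    ring
  rw [h1, mul_pow, neg_pow, Even.neg_one_pow ⟨m, by ring⟩, one_mul, ← Complex.exp_nat_mul]
  have h2 : (2*m : ℕ) * (-(θ:ℂ) * Complex.I) = Real.pi * Complex.I + ((-1 - (k:ℤ)) : ℤ) * (2 * Real.pi * Complex.I) := by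
    have hθ : (2*(m:ℝ)) * θ = (1 + 2*(k:ℝ)) * Real.pi := by
      rw [hθdef]; field_simp
    have : ((2*m : ℕ) : ℂ) * (θ:ℂ) = ((1 + 2*(k:ℝ)) * Real.pi : ℝ) := by
      push_cast
      push_cast at hθ
      rw [show ((2:ℂ) * m * θ) = (((2*(m:ℝ))*θ :ℝ):ℂ) by push_cast; ring, hθ]
      push_cast; ring
    have h3 : ((2*m : ℕ) : ℂ) * (-(θ:ℂ) * Complex.I) = -(((1 + 2*(k:ℝ)) * Real.pi : ℝ):ℂ) * Complex.I := by
      rw [← this]; ring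
    rw [h3]; push_cast; ring
  rw [h2, Complex.exp_add, Complex.exp_pi_mul_I, Complex.exp_int_mul_two_pi_mul_I]
  ring

private lemma term_re (β cc dd : ℝ) (θ : ℝ) (t : ℝ) :
    (((β:ℂ) * ((cc:ℂ) - (dd:ℂ) * Complex.I)) *
        Complex.exp (((β:ℂ) * (-(Real.cos θ) + (Real.sin θ) * Complex.I)) * t)).re
      = β * Real.exp (-(β * Real.cos θ) * t) *
          (cc * Real.cos (Real.sin θ * β * t) + dd * Real.sin (Real.sin θ * β * t)) := by
  have hz : ((β:ℂ) * (-(Real.cos θ) + (Real.sin θ) * Complex.I)) * t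
      = ((-(β * Real.cos θ) * t : ℝ) : ℂ) + ((Real.sin θ * β * t : ℝ) : ℂ) * Complex.I := by
    push_cast; ring
  rw [hz]
  simp only [Complex.mul_re, Complex.mul_im, Complex.add_re, Complex.add_im, Complex.I_re,
    Complex.I_im, Complex.ofReal_re, Complex.ofReal_im, Complex.sub_re, Complex.sub_im,
    Complex.exp_re, Complex.exp_im]
  ring

private lemma green_split (n2 : ℕ) (a r : ℕ → ℂ) (L : ℝ → ℝ)
    (hLt : ∀ t : ℝ, L t = (∑ k ∈ Finset.range n2, a k * Complex.exp (r k * t)).re)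
    (hLc : Continuous L) (g : ℝ → ℝ) (hg : Continuous g) (G : ℝ → ℝ)
    (hgG : ∀ x ∈ Set.Icc (0:ℝ) 1, g x = G x) (hGc : ContinuousOn G (Set.Icc 0 1))
    (t : ℝ) (ht : t ∈ Set.Icc (0:ℝ) 1) :
    ∫ s in (0:ℝ)..1, L |t - s| * G s = GreenPsi n2 a r g 0 t := by
  obtain ⟨ht0, ht1⟩ := ht
  have hfc : ContinuousOn (fun s => L |t - s| * G s) (Set.Icc 0 1) :=
    ((hLc.comp ((continuous_const.sub continuous_id).abs)).continuousOn).mul hGc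
  have hi1 : IntervalIntegrable (fun s => L |t - s| * G s) volume 0 t := by
    apply ContinuousOn.intervalIntegrable
    rw [Set.uIcc_of_le ht0]
    exact hfc.mono (Set.Icc_subset_Icc le_rfl ht1)
  have hi2 : IntervalIntegrable (fun s => L |t - s| * G s) volume t 1 := by
    apply ContinuousOn.intervalIntegrable
    rw [Set.uIcc_of_le ht1]
    exact hfc.mono (Set.Icc_subset_Icc ht0 le_rfl)
  rw [← intervalIntegral.integral_add_adjacent_intervals hi1 hi2]
  have hc : ∀ z : ℂ, Continuous (fun s : ℝ => Complex.exp (z * s) * (g s : ℂ)) := fun z =>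
    (Complex.continuous_exp.comp (continuous_const.mul Complex.continuous_ofReal)).mul
      (Complex.continuous_ofReal.comp hg)
  have hcont1 : ∀ k : ℕ, Continuous
      (fun s : ℝ => a k * Complex.exp (r k * t) * (Complex.exp (-r k * s) * (g s : ℂ))) :=
    fun k => continuous_const.mul (hc (-r k))
  have hcont2 : ∀ k : ℕ, Continuous
      (fun s : ℝ => a k * Complex.exp (-r k * t) * (Complex.exp (r k * s) * (g s : ℂ))) :=
    fun k => continuous_const.mul (hc (r k))
  have p1 : ∫ s in (0:ℝ)..t, L |t - s| * G s
      = (∑ k ∈ Finset.range n2, (a k * r k ^ 0 * Complex.exp (r k * t)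
          * ∫ s in (0:ℝ)..t, Complex.exp (-r k * s) * (g s : ℂ))).re := by
    have e1 : Set.EqOn (fun s => L |t - s| * G s)
        (fun s => (∑ k ∈ Finset.range n2,
          (a k * Complex.exp (r k * t) * (Complex.exp (-r k * s) * (g s : ℂ)))).re)
        (Set.uIcc 0 t) := by
      intro s hs
      rw [Set.uIcc_of_le ht0] at hs
      have habs : |t - s| = t - s := abs_of_nonneg (by linarith [hs.1, hs.2])
      have hGs : G s = g s := (hgG s ⟨hs.1, le_trans hs.2 ht1⟩).symm
      simp only
      rw [habs, hLt, hGs, Complex.re_sum, Complex.re_sum, Finset.sum_mul]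
      refine Finset.sum_congr rfl fun k _ => ?_
      rw [← re_mul_ofReal]
      congr 1
      rw [show (r k * ((t - s : ℝ):ℂ)) = r k * t + (-r k) * s by push_cast; ring,
        Complex.exp_add]
      ring
    rw [intervalIntegral.integral_congr e1]
    have hii : IntervalIntegrable (fun s => ∑ k ∈ Finset.range n2,
        (a k * Complex.exp (r k * t) * (Complex.exp (-r k * s) * (g s : ℂ)))) volume 0 t :=
      (continuous_finset_sum _ fun k _ => hcont1 k).intervalIntegrable _ _
    have := Complex.reCLM.intervalIntegral_comp_comm hii
    simp only [Complex.reCLM_apply] at this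
    rw [this, intervalIntegral.integral_finset_sum
      (fun k _ => (hcont1 k).intervalIntegrable _ _)]
    congr 1
    refine Finset.sum_congr rfl fun k _ => ?_
    rw [intervalIntegral.integral_const_mul, pow_zero, mul_one]
  have p2 : ∫ s in t..(1:ℝ), L |t - s| * G s
      = (∑ k ∈ Finset.range n2, (a k * (-r k) ^ 0 * Complex.exp (-r k * t)
          * ∫ s in t..(1:ℝ), Complex.exp (r k * s) * (g s : ℂ))).re := by
    have e1 : Set.EqOn (fun s => L |t - s| * G s)
        (fun s => (∑ k ∈ Finset.range n2,
          (a k * Complex.exp (-r k * t) * (Complex.exp (r k * s) * (g s : ℂ)))).re)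
        (Set.uIcc t 1) := by
      intro s hs
      rw [Set.uIcc_of_le ht1] at hs
      have habs : |t - s| = s - t := by
        rw [abs_of_nonpos (by linarith [hs.1, hs.2])]; ring
      have hGs : G s = g s := (hgG s ⟨le_trans ht0 hs.1, hs.2⟩).symm
      simp only
      rw [habs, hLt, hGs, Complex.re_sum, Complex.re_sum, Finset.sum_mul]
      refine Finset.sum_congr rfl fun k _ => ?_
      rw [← re_mul_ofReal]
      congr 1
      rw [show (r k * ((s - t : ℝ):ℂ)) = (-r k) * t + r k * s by push_cast; ring,
        Complex.exp_add]
      ring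
    rw [intervalIntegral.integral_congr e1]
    have hii : IntervalIntegrable (fun s => ∑ k ∈ Finset.range n2,
        (a k * Complex.exp (-r k * t) * (Complex.exp (r k * s) * (g s : ℂ)))) volume t 1 :=
      (continuous_finset_sum _ fun k _ => hcont2 k).intervalIntegrable _ _
    have := Complex.reCLM.intervalIntegral_comp_comm hii
    simp only [Complex.reCLM_apply] at this
    rw [this, intervalIntegral.integral_finset_sum
      (fun k _ => (hcont2 k).intervalIntegrable _ _)]
    congr 1
    refine Finset.sum_congr rfl fun k _ => ?_
    rw [intervalIntegral.integral_const_mul, pow_zero, mul_one]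
  rw [p1, p2, GreenPsi, GreenPhi, Complex.add_re]


private lemma greenPsi_hasDerivAt (n2 : ℕ) (a r : ℕ → ℂ) (g : ℝ → ℝ) (hg : Continuous g)
    (j : ℕ) (t : ℝ) :
    HasDerivAt (GreenPsi n2 a r g j)
      (GreenPsi n2 a r g (j+1) t
        + (∑ k ∈ Finset.range n2, (a k * r k ^ j - a k * (-r k) ^ j)).re * g t) t := by
  have := my_hasDerivAt_re (greenPhi_hasDerivAt n2 a r g hg j t)
  show HasDerivAt (fun t => (GreenPhi n2 a r g j t).re) _ t
  simpa [GreenPsi, Complex.add_re, re_mul_ofReal] using this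

/-- Green's-function property of Section 3.1 (even `m`): with
`L(t) = Σ_{k<m/2} β e^{−βμ_k t}[c_k cos(ω_k β t) + d_k sin(ω_k β t)]` satisfying
`L^{(j)}(0) = 0` for odd `1 ≤ j ≤ 2m−3` and `L^{(2m−1)}(0) = β^{2m}/2`, the function
`F₀(t) = ∫_0^1 L(|t−s|) G(s) ds` is `2m` times continuously differentiable on `[0,1]`
and solves `β^{−2m} F₀^{(2m)} + F₀ = G` there. -/
theorem stmt_6 (m : ℕ) (hm : Even m) (hm0 : 0 < m) (β : ℝ) (hβ : 0 < β)
    (c d : ℕ → ℝ) (L : ℝ → ℝ)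
    (hL : ∀ t : ℝ, L t = ∑ k ∈ Finset.range (m / 2),
      β * Real.exp (-(β * Real.cos ((1 + 2 * (k : ℝ)) * Real.pi / (2 * m))) * t) *
        (c k * Real.cos (Real.sin ((1 + 2 * (k : ℝ)) * Real.pi / (2 * m)) * β * t) +
         d k * Real.sin (Real.sin ((1 + 2 * (k : ℝ)) * Real.pi / (2 * m)) * β * t)))
    (hodd : ∀ j : ℕ, Odd j → 1 ≤ j → j ≤ 2 * m - 3 → iteratedDeriv j L 0 = 0)
    (htop : iteratedDeriv (2 * m - 1) L 0 = β ^ (2 * m) / 2)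
    (G : ℝ → ℝ) (hG : ContinuousOn G (Set.Icc 0 1))
    (F₀ : ℝ → ℝ) (hF₀ : ∀ t : ℝ, F₀ t = ∫ s in (0:ℝ)..1, L |t - s| * G s) :
    ContDiffOn ℝ (2 * m : ℕ) F₀ (Set.Icc 0 1) ∧
      ∀ t ∈ Set.Icc (0:ℝ) 1,
        (β ^ (2 * m))⁻¹ * iteratedDerivWithin (2 * m) F₀ (Set.Icc 0 1) t + F₀ t = G t := by
  set n2 := m / 2 with hn2
  set r : ℕ → ℂ := fun k => (β:ℂ) * (-(Real.cos ((1 + 2*(k:ℝ)) * Real.pi / (2*m))) +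
      (Real.sin ((1 + 2*(k:ℝ)) * Real.pi / (2*m))) * Complex.I) with hr
  set a : ℕ → ℂ := fun k => (β:ℂ) * ((c k : ℂ) - (d k : ℂ) * Complex.I) with ha
  set g : ℝ → ℝ := fun x => G (Set.projIcc (0:ℝ) 1 zero_le_one x) with hgdef
  have hgc : Continuous g := hG.restrict.comp continuous_projIcc
  have hgG : ∀ x ∈ Set.Icc (0:ℝ) 1, g x = G x := by
    intro x hx
    rw [hgdef]
    simp [Set.projIcc_of_mem zero_le_one hx]
  -- L as real part of complex exponentials
  have hLt : ∀ t : ℝ, L t = (∑ k ∈ Finset.range n2, a k * Complex.exp (r k * t)).re := by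
    intro t
    rw [hL t, Complex.re_sum]
    refine Finset.sum_congr rfl fun k _ => ?_
    rw [hr, ha]
    exact (term_re β (c k) (d k) ((1 + 2*(k:ℝ)) * Real.pi / (2*m)) t).symm
  have hLc : Continuous L := by
    have : L = fun t : ℝ => (∑ k ∈ Finset.range n2, a k * Complex.exp (r k * t)).re := funext hLt
    rw [this]
    exact Complex.continuous_re.comp (continuous_finset_sum _ fun k _ => continuous_const.mul
      (Complex.continuous_exp.comp (continuous_const.mul Complex.continuous_ofReal)))
  have hiterL : ∀ j : ℕ, iteratedDeriv j L
      = fun t : ℝ => (∑ k ∈ Finset.range n2, a k * r k ^ j * Complex.exp (r k * t)).re := by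
    intro j
    induction j with
    | zero => funext t; rw [iteratedDeriv_zero, hLt]; simp
    | succ j ih =>
      funext t
      rw [iteratedDeriv_succ, ih]
      have h1 : ∀ k : ℕ, HasDerivAt (fun t : ℝ => a k * r k ^ j * Complex.exp (r k * t))
          (a k * r k ^ (j+1) * Complex.exp (r k * t)) t := by
        intro k
        have := (cexp_real_hasDerivAt (r k) t).const_mul (a k * r k ^ j)
        exact this.congr_deriv (by ring)
      have hsum : HasDerivAt (fun t : ℝ => ∑ k ∈ Finset.range n2,
          a k * r k ^ j * Complex.exp (r k * t))
          (∑ k ∈ Finset.range n2, a k * r k ^ (j+1) * Complex.exp (r k * t)) t :=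
        HasDerivAt.fun_sum fun k _ => h1 k
      exact (my_hasDerivAt_re hsum).deriv
  have hS : ∀ j : ℕ, iteratedDeriv j L 0 = (∑ k ∈ Finset.range n2, a k * r k ^ j).re := by
    intro j
    rw [hiterL j]
    norm_num
  -- coefficients
  have hcoef : ∀ j : ℕ, j < 2*m - 1 →
      (∑ k ∈ Finset.range n2, (a k * r k ^ j - a k * (-r k) ^ j)).re = 0 := by
    intro j hj
    rcases Nat.even_or_odd j with he | ho
    · have hz : ∀ k, a k * r k ^ j - a k * (-r k) ^ j = 0 := fun k => by
        rw [he.neg_pow]; ring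
      simp [hz]
    · have h2 : ∀ k ∈ Finset.range n2, a k * r k ^ j - a k * (-r k) ^ j
          = 2 * (a k * r k ^ j) := fun k _ => by rw [ho.neg_pow]; ring
      rw [Finset.sum_congr rfl h2, ← Finset.mul_sum]
      obtain ⟨p, hp⟩ := ho
      have hjv : iteratedDeriv j L 0 = 0 := hodd j ⟨p, hp⟩ (by omega) (by omega)
      rw [hS] at hjv
      simp [Complex.mul_re, hjv]
  have hctop : (∑ k ∈ Finset.range n2,
      (a k * r k ^ (2*m-1) - a k * (-r k) ^ (2*m-1))).re = β ^ (2*m) := by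
    have ho : Odd (2*m-1) := ⟨m - 1, by omega⟩
    have h2 : ∀ k ∈ Finset.range n2, a k * r k ^ (2*m-1) - a k * (-r k) ^ (2*m-1)
        = 2 * (a k * r k ^ (2*m-1)) := fun k _ => by rw [ho.neg_pow]; ring
    rw [Finset.sum_congr rfl h2, ← Finset.mul_sum]
    have hjv := htop
    rw [hS] at hjv
    simp [Complex.mul_re, hjv]
    ring
  -- derivative chain for ψ
  have hψd := fun (j : ℕ) (t : ℝ) => greenPsi_hasDerivAt n2 a r g hgc j t
  have hψd0 : ∀ j : ℕ, j < 2*m - 1 → ∀ t : ℝ,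
      HasDerivAt (GreenPsi n2 a r g j) (GreenPsi n2 a r g (j+1) t) t := by
    intro j hj t
    simpa only [hcoef j hj, zero_mul, add_zero] using hψd j t
  have hψdtop : ∀ t : ℝ, HasDerivAt (GreenPsi n2 a r g (2*m-1))
      (GreenPsi n2 a r g (2*m-1+1) t + β ^ (2*m) * g t) t := by
    intro t
    simpa only [hctop] using hψd (2*m-1) t
  have hψcont : ∀ j : ℕ, Continuous (GreenPsi n2 a r g j) := by
    intro j
    have : Differentiable ℝ (GreenPsi n2 a r g j) := fun t => (hψd j t).differentiableAt
    exact this.continuous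
  -- ψ_{2m} = -β^{2m} ψ_0
  have hrpow : ∀ k : ℕ, r k ^ (2*m) = -(β:ℂ)^(2*m) := by
    intro k
    rw [hr]
    exact root_pow m k hm0 β
  have hψ2m : ∀ t : ℝ, GreenPsi n2 a r g (2*m) t = -β^(2*m) * GreenPsi n2 a r g 0 t := by
    intro t
    have hphi : GreenPhi n2 a r g (2*m) t = (-(β:ℂ)^(2*m)) * GreenPhi n2 a r g 0 t := by
      rw [GreenPhi, GreenPhi, mul_add, Finset.mul_sum, Finset.mul_sum]
      congr 1 <;> refine Finset.sum_congr rfl fun k _ => ?_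
      · rw [hrpow k]; ring
      · rw [Even.neg_pow (even_two_mul m), hrpow k]; ring
    rw [GreenPsi, GreenPsi, hphi,
      show (-(β:ℂ)^(2*m)) = ((-β^(2*m) : ℝ) : ℂ) by push_cast; ring,
      mul_comm, re_mul_ofReal]
    ring
  -- F₀ = ψ 0 on Icc
  have hF0 : ∀ t ∈ Set.Icc (0:ℝ) 1, F₀ t = GreenPsi n2 a r g 0 t := by
    intro t ht
    rw [hF₀ t]
    exact green_split n2 a r L hLt hLc g hgc G hgG hG t ht
  have hUD : UniqueDiffOn ℝ (Set.Icc (0:ℝ) 1) := uniqueDiffOn_Icc one_pos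
  -- iterated derivatives
  have hchain : ∀ j : ℕ, j ≤ 2*m - 1 →
      Set.EqOn (iteratedDerivWithin j F₀ (Set.Icc (0:ℝ) 1)) (GreenPsi n2 a r g j)
        (Set.Icc (0:ℝ) 1) := by
    intro j
    induction j with
    | zero => intro _ t ht; rw [iteratedDerivWithin_zero]; exact hF0 t ht
    | succ j ih =>
      intro hj t ht
      have hj' : j ≤ 2*m - 1 := by omega
      have hjlt : j < 2*m - 1 := by omega
      rw [iteratedDerivWithin_succ,
        derivWithin_congr (ih hj') (ih hj' ht),
        DifferentiableAt.derivWithin ((hψd0 j hjlt t).differentiableAt) (hUD t ht)]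
      exact (hψd0 j hjlt t).deriv
  have h2meq : ∀ t ∈ Set.Icc (0:ℝ) 1, iteratedDerivWithin (2*m) F₀ (Set.Icc (0:ℝ) 1) t
      = -β^(2*m) * F₀ t + β^(2*m) * G t := by
    intro t ht
    have h1 : 2*m = (2*m - 1) + 1 := by omega
    rw [h1, iteratedDerivWithin_succ,
      derivWithin_congr (hchain (2*m-1) le_rfl) (hchain (2*m-1) le_rfl ht),
      DifferentiableAt.derivWithin ((hψdtop t).differentiableAt) (hUD t ht),
      (hψdtop t).deriv]
    rw [show 2*m-1+1 = 2*m by omega, hψ2m t, ← hF0 t ht, hgG t ht]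
  constructor
  · -- smoothness
    have hcd : ∀ n : ℕ, ∀ j : ℕ, j + n ≤ 2*m →
        ContDiffOn ℝ n (GreenPsi n2 a r g j) (Set.Icc (0:ℝ) 1) := by
      intro n
      induction n with
      | zero =>
        intro j _
        simpa [contDiffOn_zero] using (hψcont j).continuousOn
      | succ n ih =>
        intro j hjn
        rw [show ((n+1 : ℕ) : WithTop ℕ∞) = (n : WithTop ℕ∞) + 1 by push_cast; rfl,
          contDiffOn_succ_iff_derivWithin hUD]
        refine ⟨fun t ht => (hψd j t).differentiableAt.differentiableWithinAt,
          fun h => absurd h (by simp), ?_⟩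
        by_cases hj : j < 2*m - 1
        · refine (ih (j+1) (by omega)).congr ?_
          intro t ht
          rw [DifferentiableAt.derivWithin (hψd j t).differentiableAt (hUD t ht)]
          exact (hψd0 j hj t).deriv
        · have hn0 : n = 0 := by omega
          subst hn0
          rw [show ((0 : ℕ) : WithTop ℕ∞) = 0 from rfl, contDiffOn_zero]
          have hj' : j = 2*m - 1 := by omega
          subst hj'
          refine ContinuousOn.congr (f := fun t => GreenPsi n2 a r g (2*m-1+1) t
            + β^(2*m) * g t) ?_ ?_
          · exact ((hψcont (2*m-1+1)).add (continuous_const.mul hgc)).continuousOn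
          · intro t ht
            rw [DifferentiableAt.derivWithin (hψdtop t).differentiableAt (hUD t ht)]
            exact (hψdtop t).deriv
    exact (hcd (2*m) 0 (by omega)).congr hF0
  · intro t ht
    rw [h2meq t ht]
    have hβm : β ^ (2*m) ≠ 0 := pow_ne_zero _ hβ.ne'
    field_simp
    ring
end

section
/- Let m be an odd positive integer, β > 0, and for k = 1, …, (m−1)/2 set μ_k = cos(kπ/m) > 0 and ω_k = sin(kπ/m) > 0. Let c_0, c_k, d_k be real numbers and define P(t) = c_0 β e^{−βt} + Σ_{k=1}^{(m−1)/2} β e^{−βμ_k t} [c_k cos(ω_k β t) + d_k sin(ω_k β t)] for t ≥ 0. Assume the (one-sided) derivatives at 0 satisfy P^{(j)}(0) = 0 for every odd j with 1 ≤ j ≤ 2m−3 and P^{(2m−1)}(0) = −β^{2m}/2. Then for every continuous function G : [0,1] → ℝ, the function F_0(t) = ∫_0^1 P(|t−s|) G(s) ds is 2m times continuously differentiable on [0,1] and satisfies β^{−2m} F_0^{(2m)}(t) − F_0(t) = −G(t) for all t ∈ [0,1]; equivalently, (−1)^m β^{−2m} F_0^{(2m)}(t) + F_0(t) = G(t). 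-/
open MeasureTheory intervalIntegral Set Finset Real

namespace Stmt7Aux


lemma hasDerivAt_cexp_mul (w : ℂ) (x : ℝ) :
    HasDerivAt (fun t : ℝ => Complex.exp (w * t)) (w * Complex.exp (w * x)) x := by
  have h1 : HasDerivAt (fun z : ℂ => Complex.exp (w * z)) (w * Complex.exp (w * (x:ℂ))) (x : ℂ) := by
    have h := ((hasDerivAt_id (x:ℂ)).const_mul w).cexp
    exact h.congr_deriv (by simp only [id, mul_one]; ring)
  exact h1.comp_ofReal

lemma hasDerivAt_re_comp {f : ℝ → ℂ} {f' : ℂ} {x : ℝ} (h : HasDerivAt f f' x) :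
    HasDerivAt (fun t => (f t).re) f'.re x :=
  (Complex.reCLM.hasFDerivAt.comp_hasDerivAt x h)

/-- the complex-side iterated derivative family -/
noncomputable def Qf (m : ℕ) (β : ℝ) (c d : ℕ → ℝ) (z : ℕ → ℂ) (n : ℕ) (t : ℝ) : ℂ :=
  (c 0 * β : ℂ) * (-β:ℂ)^n * Complex.exp (-(β:ℂ) * t) +
    ∑ k ∈ Finset.Icc 1 ((m-1)/2),
      ((c k : ℂ) - d k * Complex.I) * β * (z k)^n * Complex.exp (z k * t)

lemma Qf_deriv (m : ℕ) (β : ℝ) (c d : ℕ → ℝ) (z : ℕ → ℂ) (n : ℕ) (x : ℝ) :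
    HasDerivAt (fun t : ℝ => Qf m β c d z n t) (Qf m β c d z (n+1) x) x := by
  unfold Qf
  apply HasDerivAt.add
  · have := (hasDerivAt_cexp_mul (-(β:ℂ)) x).const_mul ((c 0 * β : ℂ) * (-β:ℂ)^n)
    exact this.congr_deriv (by ring)
  · have : HasDerivAt (fun t : ℝ => ∑ k ∈ Finset.Icc 1 ((m-1)/2),
        ((c k : ℂ) - d k * Complex.I) * β * (z k)^n * Complex.exp (z k * t))
        (∑ k ∈ Finset.Icc 1 ((m-1)/2),
          ((c k : ℂ) - d k * Complex.I) * β * (z k)^(n+1) * Complex.exp (z k * x)) x := by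
      apply HasDerivAt.fun_sum
      intro k hk
      have := (hasDerivAt_cexp_mul (z k) x).const_mul (((c k : ℂ) - d k * Complex.I) * β * (z k)^n)
      exact this.congr_deriv (by ring)
    exact this

lemma iteratedDeriv_Qf (m : ℕ) (β : ℝ) (c d : ℕ → ℝ) (z : ℕ → ℂ) (P : ℝ → ℝ)
    (hP : ∀ t, P t = (Qf m β c d z 0 t).re) (n : ℕ) :
    iteratedDeriv n P = fun t => (Qf m β c d z n t).re := by
  induction n with
  | zero => simpa [iteratedDeriv_zero] using funext hP
  | succ n ih =>
      rw [iteratedDeriv_succ, ih]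
      funext x
      exact (hasDerivAt_re_comp (Qf_deriv m β c d z n x)).deriv

lemma zpow_eq (m k : ℕ) (hm0 : 0 < m) (β : ℝ) :
    ((↑(-(β * Real.cos ((k:ℝ)*π/m))) + ↑(β * Real.sin ((k:ℝ)*π/m)) * Complex.I))^(2*m)
      = (β:ℂ)^(2*m) := by
  set θ : ℝ := (k:ℝ)*π/m with hθ
  have hz : ((↑(-(β * Real.cos θ)) : ℂ) + ↑(β * Real.sin θ) * Complex.I)
      = -(β:ℂ) * Complex.exp (-(θ:ℂ) * Complex.I) := by
    rw [Complex.exp_mul_I, Complex.cos_neg, Complex.sin_neg,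
      ← Complex.ofReal_cos, ← Complex.ofReal_sin]
    push_cast
    ring
  rw [hz, mul_pow]
  have h1 : (-(β:ℂ))^(2*m) = (β:ℂ)^(2*m) := Even.neg_pow ⟨m, by ring⟩ _
  have h2 : (Complex.exp (-(θ:ℂ) * Complex.I))^(2*m) = 1 := by
    rw [← Complex.exp_nat_mul]
    have harg : ((2*m : ℕ) : ℂ) * (-(θ:ℂ) * Complex.I) = ((-(k:ℤ) : ℤ) : ℂ) * (2 * (π:ℂ) * Complex.I) := by
      have hmne : (m:ℂ) ≠ 0 := Nat.cast_ne_zero.2 hm0.ne'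
      rw [hθ]
      push_cast
      field_simp
    rw [harg, Complex.exp_int_mul_two_pi_mul_I]
  rw [h1, h2, mul_one]



lemma re_term (β cc dd a b t : ℝ) :
    (((cc:ℂ) - dd * Complex.I) * β * Complex.exp (((a:ℂ) + (b:ℂ) * Complex.I) * t)).re
      = β * Real.exp (a*t) * (cc * Real.cos (b*t) + dd * Real.sin (b*t)) := by
  have h : ((a:ℂ) + (b:ℂ) * Complex.I) * t = ((a*t : ℝ) : ℂ) + ((b*t : ℝ) : ℂ) * Complex.I := by
    push_cast; ring
  rw [h]
  simp [Complex.exp_re, Complex.exp_im, Complex.mul_re, Complex.mul_im]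
  ring

lemma re_first (β c0 t : ℝ) :
    ((c0 * β : ℂ) * 1 * Complex.exp (-(β:ℂ) * t)).re = c0 * β * Real.exp (-(β*t)) := by
  have h : (-(β:ℂ) * t) = ((-(β*t) : ℝ) : ℂ) := by push_cast; ring
  rw [mul_one, h, ← Complex.ofReal_exp]
  norm_cast



lemma uIcc_sub {a b : ℝ} (ha : a ∈ Icc (0:ℝ) 1) (hb : b ∈ Icc (0:ℝ) 1) :
    Set.uIcc a b ⊆ Icc (0:ℝ) 1 := by
  rw [show Icc (0:ℝ) 1 = Set.uIcc 0 1 from (Set.uIcc_of_le zero_le_one).symm]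
  exact Set.uIcc_subset_uIcc (by simpa [Set.uIcc_of_le zero_le_one] using ha)
    (by simpa [Set.uIcc_of_le zero_le_one] using hb)

lemma integrand_integrable {f G : ℝ → ℝ} (hf : Continuous f) (hG : ContinuousOn G (Icc 0 1))
    (t : ℝ) {a b : ℝ} (ha : a ∈ Icc (0:ℝ) 1) (hb : b ∈ Icc (0:ℝ) 1) :
    IntervalIntegrable (fun s => f (t - s) * G s) volume a b :=
  (((hf.comp (continuous_const.sub continuous_id)).continuousOn).mul
    (hG.mono (uIcc_sub ha hb))).intervalIntegrable

lemma integrand_integrable' {f G : ℝ → ℝ} (hf : Continuous f) (hG : ContinuousOn G (Icc 0 1))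
    (t : ℝ) {a b : ℝ} (ha : a ∈ Icc (0:ℝ) 1) (hb : b ∈ Icc (0:ℝ) 1) :
    IntervalIntegrable (fun s => f (s - t) * G s) volume a b :=
  (((hf.comp (continuous_id.sub continuous_const)).continuousOn).mul
    (hG.mono (uIcc_sub ha hb))).intervalIntegrable

/-- differentiation under the integral sign, fixed endpoints in `[0,1]`. -/
lemma fixed_deriv {f f' G : ℝ → ℝ} (hf : Continuous f) (hf' : Continuous f')
    (hder : ∀ x, HasDerivAt f (f' x) x) (hG : ContinuousOn G (Icc 0 1))
    {a b : ℝ} (ha : a ∈ Icc (0:ℝ) 1) (hb : b ∈ Icc (0:ℝ) 1) (t₀ : ℝ) :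
    HasDerivAt (fun t => ∫ s in a..b, f (t - s) * G s) (∫ s in a..b, f' (t₀ - s) * G s) t₀ := by
  obtain ⟨M, hM⟩ := (isCompact_Icc : IsCompact (Icc (0:ℝ) 1)).exists_bound_of_continuousOn hG
  obtain ⟨C, hC⟩ := (isCompact_Icc : IsCompact (Icc (t₀-2) (t₀+2))).exists_bound_of_continuousOn
    hf'.continuousOn
  have hM0 : 0 ≤ M := le_trans (norm_nonneg _) (hM 0 (by norm_num))
  have hC0 : 0 ≤ C := le_trans (norm_nonneg _) (hC t₀ (by constructor <;> linarith))
  have hsub : Set.uIoc a b ⊆ Icc (0:ℝ) 1 := Set.uIoc_subset_uIcc.trans (uIcc_sub ha hb)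
  have meas : ∀ g : ℝ → ℝ, Continuous g → ∀ x : ℝ,
      AEStronglyMeasurable (fun s => g (x - s) * G s) (volume.restrict (Set.uIoc a b)) := by
    intro g hg x
    exact (((hg.comp (continuous_const.sub continuous_id)).continuousOn).mul
      (hG.mono hsub)).aestronglyMeasurable measurableSet_uIoc
  refine (intervalIntegral.hasDerivAt_integral_of_dominated_loc_of_deriv_le
    (F := fun x s => f (x - s) * G s) (F' := fun x s => f' (x - s) * G s)
    (bound := fun _ => C * M) (s := Metric.ball t₀ 1) (Metric.ball_mem_nhds t₀ one_pos)
    (Filter.Eventually.of_forall (meas f hf))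
    (integrand_integrable hf hG t₀ ha hb)
    (meas f' hf' t₀) ?_ intervalIntegrable_const ?_).2
  · refine Filter.Eventually.of_forall fun s hs x hx => ?_
    have hs1 : s ∈ Icc (0:ℝ) 1 := hsub hs
    have hxs : x - s ∈ Icc (t₀-2) (t₀+2) := by
      have := Real.dist_eq x t₀ ▸ Metric.mem_ball.1 hx
      have h1 := abs_lt.1 this
      constructor <;> [linarith [hs1.2, h1.1]; linarith [hs1.1, h1.2]]
    calc ‖f' (x - s) * G s‖ = ‖f' (x - s)‖ * ‖G s‖ := norm_mul _ _
      _ ≤ C * M := mul_le_mul (hC _ hxs) (hM _ hs1) (norm_nonneg _) hC0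
  · refine Filter.Eventually.of_forall fun s hs x hx => ?_
    have h1 : HasDerivAt (fun x : ℝ => f (x - s)) (f' (x - s)) x := by
      exact ((hder (x - s)).comp x ((hasDerivAt_id x).sub_const s)).congr_deriv (by simp)
    exact h1.mul_const (G s)

/-- moving endpoint, jump term. -/
lemma moving_deriv (φ : ℝ → ℝ → ℝ) (L t₀ : ℝ) (ht₀ : t₀ ∈ Icc (0:ℝ) 1)
    (hint : ∀ t ∈ Icc (0:ℝ) 1, IntervalIntegrable (φ t) volume t₀ t)
    (hcont : ∀ ε : ℝ, 0 < ε → ∃ δ > 0, ∀ t ∈ Icc (0:ℝ) 1, |t - t₀| < δ →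
        ∀ s ∈ Set.uIcc t₀ t, |φ t s - L| ≤ ε) :
    HasDerivWithinAt (fun t => ∫ s in t₀..t, φ t s) L (Icc 0 1) t₀ := by
  rw [hasDerivWithinAt_iff_isLittleO, Asymptotics.isLittleO_iff]
  intro ε hε
  obtain ⟨δ, hδ, hδ'⟩ := hcont ε hε
  rw [eventually_nhdsWithin_iff]
  filter_upwards [Metric.ball_mem_nhds t₀ hδ] with t ht hmem
  have habs : |t - t₀| < δ := by rw [← Real.dist_eq]; exact ht
  have h1 : (∫ s in t₀..t, φ t s) - (t - t₀) • L = ∫ s in t₀..t, (φ t s - L) := by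
    rw [intervalIntegral.integral_sub (hint t hmem) intervalIntegrable_const,
      intervalIntegral.integral_const]
  have h2 : ‖∫ s in t₀..t, (φ t s - L)‖ ≤ ε * |t - t₀| := by
    apply intervalIntegral.norm_integral_le_of_norm_le_const
    intro s hs
    exact hδ' t hmem habs s (Set.uIoc_subset_uIcc hs)
  calc ‖(∫ s in t₀..t, φ t s) - (∫ s in t₀..t₀, φ t₀ s) - (t - t₀) • L‖
      = ‖∫ s in t₀..t, (φ t s - L)‖ := by rw [intervalIntegral.integral_same, sub_zero, h1]
    _ ≤ ε * |t - t₀| := h2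
    _ = ε * ‖t - t₀‖ := by rw [Real.norm_eq_abs]

section Key
open Set

lemma est {f G : ℝ → ℝ} (hf : Continuous f) (hG : ContinuousOn G (Icc 0 1))
    {t₀ : ℝ} (ht₀ : t₀ ∈ Icc (0:ℝ) 1) :
    ∀ ε : ℝ, 0 < ε → ∃ δ > 0, ∀ t ∈ Icc (0:ℝ) 1, |t - t₀| < δ →
      ∀ s ∈ Set.uIcc t₀ t, ∀ u : ℝ, |u| ≤ |t - t₀| → |f u * G s - f 0 * G t₀| ≤ ε := by
  intro ε hε
  set A := |f 0| + |G t₀| with hA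
  have hA0 : 0 ≤ A := by positivity
  set ε₁ := min 1 (ε / (A + 2)) with hε₁def
  have hε₁ : 0 < ε₁ := lt_min one_pos (by positivity)
  obtain ⟨δ₁, hδ₁, h₁⟩ := Metric.continuous_iff.1 hf 0 ε₁ hε₁
  obtain ⟨δ₂, hδ₂, h₂⟩ := Metric.continuousWithinAt_iff.1 (hG t₀ ht₀) ε₁ hε₁
  refine ⟨min δ₁ δ₂, lt_min hδ₁ hδ₂, fun t ht hlt s hs u hu => ?_⟩
  have hs1 : s ∈ Icc (0:ℝ) 1 := uIcc_sub ht₀ ht hs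
  have hst : |s - t₀| ≤ |t - t₀| := abs_sub_left_of_mem_uIcc hs
  have hfu : dist (f u) (f 0) < ε₁ := h₁ u (by
    rw [Real.dist_eq, sub_zero]
    exact lt_of_le_of_lt hu (lt_of_lt_of_le hlt (min_le_left _ _)))
  have hGs : dist (G s) (G t₀) < ε₁ := h₂ hs1 (by
    rw [Real.dist_eq]
    exact lt_of_le_of_lt hst (lt_of_lt_of_le hlt (min_le_right _ _)))
  rw [Real.dist_eq] at hfu hGs
  have key : |f u * G s - f 0 * G t₀| ≤ (|f 0| + ε₁) * ε₁ + ε₁ * |G t₀| := by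
    have hsplit : f u * G s - f 0 * G t₀ = f u * (G s - G t₀) + (f u - f 0) * G t₀ := by ring
    rw [hsplit]
    refine (abs_add_le _ _).trans ?_
    rw [abs_mul, abs_mul]
    have hfub : |f u| ≤ |f 0| + ε₁ := by
      have := abs_sub_abs_le_abs_sub (f u) (f 0); linarith
    exact add_le_add (mul_le_mul hfub hGs.le (abs_nonneg _) (by positivity))
      (mul_le_mul_of_nonneg_right hfu.le (abs_nonneg _))
  have hε₁le : ε₁ ≤ ε / (A + 2) := min_le_right _ _
  have hε₁le1 : ε₁ ≤ 1 := min_le_left _ _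
  have h4 : (|f 0| + ε₁) * ε₁ + ε₁ * |G t₀| ≤ (A + 1) * ε₁ := by
    nlinarith [hε₁.le, abs_nonneg (f 0), abs_nonneg (G t₀)]
  have h5 : (A + 1) * ε₁ ≤ ε := by
    have h6 : (A + 1) * ε₁ ≤ (A + 1) * (ε / (A + 2)) := by nlinarith
    have h7 : (A + 1) * (ε / (A + 2)) ≤ ε := by
      rw [← mul_div_assoc, div_le_iff₀ (by positivity : (0:ℝ) < A + 2)]
      nlinarith
    exact h6.trans h7
  linarith

lemma keyA {f f' G : ℝ → ℝ} (hf : Continuous f) (hf' : Continuous f')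
    (hder : ∀ x, HasDerivAt f (f' x) x) (hG : ContinuousOn G (Icc 0 1))
    {t₀ : ℝ} (ht₀ : t₀ ∈ Icc (0:ℝ) 1) :
    HasDerivWithinAt (fun t => ∫ s in (0:ℝ)..t, f (t - s) * G s)
      ((∫ s in (0:ℝ)..t₀, f' (t₀ - s) * G s) + f 0 * G t₀) (Icc 0 1) t₀ := by
  have h0 : (0:ℝ) ∈ Icc (0:ℝ) 1 := by norm_num
  have hmove : HasDerivWithinAt (fun t => ∫ s in t₀..t, f (t - s) * G s)
      (f 0 * G t₀) (Icc 0 1) t₀ := by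
    apply moving_deriv _ _ _ ht₀ (fun t ht => integrand_integrable hf hG t ht₀ ht)
    intro ε hε
    obtain ⟨δ, hδ, h⟩ := est hf hG ht₀ ε hε
    exact ⟨δ, hδ, fun t ht hlt s hs =>
      h t ht hlt s hs (t - s) (abs_sub_right_of_mem_uIcc hs)⟩
  have hfix : HasDerivWithinAt (fun t => ∫ s in (0:ℝ)..t₀, f (t - s) * G s)
      (∫ s in (0:ℝ)..t₀, f' (t₀ - s) * G s) (Icc 0 1) t₀ :=
    (fixed_deriv hf hf' hder hG h0 ht₀ t₀).hasDerivWithinAt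
  have hsum := hfix.add hmove
  apply hsum.congr
  · intro t ht
    exact (intervalIntegral.integral_add_adjacent_intervals
      (integrand_integrable hf hG t h0 ht₀) (integrand_integrable hf hG t ht₀ ht)).symm
  · exact (intervalIntegral.integral_add_adjacent_intervals
      (integrand_integrable hf hG t₀ h0 ht₀) (integrand_integrable hf hG t₀ ht₀ ht₀)).symm

lemma keyB {f f' G : ℝ → ℝ} (hf : Continuous f) (hf' : Continuous f')
    (hder : ∀ x, HasDerivAt f (f' x) x) (hG : ContinuousOn G (Icc 0 1))
    {t₀ : ℝ} (ht₀ : t₀ ∈ Icc (0:ℝ) 1) :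
    HasDerivWithinAt (fun t => ∫ s in t..(1:ℝ), f (s - t) * G s)
      (-(∫ s in t₀..(1:ℝ), f' (s - t₀) * G s) - f 0 * G t₀) (Icc 0 1) t₀ := by
  have h1 : (1:ℝ) ∈ Icc (0:ℝ) 1 := by norm_num
  have hmove : HasDerivWithinAt (fun t => ∫ s in t₀..t, f (s - t) * G s)
      (f 0 * G t₀) (Icc 0 1) t₀ := by
    apply moving_deriv _ _ _ ht₀ (fun t ht => integrand_integrable' hf hG t ht₀ ht)
    intro ε hε
    obtain ⟨δ, hδ, h⟩ := est hf hG ht₀ ε hε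
    refine ⟨δ, hδ, fun t ht hlt s hs => h t ht hlt s hs (s - t) ?_⟩
    rw [abs_sub_comm s t]
    exact abs_sub_right_of_mem_uIcc hs
  have hfix : HasDerivWithinAt (fun t => ∫ s in t₀..(1:ℝ), f (s - t) * G s)
      (-(∫ s in t₀..(1:ℝ), f' (s - t₀) * G s)) (Icc 0 1) t₀ := by
    have hg : Continuous (fun u : ℝ => f (-u)) := hf.comp continuous_neg
    have hg' : Continuous (fun u : ℝ => -f' (-u)) := (hf'.comp continuous_neg).neg
    have hgder : ∀ x, HasDerivAt (fun u : ℝ => f (-u)) (-f' (-x)) x := fun x => by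
      have h := (hder (-x)).comp x (hasDerivAt_neg x)
      exact h.congr_deriv (by ring)
    have := (fixed_deriv hg hg' hgder hG ht₀ h1 t₀).hasDerivWithinAt (s := Icc 0 1)
    simp only [neg_sub] at this
    refine this.congr_deriv ?_
    rw [← intervalIntegral.integral_neg]
    congr 1; funext s; ring
  have hsum := hfix.sub hmove
  have heq : ∀ t ∈ Icc (0:ℝ) 1, (∫ s in t..(1:ℝ), f (s - t) * G s)
      = (∫ s in t₀..(1:ℝ), f (s - t) * G s) - ∫ s in t₀..t, f (s - t) * G s := by
    intro t ht
    have := intervalIntegral.integral_add_adjacent_intervals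
      (integrand_integrable' hf hG t ht₀ ht) (integrand_integrable' hf hG t ht h1)
    have h2 := intervalIntegral.integral_add_adjacent_intervals
      (integrand_integrable' hf hG t ht₀ h1).symm (integrand_integrable' hf hG t ht₀ ht)
    linarith [this]
  apply (hsum.congr (heq) (heq t₀ ht₀)).congr_deriv
  ring

end Key

end Stmt7Aux
/-- Green's-function property of Section 3.2 (odd `m`): with
`P(t) = c_0 β e^{−βt} + Σ_{k=1}^{(m−1)/2} β e^{−βμ_k t}[c_k cos(ω_k β t) + d_k sin(ω_k β t)]`
satisfying `P^{(j)}(0) = 0` for odd `1 ≤ j ≤ 2m−3` and `P^{(2m−1)}(0) = −β^{2m}/2`, the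
function `F₀(t) = ∫_0^1 P(|t−s|) G(s) ds` is `2m` times continuously differentiable on
`[0,1]` and solves `β^{−2m} F₀^{(2m)} − F₀ = −G` there, equivalently
`(−1)^m β^{−2m} F₀^{(2m)} + F₀ = G`. -/
theorem stmt_7 (m : ℕ) (hm : Odd m) (hm0 : 0 < m) (β : ℝ) (hβ : 0 < β)
    (c d : ℕ → ℝ) (P : ℝ → ℝ)
    (hP : ∀ t : ℝ, P t = c 0 * β * Real.exp (-(β * t)) +
      ∑ k ∈ Finset.Icc 1 ((m - 1) / 2),
      β * Real.exp (-(β * Real.cos ((k : ℝ) * Real.pi / (m : ℝ))) * t) *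
        (c k * Real.cos (Real.sin ((k : ℝ) * Real.pi / (m : ℝ)) * β * t) +
         d k * Real.sin (Real.sin ((k : ℝ) * Real.pi / (m : ℝ)) * β * t)))
    (hodd : ∀ j : ℕ, Odd j → 1 ≤ j → j ≤ 2 * m - 3 → iteratedDeriv j P 0 = 0)
    (htop : iteratedDeriv (2 * m - 1) P 0 = -(β ^ (2 * m) / 2))
    (G : ℝ → ℝ) (hG : ContinuousOn G (Set.Icc 0 1))
    (F₀ : ℝ → ℝ) (hF₀ : ∀ t : ℝ, F₀ t = ∫ s in (0:ℝ)..1, P |t - s| * G s) :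
    ContDiffOn ℝ (2 * m : ℕ) F₀ (Set.Icc 0 1) ∧
      (∀ t ∈ Set.Icc (0:ℝ) 1,
        (β ^ (2 * m))⁻¹ * iteratedDerivWithin (2 * m) F₀ (Set.Icc 0 1) t - F₀ t = -G t) ∧
      (∀ t ∈ Set.Icc (0:ℝ) 1,
        (-1 : ℝ) ^ m * (β ^ (2 * m))⁻¹ * iteratedDerivWithin (2 * m) F₀ (Set.Icc 0 1) t
          + F₀ t = G t) := by
  classical
  open Stmt7Aux Set intervalIntegral in
  -- abbreviations
  have hUD : UniqueDiffOn ℝ (Set.Icc (0:ℝ) 1) := uniqueDiffOn_Icc one_pos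
  set z : ℕ → ℂ := fun k =>
    ((↑(-(β * Real.cos ((k:ℝ) * Real.pi / (m:ℝ)))) : ℂ)
      + ↑(β * Real.sin ((k:ℝ) * Real.pi / (m:ℝ))) * Complex.I) with hz
  -- P as real part of the complex family
  have hPQ : ∀ t, P t = (Stmt7Aux.Qf m β c d z 0 t).re := by
    intro t
    rw [hP t]
    unfold Stmt7Aux.Qf
    rw [Complex.add_re, Complex.re_sum, pow_zero, Stmt7Aux.re_first β (c 0) t]
    congr 1
    apply Finset.sum_congr rfl
    intro k hk
    rw [pow_zero, mul_one, hz]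
    rw [Stmt7Aux.re_term β (c k) (d k) (-(β * Real.cos ((k:ℝ) * Real.pi / (m:ℝ))))
      (β * Real.sin ((k:ℝ) * Real.pi / (m:ℝ))) t]
    ring_nf
  have hiter : ∀ n, iteratedDeriv n P = fun t => (Stmt7Aux.Qf m β c d z n t).re :=
    Stmt7Aux.iteratedDeriv_Qf m β c d z P hPQ
  set p : ℕ → ℝ → ℝ := fun j => iteratedDeriv j P with hp
  have pc : ∀ j, Continuous (p j) := by
    intro j
    rw [hp]; simp only; rw [hiter j]
    exact continuous_iff_continuousAt.2 fun x =>
      (Stmt7Aux.hasDerivAt_re_comp (Stmt7Aux.Qf_deriv m β c d z j x)).continuousAt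
  have pd : ∀ j x, HasDerivAt (p j) (p (j+1) x) x := by
    intro j x
    rw [hp]; simp only; rw [hiter j, hiter (j+1)]
    exact Stmt7Aux.hasDerivAt_re_comp (Stmt7Aux.Qf_deriv m β c d z j x)
  have hP0 : p 0 = P := by rw [hp]; simp only [iteratedDeriv_zero]
  have hODE : ∀ u, p (2*m) u = β^(2*m) * P u := by
    intro u
    rw [hp]; simp only; rw [hiter (2*m), hPQ u]
    have hQ : Stmt7Aux.Qf m β c d z (2*m) u = ((β^(2*m) : ℝ) : ℂ) * Stmt7Aux.Qf m β c d z 0 u := by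
      unfold Stmt7Aux.Qf
      rw [mul_add, Finset.mul_sum]
      congr 1
      · rw [Even.neg_pow ⟨m, by ring⟩]
        push_cast
        ring
      · apply Finset.sum_congr rfl
        intro k hk
        rw [hz]
        rw [Stmt7Aux.zpow_eq m k hm0 β]
        push_cast
        ring
    show (Stmt7Aux.Qf m β c d z (2*m) u).re = β^(2*m) * (Stmt7Aux.Qf m β c d z 0 u).re
    rw [hQ, Complex.re_ofReal_mul]
  -- the H family
  set S : Set ℝ := Set.Icc (0:ℝ) 1 with hSdef
  set H : ℕ → ℝ → ℝ := fun j t => (∫ s in (0:ℝ)..t, p j (t - s) * G s)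
      + (-1:ℝ)^j * ∫ s in t..(1:ℝ), p j (s - t) * G s with hH
  -- the derivative step
  have hstep : ∀ j, ∀ t₀ ∈ S, HasDerivWithinAt (H j)
      (H (j+1) t₀ + (1 - (-1:ℝ)^j) * (p j 0 * G t₀)) S t₀ := by
    intro j t₀ ht₀
    have hA := Stmt7Aux.keyA (pc j) (pc (j+1)) (pd j) hG ht₀
    have hB := (Stmt7Aux.keyB (pc j) (pc (j+1)) (pd j) hG ht₀).const_mul ((-1:ℝ)^j)
    have hAB := hA.add hB
    apply hAB.congr_deriv
    simp only [hH, pow_succ]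
    ring
  -- steps without jump
  have hstep' : ∀ j, j ≤ 2*m - 2 → ∀ t₀ ∈ S, HasDerivWithinAt (H j) (H (j+1) t₀) S t₀ := by
    intro j hj t₀ ht₀
    have h := hstep j t₀ ht₀
    rcases Nat.even_or_odd j with he | ho
    · simpa [he.neg_one_pow] using h
    · have hj3 : j ≤ 2*m - 3 := by
        have := Nat.odd_iff.1 ho
        omega
      have h1 : 1 ≤ j := ho.pos
      have hp0 : p j 0 = 0 := hodd j ho h1 hj3
      simpa [hp0] using h
  -- top step with jump
  have hsteptop : ∀ t₀ ∈ S, HasDerivWithinAt (H (2*m - 1))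
      (H (2*m) t₀ - β^(2*m) * G t₀) S t₀ := by
    intro t₀ ht₀
    have h := hstep (2*m - 1) t₀ ht₀
    have h2m : 2*m - 1 + 1 = 2*m := by omega
    rw [h2m] at h
    have hodd' : Odd (2*m - 1) := by
      refine ⟨m - 1, by omega⟩
    have hpow : ((-1:ℝ))^(2*m-1) = -1 := hodd'.neg_one_pow
    have hptop : p (2*m - 1) 0 = -(β ^ (2 * m) / 2) := htop
    rw [hpow, hptop] at h
    convert h using 1
    ring
  -- splitting F₀
  have hPc : Continuous P := hP0 ▸ pc 0
  have habs : ∀ t : ℝ, Continuous (fun s : ℝ => P |t - s| * G s) → True := fun _ _ => trivial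
  have hsplit : ∀ t ∈ S, F₀ t = (∫ s in (0:ℝ)..t, P (t - s) * G s)
      + ∫ s in t..(1:ℝ), P (s - t) * G s := by
    intro t ht
    have h0 : (0:ℝ) ∈ S := by constructor <;> norm_num
    have h1 : (1:ℝ) ∈ S := by constructor <;> norm_num
    have habsint : ∀ a b : ℝ, a ∈ S → b ∈ S →
        IntervalIntegrable (fun s => P |t - s| * G s) MeasureTheory.volume a b := by
      intro a b ha hb
      exact (((hPc.comp ((continuous_const.sub continuous_id).abs)).continuousOn).mul
        (hG.mono (Stmt7Aux.uIcc_sub ha hb))).intervalIntegrable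
    rw [hF₀ t]
    rw [← intervalIntegral.integral_add_adjacent_intervals (habsint 0 t h0 ht) (habsint t 1 ht h1)]
    congr 1
    · apply intervalIntegral.integral_congr
      intro s hs
      rw [Set.uIcc_of_le ht.1] at hs
      show P |t - s| * G s = P (t - s) * G s
      rw [abs_of_nonneg (by linarith [hs.2] : (0:ℝ) ≤ t - s)]
    · apply intervalIntegral.integral_congr
      intro s hs
      rw [Set.uIcc_of_le ht.2] at hs
      show P |t - s| * G s = P (s - t) * G s
      rw [abs_of_nonpos (by linarith [hs.1] : t - s ≤ 0), neg_sub]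
  have hF0H : ∀ t ∈ S, F₀ t = H 0 t := by
    intro t ht
    rw [hsplit t ht]
    simp [hH, hP0]
  -- H (2m) = β^(2m) * F₀ on S
  have hH2m : ∀ t ∈ S, H (2*m) t = β^(2*m) * F₀ t := by
    intro t ht
    rw [hF0H t ht]
    simp only [hH, hP0, (even_two_mul m).neg_one_pow, one_mul, pow_zero]
    rw [show (fun s => p (2*m) (t - s) * G s) = fun s => β^(2*m) * (P (t - s) * G s) from
      funext fun s => by rw [hODE]; ring]
    rw [show (fun s => p (2*m) (s - t) * G s) = fun s => β^(2*m) * (P (s - t) * G s) from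
      funext fun s => by rw [hODE]; ring]
    rw [intervalIntegral.integral_const_mul, intervalIntegral.integral_const_mul]
    ring
  -- iterated derivatives of F₀ agree with H up to order 2m-1
  have hHdW : ∀ j, j ≤ 2*m - 1 → ∀ t ∈ S, iteratedDerivWithin j F₀ S t = H j t := by
    intro j
    induction j with
    | zero => intro _ t ht; rw [iteratedDerivWithin_zero]; exact hF0H t ht
    | succ j ih =>
      intro hj t ht
      have hj' : j ≤ 2*m - 1 := by omega
      have hj2 : j ≤ 2*m - 2 := by omega
      rw [iteratedDerivWithin_succ]
      rw [derivWithin_congr (fun y hy => ih hj' y hy) (ih hj' t ht)]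
      exact (hstep' j hj2 t ht).derivWithin (hUD t ht)
  have htopW : ∀ t ∈ S, iteratedDerivWithin (2*m) F₀ S t = β^(2*m) * (F₀ t - G t) := by
    intro t ht
    have h2m : 2*m = (2*m - 1) + 1 := by omega
    nth_rewrite 1 [h2m]
    rw [iteratedDerivWithin_succ]
    rw [derivWithin_congr (fun y hy => hHdW (2*m-1) le_rfl y hy) (hHdW (2*m-1) le_rfl t ht)]
    rw [(hsteptop t ht).derivWithin (hUD t ht)]
    rw [hH2m t ht]
    ring
  -- smoothness
  have hCD : ∀ i : ℕ, ∀ j : ℕ, i + j ≤ 2*m → ContDiffOn ℝ i (H j) S := by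
    intro i
    induction i with
    | zero =>
      intro j _
      exact contDiffOn_zero.2 (fun t ht => (hstep j t ht).continuousWithinAt)
    | succ i ih =>
      intro j hj
      rw [show ((i+1 : ℕ) : WithTop ℕ∞) = (i : ℕ) + 1 by push_cast; rfl]
      refine (contDiffOn_succ_iff_derivWithin hUD).2
        ⟨fun t ht => (hstep j t ht).differentiableWithinAt, by simp, ?_⟩
      rcases Nat.lt_or_ge j (2*m - 1) with hj1 | hj1
      · exact (ih (j+1) (by omega)).congr
          (fun t ht => (hstep' j (by omega) t ht).derivWithin (hUD t ht))
      · have hi0 : i = 0 := by omega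
        have hj0 : j = 2*m - 1 := by omega
        subst hi0; subst hj0
        apply contDiffOn_zero.2
        have hc1 : ContinuousOn (H (2*m)) S :=
          fun t ht => (hstep (2*m) t ht).continuousWithinAt
        have hc : ContinuousOn (fun t => H (2*m) t - β^(2*m) * G t) S :=
          hc1.sub (continuousOn_const.mul hG)
        exact hc.congr (fun t ht => (hsteptop t ht).derivWithin (hUD t ht))
  have hCDF : ContDiffOn ℝ (2*m : ℕ) F₀ S :=
    (hCD (2*m) 0 (by omega)).congr (fun t ht => hF0H t ht)
  have hβ2m : (β^(2*m)) ≠ 0 := (pow_pos hβ (2*m)).ne'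
  refine ⟨hCDF, ?_, ?_⟩
  · intro t ht
    rw [htopW t ht, inv_mul_cancel_left₀ hβ2m]
    ring
  · intro t ht
    rw [htopW t ht, Odd.neg_one_pow hm, mul_assoc, inv_mul_cancel_left₀ hβ2m]
    ring
end

section
/- Let m be an even positive integer and θ = π − π/(2m). Let B be the m×m real matrix with rows indexed by i = 0, …, m−1 whose entry in row i and column 2k+1 is cos((2k+1) i θ) and in row i and column 2k+2 is sin((2k+1) i θ), for k = 0, …, m/2 − 1 (so row 0 is (1, 0, 1, 0, …, 1, 0)). Then B is invertible. -/
/-- Invertibility of the boundary-condition matrix `B^e_{11}` of Lemma 2 (even `m`):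
the `m × m` matrix with row `i = 0, …, m−1` equal to
`(cos(iθ), sin(iθ), cos(3iθ), sin(3iθ), …, cos((m−1)iθ), sin((m−1)iθ))`,
`θ = π − π/(2m)`, is invertible. -/
theorem stmt_8 (m : ℕ) (hm : Even m) (hm0 : 0 < m)
    (θ : ℝ) (hθ : θ = Real.pi - Real.pi / (2 * m))
    (B : Matrix (Fin m) (Fin m) ℝ)
    (hB : ∀ i j : Fin m, B i j =
      if j.val % 2 = 0
      then Real.cos (((j.val : ℝ) + 1) * (i.val : ℝ) * θ)
      else Real.sin ((j.val : ℝ) * (i.val : ℝ) * θ)) :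
    IsUnit B := by
  have hm2 : m % 2 = 0 := Nat.even_iff.mp hm
  have hπ : Real.pi ≠ 0 := Real.pi_ne_zero
  have hmR : (m : ℝ) ≠ 0 := Nat.cast_ne_zero.mpr hm0.ne'
  -- the integer exponents
  set e : Fin m → ℤ := fun j => if j.val % 2 = 0 then (j.val : ℤ) + 1 else -(j.val : ℤ)
    with he
  have hebound : ∀ j : Fin m, -((m : ℤ) - 1) ≤ e j ∧ e j ≤ (m : ℤ) - 1 := by
    intro j
    have hj := j.isLt
    simp only [he]
    split_ifs <;> omega
  have heinj : Function.Injective e := by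
    intro j j' h
    have hj := j.isLt
    have hj' := j'.isLt
    simp only [he] at h
    apply Fin.ext
    split_ifs at h <;> omega
  -- the Vandermonde nodes
  set x : Fin m → ℂ := fun j => Complex.exp (Complex.I * (e j : ℂ) * (θ : ℂ)) with hx
  -- injectivity of the nodes
  have hxinj : Function.Injective x := by
    intro j j' hxy
    simp only [hx, Complex.exp_eq_exp_iff_exists_int] at hxy
    obtain ⟨n, hn⟩ := hxy
    -- cancel I and pass to ℝ
    have hC : ((e j : ℝ) * θ : ℝ) = ((e j' : ℝ) * θ + n * (2 * Real.pi) : ℝ) := by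
      have h2 : Complex.I * ((e j : ℂ) * (θ : ℂ)) =
          Complex.I * ((e j' : ℂ) * (θ : ℂ) + n * (2 * (Real.pi : ℂ))) := by
        rw [mul_add]
        calc Complex.I * ((e j : ℂ) * (θ : ℂ)) = Complex.I * (e j : ℂ) * (θ : ℂ) := by ring
        _ = Complex.I * (e j' : ℂ) * (θ : ℂ) + n * (2 * (Real.pi : ℂ) * Complex.I) := hn
        _ = _ := by ring
      have h3 : ((e j : ℂ) * (θ : ℂ)) = ((e j' : ℂ) * (θ : ℂ) + n * (2 * (Real.pi : ℂ))) :=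
        mul_left_cancel₀ Complex.I_ne_zero h2
      exact_mod_cast h3
    -- derive the integer relation
    have hkeyR : ((e j : ℝ) - (e j' : ℝ)) * (2 * m - 1) = 4 * m * n := by
      rw [hθ] at hC
      field_simp at hC
      have hmul : Real.pi * (((e j : ℝ) - (e j' : ℝ)) * (2 * m - 1)) =
          Real.pi * (4 * m * n) := by linear_combination Real.pi * hC
      exact mul_left_cancel₀ hπ hmul
    have hkey : ((e j - e j') * (2 * (m : ℤ) - 1)) = 4 * m * n := by
      exact_mod_cast hkeyR
    by_contra hne
    have hD0 : e j - e j' ≠ 0 := sub_ne_zero.mpr (fun h => hne (heinj h))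
    have hcop : IsCoprime (4 * (m : ℤ)) (2 * (m : ℤ) - 1) :=
      ⟨-((m : ℤ) - 1), 2 * (m : ℤ) - 1, by ring⟩
    have hdvd : (4 * (m : ℤ)) ∣ (e j - e j') :=
      hcop.dvd_of_dvd_mul_right ⟨n, by linarith [hkey]⟩
    have h4 : 4 * (m : ℤ) ≤ |e j - e j'| :=
      Int.le_of_dvd (abs_pos.mpr hD0) ((dvd_abs _ _).mpr hdvd)
    have hb1 := hebound j
    have hb2 := hebound j'
    have h5 : |e j - e j'| ≤ 2 * (m : ℤ) - 2 := abs_le.mpr ⟨by omega, by omega⟩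
    have hm1 : (1 : ℤ) ≤ (m : ℤ) := by exact_mod_cast hm0
    omega
  -- the column-mixing matrix
  set Q : Matrix (Fin m) (Fin m) ℂ := Matrix.of fun k j =>
    if k.val / 2 = j.val / 2 then
      (if k.val % 2 = 0 then 1 else if j.val % 2 = 0 then Complex.I else -Complex.I)
    else 0 with hQ
  -- the product identity
  have hprod : (B.map (Complex.ofReal)) * Q = (Matrix.vandermonde x).transpose := by
    ext i j
    have hj := j.isLt
    set t : ℕ := 2 * (j.val / 2) with ht
    have htlt : t + 1 < m := by omega
    set k₀ : Fin m := ⟨t, by omega⟩ with hk₀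
    set k₁ : Fin m := ⟨t + 1, by omega⟩ with hk₁
    have hv0 : k₀.val = t := rfl
    have hv1 : k₁.val = t + 1 := rfl
    have hne01 : k₀ ≠ k₁ := by
      simp only [hk₀, hk₁, Ne, Fin.mk.injEq]; omega
    have hsub : ({k₀, k₁} : Finset (Fin m)) ⊆ Finset.univ := Finset.subset_univ _
    have hzero : ∀ k ∈ Finset.univ, k ∉ ({k₀, k₁} : Finset (Fin m)) →
        (B.map (Complex.ofReal)) i k * Q k j = 0 := by
      intro k _ hk
      simp only [Finset.mem_insert, Finset.mem_singleton, hk₀, hk₁] at hk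
      push_neg at hk
      have h1 : k.val ≠ t := fun h => hk.1 (Fin.ext h)
      have h2 : k.val ≠ t + 1 := fun h => hk.2 (Fin.ext h)
      have hkd : k.val / 2 ≠ j.val / 2 := by omega
      simp only [hQ, Matrix.of_apply, if_neg hkd, mul_zero]
    have hsum : (B.map (Complex.ofReal) * Q) i j =
        (B.map (Complex.ofReal)) i k₀ * Q k₀ j + (B.map (Complex.ofReal)) i k₁ * Q k₁ j := by
      rw [Matrix.mul_apply, ← Finset.sum_subset hsub (fun k _ hk => hzero k (Finset.mem_univ k) hk),
        Finset.sum_pair hne01]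
    rw [hsum]
    -- evaluate the entries
    have hBk0 : (B.map (Complex.ofReal)) i k₀ =
        (Real.cos (((t : ℝ) + 1) * (i.val : ℝ) * θ) : ℂ) := by
      simp only [Matrix.map_apply, hB]
      rw [if_pos (by omega : k₀.val % 2 = 0)]
    have hBk1 : (B.map (Complex.ofReal)) i k₁ =
        (Real.sin (((t : ℝ) + 1) * (i.val : ℝ) * θ) : ℂ) := by
      simp only [Matrix.map_apply, hB]
      rw [if_neg (by omega : ¬ k₁.val % 2 = 0)]
      norm_num [hk₁]
    have hQ0 : Q k₀ j = 1 := by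
      simp only [hQ, Matrix.of_apply]
      rw [if_pos (by omega : k₀.val / 2 = j.val / 2), if_pos (by omega : k₀.val % 2 = 0)]
    rw [hBk0, hBk1, hQ0, mul_one]
    rw [Matrix.transpose_apply, Matrix.vandermonde]
    simp only [Matrix.of_apply, hx]
    rw [← Complex.exp_nat_mul]
    rcases Nat.even_or_odd j.val with hje | hjo
    · -- j even : e j = j + 1, t = j
      have hje2 : j.val % 2 = 0 := Nat.even_iff.mp hje
      have htj : t = j.val := by omega
      have hQ1 : Q k₁ j = Complex.I := by
        simp only [hQ, Matrix.of_apply]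
        rw [if_pos (by omega : k₁.val / 2 = j.val / 2), if_neg (by omega : ¬ k₁.val % 2 = 0),
          if_pos hje2]
      have hej : (e j : ℂ) = (j.val : ℂ) + 1 := by
        simp only [he, if_pos hje2]; push_cast; ring
      rw [hQ1, hej, htj]
      rw [show ((i.val : ℂ)) * (Complex.I * ((j.val : ℂ) + 1) * (θ : ℂ)) =
        ((((j.val : ℝ) + 1) * (i.val : ℝ) * θ : ℝ) : ℂ) * Complex.I from by push_cast; ring]
      rw [Complex.exp_mul_I, Complex.ofReal_cos, Complex.ofReal_sin]
    · -- j odd : e j = -j, t + 1 = j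
      have hjo2 : j.val % 2 = 1 := Nat.odd_iff.mp hjo
      have htj : t + 1 = j.val := by omega
      have hQ1 : Q k₁ j = -Complex.I := by
        simp only [hQ, Matrix.of_apply]
        rw [if_pos (by omega : k₁.val / 2 = j.val / 2), if_neg (by omega : ¬ k₁.val % 2 = 0),
          if_neg (by omega : ¬ j.val % 2 = 0)]
      have hej : (e j : ℂ) = -(j.val : ℂ) := by
        simp only [he, if_neg (by omega : ¬ j.val % 2 = 0)]; push_cast; ring
      have htj' : ((t : ℝ) + 1) = (j.val : ℝ) := by exact_mod_cast congrArg (Nat.cast : ℕ → ℝ) htj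
      rw [hQ1, hej, htj']
      rw [show ((i.val : ℂ)) * (Complex.I * (-(j.val : ℂ)) * (θ : ℂ)) =
        ((-((j.val : ℝ) * (i.val : ℝ) * θ) : ℝ) : ℂ) * Complex.I from by push_cast; ring]
      rw [Complex.exp_mul_I, Complex.ofReal_cos, Complex.ofReal_sin]
      push_cast
      rw [Complex.cos_neg, Complex.sin_neg]
      ring
  -- the Vandermonde determinant is nonzero
  have hVdet : ((Matrix.vandermonde x).transpose).det ≠ 0 := by
    rw [Matrix.det_transpose, Matrix.det_vandermonde]
    apply Finset.prod_ne_zero_iff.mpr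
    intro i _
    apply Finset.prod_ne_zero_iff.mpr
    intro j hjmem
    have hij : i ≠ j := by
      rcases Finset.mem_Ioi.mp hjmem with h
      exact ne_of_lt h
    exact sub_ne_zero.mpr (fun h => hij (hxinj h.symm))
  -- conclude
  have hdetprod : (B.map (Complex.ofReal)).det * Q.det = ((Matrix.vandermonde x).transpose).det := by
    rw [← Matrix.det_mul, hprod]
  have hBCdet : (B.map (Complex.ofReal)).det ≠ 0 := by
    intro h
    rw [h, zero_mul] at hdetprod
    exact hVdet hdetprod.symm
  have hBdet : B.det ≠ 0 := by
    intro h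
    apply hBCdet
    rw [show B.map Complex.ofReal = Complex.ofRealHom.mapMatrix B from rfl,
      ← RingHom.map_det, h]
    simp
  exact (Matrix.isUnit_iff_isUnit_det B).mpr (isUnit_iff_ne_zero.mpr hBdet)
end

section
/- Let m be an even positive integer, ω_j = sin((1+2j)π/(2m)) for j = 0, …, m/2 − 1, and β ∈ ℝ. Define ψ_{j,ℓ} = β ω_j + (2j+1) ℓ π/(2m). Let B be the m×m real matrix with rows indexed by ℓ = 0, …, m−1 whose entry in row ℓ and column 2j+1 is cos(ψ_{j,ℓ}) and in row ℓ and column 2j+2 is sin(ψ_{j,ℓ}). Then B is invertible for every β ∈ ℝ. -/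
open Complex Matrix

/-- cos/sin combination giving a complex exponential (even column case). -/
lemma aux_even (a t : ℝ) :
    (Real.cos (a + t) : ℂ) * Complex.exp ((-a : ℝ) * Complex.I) +
      (Real.sin (a + t) : ℂ) * (Complex.I * Complex.exp ((-a : ℝ) * Complex.I)) =
    Complex.exp ((t : ℝ) * Complex.I) := by
  have h1 : (Real.cos (a + t) : ℂ) + (Real.sin (a + t) : ℂ) * Complex.I =
      Complex.exp (((a + t : ℝ) : ℂ) * Complex.I) := by
    rw [Complex.exp_mul_I, Complex.ofReal_cos, Complex.ofReal_sin]
  calc (Real.cos (a + t) : ℂ) * Complex.exp ((-a : ℝ) * Complex.I) +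
      (Real.sin (a + t) : ℂ) * (Complex.I * Complex.exp ((-a : ℝ) * Complex.I))
      = ((Real.cos (a + t) : ℂ) + (Real.sin (a + t) : ℂ) * Complex.I) *
        Complex.exp ((-a : ℝ) * Complex.I) := by ring
    _ = Complex.exp (((a + t : ℝ) : ℂ) * Complex.I + ((-a : ℝ) : ℂ) * Complex.I) := by
        rw [h1, Complex.exp_add]
    _ = Complex.exp ((t : ℝ) * Complex.I) := by push_cast; ring_nf

/-- cos/sin combination giving a complex exponential (odd column case). -/
lemma aux_odd (a t : ℝ) :
    (Real.cos (a + t) : ℂ) * Complex.exp ((a : ℝ) * Complex.I) +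
      (Real.sin (a + t) : ℂ) * (Complex.I * (-1 * Complex.exp ((a : ℝ) * Complex.I))) =
    Complex.exp ((-t : ℝ) * Complex.I) := by
  have h1 : (Real.cos (a + t) : ℂ) - (Real.sin (a + t) : ℂ) * Complex.I =
      Complex.exp (((-(a + t) : ℝ) : ℂ) * Complex.I) := by
    rw [Complex.exp_mul_I, Complex.ofReal_neg, Complex.ofReal_cos, Complex.ofReal_sin,
      Complex.cos_neg, Complex.sin_neg]
    ring
  calc (Real.cos (a + t) : ℂ) * Complex.exp ((a : ℝ) * Complex.I) +
      (Real.sin (a + t) : ℂ) * (Complex.I * (-1 * Complex.exp ((a : ℝ) * Complex.I)))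
      = ((Real.cos (a + t) : ℂ) - (Real.sin (a + t) : ℂ) * Complex.I) *
        Complex.exp ((a : ℝ) * Complex.I) := by ring
    _ = Complex.exp (((-(a + t) : ℝ) : ℂ) * Complex.I + ((a : ℝ) : ℂ) * Complex.I) := by
        rw [h1, Complex.exp_add]
    _ = Complex.exp ((-t : ℝ) * Complex.I) := by push_cast; ring_nf

/-- Invertibility of the boundary-condition matrix `B^e_{22}` of Lemma 2 (even `m`):
with `ω_j = sin((1+2j)π/(2m))` and `ψ_{j,ℓ} = βω_j + (2j+1)ℓπ/(2m)`, the `m × m` matrix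
whose row `ℓ` is `(cos(ψ_{0,ℓ}), sin(ψ_{0,ℓ}), …, cos(ψ_{m/2−1,ℓ}), sin(ψ_{m/2−1,ℓ}))`
is invertible for every `β ∈ ℝ`. -/
theorem stmt_9 (m : ℕ) (hm : Even m) (hm0 : 0 < m) (β : ℝ)
    (B : Matrix (Fin m) (Fin m) ℝ)
    (hB : ∀ l c : Fin m, B l c =
      if c.val % 2 = 0
      then Real.cos (β * Real.sin ((1 + 2 * ((c.val / 2 : ℕ) : ℝ)) * Real.pi / (2 * m)) +
        (2 * ((c.val / 2 : ℕ) : ℝ) + 1) * (l.val : ℝ) * Real.pi / (2 * m))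
      else Real.sin (β * Real.sin ((1 + 2 * ((c.val / 2 : ℕ) : ℝ)) * Real.pi / (2 * m)) +
        (2 * ((c.val / 2 : ℕ) : ℝ) + 1) * (l.val : ℝ) * Real.pi / (2 * m))) :
    IsUnit B := by
  have hm2 : m % 2 = 0 := Nat.even_iff.mp hm
  have hπ : (0 : ℝ) < Real.pi := Real.pi_pos
  have hmR : (0 : ℝ) < (m : ℝ) := by exact_mod_cast hm0
  -- the frequencies
  set θ : ℕ → ℝ := fun j => (2 * (j : ℝ) + 1) * Real.pi / (2 * m) with hθdef
  set ω : ℕ → ℝ := fun j => Real.sin ((1 + 2 * (j : ℝ)) * Real.pi / (2 * m)) with hωdef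
  have hθpos : ∀ j : ℕ, 0 < θ j := by
    intro j
    apply div_pos
    · positivity
    · positivity
  have hθlt : ∀ j : ℕ, 2 * j < m → θ j < Real.pi / 2 := by
    intro j hj
    have hj1 : 2 * j + 1 < m := by omega
    have hj1R : 2 * (j : ℝ) + 1 < (m : ℝ) := by exact_mod_cast hj1
    rw [hθdef]
    rw [div_lt_div_iff₀ (by positivity) (by norm_num)]
    nlinarith
  have hθinj : ∀ j j' : ℕ, θ j = θ j' → j = j' := by
    intro j j' h
    rw [hθdef] at h
    simp only at h
    have hne : (2 * (m : ℝ)) ≠ 0 := by positivity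
    rw [div_eq_div_iff hne hne] at h
    have h3 := mul_right_cancel₀ hne h
    have h2 : (2 * (j : ℝ) + 1) = (2 * (j' : ℝ) + 1) :=
      mul_right_cancel₀ (ne_of_gt hπ) h3
    have : (j : ℝ) = (j' : ℝ) := by linarith
    exact_mod_cast this
  -- the nodes
  set w : Fin m → ℂ := fun c =>
    Complex.exp (((if c.val % 2 = 0 then θ (c.val / 2) else -θ (c.val / 2)) : ℝ) * Complex.I)
    with hwdef
  have hx_bound : ∀ c : Fin m,
      |(if c.val % 2 = 0 then θ (c.val / 2) else -θ (c.val / 2))| < Real.pi / 2 := by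
    intro c
    have h2 : 2 * (c.val / 2) < m := by have := c.isLt; omega
    have := hθpos (c.val / 2)
    have := hθlt (c.val / 2) h2
    rcases Nat.decEq (c.val % 2) 0 with h | h <;> simp [h] <;> rw [abs_lt] <;>
      constructor <;> linarith
  have hwinj : Function.Injective w := by
    intro c c' hcc
    set x : ℝ := (if c.val % 2 = 0 then θ (c.val / 2) else -θ (c.val / 2)) with hx
    set x' : ℝ := (if c'.val % 2 = 0 then θ (c'.val / 2) else -θ (c'.val / 2)) with hx'
    rw [hwdef] at hcc
    simp only at hcc
    rw [Complex.exp_eq_exp_iff_exists_int] at hcc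
    obtain ⟨n, hn⟩ := hcc
    have h2 : (x : ℂ) * Complex.I = ((x' : ℂ) + (n : ℂ) * (2 * (Real.pi : ℂ))) * Complex.I := by
      rw [hn]; ring
    have h3 : (x : ℂ) = (x' : ℂ) + (n : ℂ) * (2 * (Real.pi : ℂ)) :=
      mul_right_cancel₀ Complex.I_ne_zero h2
    have h4 : x = x' + (n : ℝ) * (2 * Real.pi) := by exact_mod_cast h3
    have hb := hx_bound c
    have hb' := hx_bound c'
    rw [← hx] at hb
    rw [← hx'] at hb'
    rw [abs_lt] at hb hb'
    have hn0 : n = 0 := by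
      rcases lt_trichotomy n 0 with h | h | h
      · have : (n : ℝ) ≤ -1 := by exact_mod_cast Int.le_sub_one_of_lt h
        nlinarith
      · exact h
      · have : (1 : ℝ) ≤ (n : ℝ) := by exact_mod_cast h
        nlinarith
    rw [hn0] at h4
    simp at h4
    -- now x = x'
    have hpc := hθpos (c.val / 2)
    have hpc' := hθpos (c'.val / 2)
    have hmod : c.val % 2 = c'.val % 2 ∧ θ (c.val / 2) = θ (c'.val / 2) := by
      rcases Nat.decEq (c.val % 2) 0 with h | h <;> rcases Nat.decEq (c'.val % 2) 0 with h' | h' <;>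
        rw [hx, hx'] at h4 <;> simp [h, h'] at h4 <;>
        first
          | exact ⟨by omega, h4⟩
          | (exfalso; linarith)
          | exact ⟨by omega, by linarith⟩
    have hdiv : c.val / 2 = c'.val / 2 := hθinj _ _ hmod.2
    have : c.val = c'.val := by omega
    exact Fin.ext this
  -- the Vandermonde matrix is invertible
  have hV : (Matrix.vandermonde w).det ≠ 0 := Matrix.det_vandermonde_ne_zero_iff.mpr hwinj
  -- the rotation/change-of-basis matrix
  set D : Matrix (Fin m) (Fin m) ℂ := Matrix.of fun k c =>
    if k.val / 2 = c.val / 2 then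
      (if k.val % 2 = 0 then 1 else Complex.I) *
      (if c.val % 2 = 0 then Complex.exp ((-(β * ω (c.val / 2)) : ℝ) * Complex.I)
       else (if k.val % 2 = 0 then 1 else -1) *
         Complex.exp (((β * ω (c.val / 2)) : ℝ) * Complex.I))
    else 0 with hDdef
  -- key factorization
  have hmul : B.map (Complex.ofRealHom) * D = (Matrix.vandermonde w)ᵀ := by
    ext ℓ c
    have hc := c.isLt
    set j := c.val / 2 with hj
    have h2j1 : 2 * j + 1 < m := by omega
    have h2j : 2 * j < m := by omega
    set k0 : Fin m := ⟨2 * j, h2j⟩ with hk0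
    set k1 : Fin m := ⟨2 * j + 1, h2j1⟩ with hk1
    rw [Matrix.mul_apply]
    rw [Finset.sum_eq_add_of_mem k0 k1 (Finset.mem_univ _) (Finset.mem_univ _)
      (by simp [hk0, hk1, Fin.ext_iff]) ?_]
    swap
    · intro k _ hk
      have hkv : k.val ≠ 2 * j ∧ k.val ≠ 2 * j + 1 := by
        constructor <;> intro h <;> [exact hk.1 (Fin.ext h); exact hk.2 (Fin.ext h)]
      have : k.val / 2 ≠ j := by omega
      simp only [hDdef, Matrix.of_apply, ← hj, if_neg this, mul_zero]
    · have hk0v : k0.val = 2 * j := rfl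
      have hk1v : k1.val = 2 * j + 1 := rfl
      have hk0m : k0.val % 2 = 0 := by omega
      have hk1m : k1.val % 2 = 1 := by omega
      have hk0d : k0.val / 2 = j := by omega
      have hk1d : k1.val / 2 = j := by omega
      by_cases hce : c.val % 2 = 0
      · -- even column
        simp only [Matrix.map_apply, hB, hDdef, Matrix.of_apply,
          Matrix.transpose_apply, Matrix.vandermonde_apply, hk0d, hk1d, hk0m, hk1m, ← hj,
          hce, reduceIte, one_ne_zero, if_true, if_false, one_mul, Complex.ofRealHom_eq_coe]
        have hεw : w c = Complex.exp ((θ j : ℝ) * Complex.I) := by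
          rw [hwdef]; simp [hce, ← hj]
        rw [hεw, ← Complex.exp_nat_mul]
        have harg : β * Real.sin ((1 + 2 * ((j : ℕ) : ℝ)) * Real.pi / (2 * m)) +
            (2 * ((j : ℕ) : ℝ) + 1) * (ℓ.val : ℝ) * Real.pi / (2 * m)
            = (β * ω j) + (θ j * ℓ.val) := by
          rw [hθdef, hωdef]; ring
        rw [harg, show ((ℓ.val : ℂ) * (((θ j : ℝ) : ℂ) * Complex.I)) =
            ((θ j * (ℓ.val : ℝ) : ℝ) : ℂ) * Complex.I by push_cast; ring]
        exact aux_even (β * ω j) (θ j * (ℓ.val : ℝ))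
      · -- odd column
        simp only [Matrix.map_apply, hB, hDdef, Matrix.of_apply,
          Matrix.transpose_apply, Matrix.vandermonde_apply, hk0d, hk1d, hk0m, hk1m, ← hj,
          hce, reduceIte, one_ne_zero, if_true, if_false, one_mul, Complex.ofRealHom_eq_coe]
        have hεw : w c = Complex.exp (((-θ j : ℝ)) * Complex.I) := by
          rw [hwdef]; simp [hce, ← hj]
        rw [hεw, ← Complex.exp_nat_mul]
        have harg : β * Real.sin ((1 + 2 * ((j : ℕ) : ℝ)) * Real.pi / (2 * m)) +
            (2 * ((j : ℕ) : ℝ) + 1) * (ℓ.val : ℝ) * Real.pi / (2 * m)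
            = (β * ω j) + (θ j * ℓ.val) := by
          rw [hθdef, hωdef]; ring
        rw [harg, show ((ℓ.val : ℂ) * (((-θ j : ℝ) : ℂ) * Complex.I)) =
            ((-(θ j * (ℓ.val : ℝ)) : ℝ) : ℂ) * Complex.I by push_cast; ring]
        exact aux_odd (β * ω j) (θ j * (ℓ.val : ℝ))
  -- conclude
  have hdet : (B.map (Complex.ofRealHom)).det * D.det = (Matrix.vandermonde w).det := by
    rw [← Matrix.det_mul, hmul, Matrix.det_transpose]
  have hBc : (B.map (Complex.ofRealHom)).det ≠ 0 := by
    intro h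
    rw [h, zero_mul] at hdet
    exact hV hdet.symm
  have hBdet : B.det ≠ 0 := by
    intro h
    apply hBc
    rw [show B.map (Complex.ofRealHom) = Complex.ofRealHom.mapMatrix B from rfl,
      ← RingHom.map_det, h, map_zero]
  exact (Matrix.isUnit_iff_isUnit_det B).mpr (isUnit_iff_ne_zero.mpr hBdet)
end

section
/- Let m be an odd positive integer and γ_k = π − kπ/m for k = 1, …, (m−1)/2. Let B be the m×m real matrix with rows indexed by j = 0, …, m−1 whose first-column entry in row j is (−1)^j and whose entries in row j and columns 2k, 2k+1 are cos(j γ_k) and sin(j γ_k), for k = 1, …, (m−1)/2. Then B is invertible. -/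
open Complex Matrix

noncomputable section







/-- signed frequency index -/
def ee (c : ℕ) : ℤ :=
  if c = 0 then 0 else if c % 2 = 1 then -(((c + 1) / 2 : ℕ) : ℤ) else ((c / 2 : ℕ) : ℤ)

lemma ee_inj : Function.Injective ee := by
  intro a b h
  unfold ee at h
  split_ifs at h <;> omega

lemma ee_bound {m c : ℕ} (hm : Odd m) (hc : c < m) : 2 * |ee c| < (m : ℤ) := by
  have hm' : m % 2 = 1 := Nat.odd_iff.mp hm
  unfold ee
  split_ifs with h1 h2
  · simp; omega
  · rw [abs_neg, _root_.abs_of_nonneg (by positivity)]; omega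
  · rw [_root_.abs_of_nonneg (by positivity)]; omega

def φf (m c : ℕ) : ℝ := Real.pi + (ee c : ℝ) * Real.pi / m

def zz (m c : ℕ) : ℂ := Complex.exp ((φf m c : ℝ) * I)

lemma phi_bound {m c : ℕ} (hm : Odd m) (hc : c < m) :
    |(ee c : ℝ) * Real.pi / m| < Real.pi / 2 := by
  have hm0 : (0 : ℝ) < m := by
    have := hm.pos; exact_mod_cast this
  have h1 : (2 * |ee c| : ℝ) < m := by exact_mod_cast ee_bound hm hc
  have hpi := Real.pi_pos
  rw [abs_div, abs_mul, abs_of_pos Real.pi_pos, abs_of_pos hm0, div_lt_iff₀ hm0,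
    ← Int.cast_abs]
  nlinarith

lemma zz_inj {m : ℕ} (hm : Odd m) {a b : ℕ} (ha : a < m) (hb : b < m)
    (h : zz m a = zz m b) : a = b := by
  have hm0 : (0 : ℝ) < m := by have := hm.pos; exact_mod_cast this
  have hpi := Real.pi_pos
  rw [zz, zz, Complex.exp_eq_exp_iff_exists_int] at h
  obtain ⟨n, hn⟩ := h
  have hn' : ((φf m a : ℝ) : ℂ) = ((φf m b + n * (2 * Real.pi) : ℝ) : ℂ) := by
    apply mul_right_cancel₀ Complex.I_ne_zero
    rw [hn]; push_cast; ring
  have hr : φf m a = φf m b + n * (2 * Real.pi) := by exact_mod_cast hn'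
  have hA := phi_bound hm ha
  have hB := phi_bound hm hb
  have hn0 : n = 0 := by
    rcases lt_trichotomy n 0 with h' | h' | h'
    · have : (n : ℝ) ≤ -1 := by exact_mod_cast (by omega : n ≤ -1)
      have := abs_sub_abs_le_abs_sub ((ee a : ℝ) * Real.pi / m) ((ee b : ℝ) * Real.pi / m)
      rw [φf, φf] at hr
      nlinarith [abs_nonneg ((ee a : ℝ) * Real.pi / m), neg_abs_le ((ee a : ℝ) * Real.pi / m),
        le_abs_self ((ee b : ℝ) * Real.pi / m), neg_abs_le ((ee b : ℝ) * Real.pi / m),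
        le_abs_self ((ee a : ℝ) * Real.pi / m)]
    · exact h'
    · have : (1 : ℝ) ≤ n := by exact_mod_cast h'
      rw [φf, φf] at hr
      nlinarith [neg_abs_le ((ee a : ℝ) * Real.pi / m), le_abs_self ((ee a : ℝ) * Real.pi / m),
        neg_abs_le ((ee b : ℝ) * Real.pi / m), le_abs_self ((ee b : ℝ) * Real.pi / m)]
  rw [hn0] at hr
  have hπm : Real.pi / (m : ℝ) ≠ 0 := by positivity
  have h2 : (ee a : ℝ) * (Real.pi / m) = (ee b : ℝ) * (Real.pi / m) := by
    rw [φf, φf] at hr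
    have : (ee a : ℝ) * Real.pi / m = (ee b : ℝ) * Real.pi / m := by push_cast at hr; linarith
    rw [mul_div_assoc, mul_div_assoc] at this; exact this
  have h3 : (ee a : ℝ) = ee b := mul_right_cancel₀ hπm h2
  exact ee_inj (by exact_mod_cast h3)









lemma zz_zero (m : ℕ) : zz m 0 = -1 := by
  have h : φf m 0 = Real.pi := by simp [φf, ee]
  rw [zz, h, Complex.exp_pi_mul_I]

lemma cos_sum (x : ℝ) (j : ℕ) :
    ((Real.cos (j * x) : ℝ) : ℂ) =
      (1 / 2) * Complex.exp ((x : ℝ) * I) ^ j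
        + (1 / 2) * Complex.exp (((2 * Real.pi - x : ℝ) : ℝ) * I) ^ j := by
  have h2 : Complex.exp (((2 * Real.pi - x : ℝ) : ℂ) * I) = Complex.exp (-((x : ℂ) * I)) := by
    rw [show ((2 * Real.pi - x : ℝ) : ℂ) * I = 2 * Real.pi * I + -((x : ℂ) * I) by
      push_cast; ring, Complex.exp_add, Complex.exp_two_pi_mul_I, one_mul]
  rw [h2, ← Complex.exp_nat_mul, ← Complex.exp_nat_mul, Complex.ofReal_cos]
  have h := Complex.two_cos ((j : ℂ) * (x : ℂ))
  rw [neg_mul] at h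
  push_cast
  rw [show ((j : ℂ)) * ((x : ℂ) * I) = ((j : ℂ) * x) * I by ring,
    show (j : ℂ) * -((x : ℂ) * I) = -(((j : ℂ) * x) * I) by ring]
  linear_combination h / 2

lemma sin_sum (x : ℝ) (j : ℕ) :
    ((Real.sin (j * x) : ℝ) : ℂ) =
      (-I / 2) * Complex.exp ((x : ℝ) * I) ^ j
        + (I / 2) * Complex.exp (((2 * Real.pi - x : ℝ) : ℝ) * I) ^ j := by
  have h2 : Complex.exp (((2 * Real.pi - x : ℝ) : ℂ) * I) = Complex.exp (-((x : ℂ) * I)) := by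
    rw [show ((2 * Real.pi - x : ℝ) : ℂ) * I = 2 * Real.pi * I + -((x : ℂ) * I) by
      push_cast; ring, Complex.exp_add, Complex.exp_two_pi_mul_I, one_mul]
  rw [h2, ← Complex.exp_nat_mul, ← Complex.exp_nat_mul, Complex.ofReal_sin]
  have h := Complex.two_sin ((j : ℂ) * (x : ℂ))
  rw [neg_mul] at h
  push_cast
  rw [show ((j : ℂ)) * ((x : ℂ) * I) = ((j : ℂ) * x) * I by ring,
    show (j : ℂ) * -((x : ℂ) * I) = -(((j : ℂ) * x) * I) by ring]
  linear_combination h / 2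

def pv (c : ℕ) : ℕ := if c % 2 = 1 then c else c - 1
def qv (c : ℕ) : ℕ := if c % 2 = 1 then c + 1 else c
def av (c : ℕ) : ℂ := if c = 0 then 1 else if c % 2 = 1 then 1 / 2 else -I / 2
def bv (c : ℕ) : ℂ := if c = 0 then 0 else if c % 2 = 1 then 1 / 2 else I / 2

def CC (m : ℕ) : Matrix (Fin m) (Fin m) ℂ := fun d c =>
  (if d.val = pv c.val then av c.val else 0) + (if d.val = qv c.val then bv c.val else 0)

def DD (m : ℕ) : Matrix (Fin m) (Fin m) ℂ := fun c b =>
  if b.val = 0 then (if c.val = 0 then 1 else 0)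
  else if b.val % 2 = 1 then (if c.val = b.val then 1 else if c.val = b.val + 1 then I else 0)
  else (if c.val = b.val - 1 then 1 else if c.val = b.val then -I else 0)

lemma sum_delta {m : ℕ} (t : ℕ) (ht : t < m) (f : Fin m → ℂ) (v : ℂ) :
    (∑ d : Fin m, f d * (if d.val = t then v else 0)) = f ⟨t, ht⟩ * v := by
  rw [Finset.sum_eq_single (⟨t, ht⟩ : Fin m)]
  · simp
  · intro b _ hb
    have : b.val ≠ t := fun h => hb (Fin.ext h)
    simp [this]
  · simp

lemma pv_lt {m c : ℕ} (hc : c < m) : pv c < m := by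
  unfold pv; split_ifs <;> omega

lemma qv_lt {m c : ℕ} (hm : Odd m) (hc : c < m) : qv c < m := by
  have hm' : m % 2 = 1 := Nat.odd_iff.mp hm
  unfold qv; split_ifs <;> omega

lemma DC {m : ℕ} (hm : Odd m) : DD m * CC m = 1 := by
  have hm' : m % 2 = 1 := Nat.odd_iff.mp hm
  ext a b
  rw [Matrix.mul_apply]
  simp only [CC, mul_add]
  rw [Finset.sum_add_distrib, sum_delta _ (pv_lt b.isLt), sum_delta _ (qv_lt hm b.isLt)]
  rw [Matrix.one_apply]
  by_cases hb0 : b.val = 0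
  · have hp : pv b.val = 0 := by simp [pv, hb0]
    have hq : qv b.val = 0 := by simp [qv, hb0]
    simp only [DD, av, bv, hb0, hp, hq, Fin.ext_iff]
    by_cases ha : a.val = 0 <;> simp [ha, hb0, pv, qv]
  · by_cases hb1 : b.val % 2 = 1
    · have hp : pv b.val = b.val := by simp [pv, hb1]
      have hq : qv b.val = b.val + 1 := by simp [qv, hb1]
      simp only [DD, av, bv, hp, hq, Fin.ext_iff, hb0, hb1]
      have h1 : ¬ (b.val + 1 = 0) := by omega
      have h2 : ¬ ((b.val + 1) % 2 = 1) := by omega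
      have h3 : b.val + 1 - 1 = b.val := by omega
      simp only [h1, h2, h3, if_false, if_true]
      by_cases hab : a.val = b.val
      · rw [if_pos hab, if_pos hab, if_pos hab]
        norm_num
      · by_cases hab2 : a.val = b.val + 1
        · rw [if_neg hab, if_pos hab2, if_neg hab, if_pos hab2, if_neg hab]
          ring
        · rw [if_neg hab, if_neg hab2, if_neg hab, if_neg hab2, if_neg hab]
          norm_num
    · have hp : pv b.val = b.val - 1 := by simp [pv, hb1]
      have hq : qv b.val = b.val := by simp [qv, hb1]
      simp only [DD, av, bv, hp, hq, Fin.ext_iff, hb0, hb1]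
      have h1 : ¬ (b.val - 1 = 0) := by omega
      have h2 : (b.val - 1) % 2 = 1 := by omega
      have h3 : b.val - 1 + 1 = b.val := by omega
      simp only [h1, h2, h3, if_false, if_true]
      by_cases hab : a.val = b.val - 1
      · have hne : ¬ (a.val = b.val) := by omega
        rw [if_pos hab, if_pos hab, if_neg hne]
        ring
      · by_cases hab2 : a.val = b.val
        · rw [if_neg hab, if_pos hab2, if_neg hab, if_pos hab2, if_pos hab2]
          linear_combination (-1 : ℂ) * Complex.I_mul_I
        · rw [if_neg hab, if_neg hab2, if_neg hab, if_neg hab2, if_neg hab2]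
          norm_num



end

/-- Invertibility of the boundary-condition matrix `B^o_{11}` of Lemma 3 (odd `m`):
the `m × m` matrix whose row `j = 0, …, m−1` is
`((−1)^j, cos(jγ_1), sin(jγ_1), …, cos(jγ_{(m−1)/2}), sin(jγ_{(m−1)/2}))`,
`γ_k = π − kπ/m`, is invertible. -/
theorem stmt_10 (m : ℕ) (hm : Odd m) (hm0 : 0 < m)
    (γ : ℕ → ℝ) (hγ : ∀ k : ℕ, γ k = Real.pi - (k : ℝ) * Real.pi / (m : ℝ))
    (B : Matrix (Fin m) (Fin m) ℝ)
    (hB : ∀ j c : Fin m, B j c =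
      if c.val = 0 then (-1 : ℝ) ^ j.val
      else if c.val % 2 = 1
      then Real.cos ((j.val : ℝ) * γ ((c.val + 1) / 2))
      else Real.sin ((j.val : ℝ) * γ (c.val / 2))) :
    IsUnit B := by
  classical
  have hm' : m % 2 = 1 := Nat.odd_iff.mp hm
  have hzf : Function.Injective (fun i : Fin m => zz m i.val) := by
    intro a b h
    exact Fin.ext (zz_inj hm a.isLt b.isLt h)
  have hmap : B.map (algebraMap ℝ ℂ) =
      (Matrix.vandermonde (fun i : Fin m => zz m i.val))ᵀ * CC m := by
    ext j c
    rw [Matrix.mul_apply]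
    simp only [CC, mul_add]
    rw [Finset.sum_add_distrib, sum_delta _ (pv_lt c.isLt), sum_delta _ (qv_lt hm c.isLt)]
    simp only [Matrix.transpose_apply, Matrix.vandermonde_apply]
    rw [Matrix.map_apply]
    have hAlg : (algebraMap ℝ ℂ) (B j c) = ((B j c : ℝ) : ℂ) := rfl
    rw [hAlg, hB j c]
    by_cases hc0 : c.val = 0
    · have hp : pv 0 = 0 := by simp [pv]
      have hq : qv 0 = 0 := by simp [qv]
      simp only [hc0, av, bv, if_true, if_pos rfl, hp, hq]
      rw [zz_zero]
      push_cast
      ring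
    · by_cases hc1 : c.val % 2 = 1
      · have hp : pv c.val = c.val := by simp [pv, hc1]
        have hq : qv c.val = c.val + 1 := by simp [qv, hc1]
        have hav : av c.val = 1 / 2 := by simp [av, hc0, hc1]
        have hbv : bv c.val = 1 / 2 := by simp [bv, hc0, hc1]
        set x : ℝ := γ ((c.val + 1) / 2) with hx
        have hzp : zz m c.val = Complex.exp ((x : ℝ) * I) := by
          have : φf m c.val = x := by
            rw [hx, hγ, φf, ee, if_neg hc0, if_pos hc1]
            simp only [Int.cast_neg, Int.cast_natCast]
            ring
          rw [zz, this]
        have hzq : zz m (c.val + 1) = Complex.exp (((2 * Real.pi - x : ℝ) : ℝ) * I) := by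
          have h1 : ¬ (c.val + 1 = 0) := by omega
          have h2 : ¬ ((c.val + 1) % 2 = 1) := by omega
          have h3 : (c.val + 1) / 2 = (c.val + 1) / 2 := rfl
          have : φf m (c.val + 1) = 2 * Real.pi - x := by
            rw [hx, hγ, φf, ee, if_neg h1, if_neg h2]
            have h4 : (c.val + 1) / 2 = (c.val + 1) / 2 := rfl
            simp only [Int.cast_natCast]
            ring
          rw [zz, this]
        rw [if_neg hc0, if_pos hc1, hp, hq, hzp, hzq, hav, hbv, cos_sum x j.val]
        ring
      · have hp : pv c.val = c.val - 1 := by simp [pv, hc1]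
        have hq : qv c.val = c.val := by simp [qv, hc1]
        have hav : av c.val = -I / 2 := by simp [av, hc0, hc1]
        have hbv : bv c.val = I / 2 := by simp [bv, hc0, hc1]
        set x : ℝ := γ (c.val / 2) with hx
        have hzp : zz m (c.val - 1) = Complex.exp ((x : ℝ) * I) := by
          have h1 : ¬ (c.val - 1 = 0) := by omega
          have h2 : (c.val - 1) % 2 = 1 := by omega
          have h3 : (c.val - 1 + 1) / 2 = c.val / 2 := by omega
          have : φf m (c.val - 1) = x := by
            rw [hx, hγ, φf, ee, if_neg h1, if_pos h2, h3]
            simp only [Int.cast_neg, Int.cast_natCast]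
            ring
          rw [zz, this]
        have hzq : zz m c.val = Complex.exp (((2 * Real.pi - x : ℝ) : ℝ) * I) := by
          have : φf m c.val = 2 * Real.pi - x := by
            rw [hx, hγ, φf, ee, if_neg hc0, if_neg hc1]
            simp only [Int.cast_natCast]
            ring
          rw [zz, this]
        rw [if_neg hc0, if_neg hc1, hp, hq, hzp, hzq, hav, hbv, sin_sum x j.val]
        ring
  have hdetC : (CC m).det ≠ 0 := by
    have h1 := congrArg Matrix.det (DC hm)
    rw [Matrix.det_mul, Matrix.det_one] at h1
    exact right_ne_zero_of_mul_eq_one h1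
  have hdetV : ((Matrix.vandermonde (fun i : Fin m => zz m i.val))ᵀ).det ≠ 0 := by
    rw [Matrix.det_transpose]
    exact Matrix.det_vandermonde_ne_zero_iff.mpr hzf
  have hdet : (B.map (algebraMap ℝ ℂ)).det ≠ 0 := by
    rw [hmap, Matrix.det_mul]
    exact mul_ne_zero hdetV hdetC
  have hmd : (algebraMap ℝ ℂ) B.det = (B.map (algebraMap ℝ ℂ)).det := by
    rw [RingHom.map_det, RingHom.mapMatrix_apply]
  have hBdet : B.det ≠ 0 := by
    intro h
    apply hdet
    rw [← hmd, h, map_zero]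
  exact (Matrix.isUnit_iff_isUnit_det B).mpr (isUnit_iff_ne_zero.mpr hBdet)
end

section
/- Let m be an odd positive integer, ω_k = sin(kπ/m) for k = 1, …, (m−1)/2, and β ∈ ℝ. Define ζ_{k,ℓ} = β ω_k + ℓ k π/m. Let B be the m×m real matrix with rows indexed by ℓ = 0, …, m−1 whose first-column entries all equal 1 and whose entries in row ℓ and columns 2k, 2k+1 are cos(ζ_{k,ℓ}) and sin(ζ_{k,ℓ}), for k = 1, …, (m−1)/2. Then B is invertible for every β ∈ ℝ. -/
open Complex Matrix

noncomputable section Stmt11Aux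

/-- pair index of a column -/
def stmt11kOf (c : ℕ) : ℕ := if c % 2 = 1 then (c+1)/2 else c/2

/-- signed exponent of a column -/
def stmt11ec (c : ℕ) : ℤ := if c % 2 = 1 then (((c+1)/2 : ℕ) : ℤ) else -((c/2 : ℕ) : ℤ)

/-- Vandermonde node of a column -/
def stmt11node (m c : ℕ) : ℂ := Complex.exp ((Real.pi : ℂ) * Complex.I / (m : ℂ)) ^ (stmt11ec c)

/-- column transformation matrix -/
def stmt11S (m : ℕ) (β : ℝ) : Matrix (Fin m) (Fin m) ℂ := fun c c' =>
  if c'.val = 0 then (if c.val = 0 then 1 else 0)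
  else if c.val = 0 then 0
  else if stmt11kOf c.val = stmt11kOf c'.val then
    (if c'.val % 2 = 1 then
      (if c.val % 2 = 1 then
        (Complex.exp (((β * Real.sin ((stmt11kOf c'.val : ℝ) * Real.pi / m) : ℝ) : ℂ) * Complex.I))⁻¹
       else Complex.I * (Complex.exp (((β * Real.sin ((stmt11kOf c'.val : ℝ) * Real.pi / m) : ℝ) : ℂ) * Complex.I))⁻¹)
     else
      (if c.val % 2 = 1 then
        Complex.exp (((β * Real.sin ((stmt11kOf c'.val : ℝ) * Real.pi / m) : ℝ) : ℂ) * Complex.I)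
       else -Complex.I * Complex.exp (((β * Real.sin ((stmt11kOf c'.val : ℝ) * Real.pi / m) : ℝ) : ℂ) * Complex.I)))
  else 0

lemma stmt11ec_inj {a b : ℕ} (h : stmt11ec a = stmt11ec b) : a = b := by
  unfold stmt11ec at h
  split at h <;> split at h <;> omega

lemma stmt11node_inj {m : ℕ} (hm0 : 0 < m) {a b : Fin m}
    (h : stmt11node m a.val = stmt11node m b.val) : a = b := by
  set ω : ℂ := Complex.exp ((Real.pi : ℂ) * Complex.I / (m : ℂ)) with hω
  set d : ℤ := stmt11ec a.val - stmt11ec b.val with hd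
  have hω0 : ω ≠ 0 := Complex.exp_ne_zero _
  have h1 : ω ^ d = 1 := by
    rw [hd, zpow_sub₀ hω0]
    rw [stmt11node, stmt11node, ← hω] at h
    rw [h, div_self (zpow_ne_zero _ hω0)]
  rw [hω, ← Complex.exp_int_mul, Complex.exp_eq_one_iff] at h1
  obtain ⟨n, hn⟩ := h1
  have hπ : (Real.pi : ℂ) ≠ 0 := Complex.ofReal_ne_zero.mpr Real.pi_ne_zero
  have hmC : (m : ℂ) ≠ 0 := Nat.cast_ne_zero.mpr hm0.ne'
  have hIpi : (Real.pi : ℂ) * Complex.I ≠ 0 := mul_ne_zero hπ Complex.I_ne_zero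
  have hdn : d = 2 * n * m := by
    field_simp at hn
    have h2 : (d : ℂ) * ((Real.pi : ℂ) * Complex.I) =
        ((2 * n * m : ℤ) : ℂ) * ((Real.pi : ℂ) * Complex.I) := by
      push_cast
      linear_combination ((Real.pi : ℂ) * Complex.I) * hn
    exact_mod_cast mul_right_cancel₀ hIpi h2
  have hba : -(m:ℤ) < stmt11ec a.val ∧ stmt11ec a.val < m := by
    have := a.isLt; unfold stmt11ec; split <;> constructor <;> omega
  have hbb : -(m:ℤ) < stmt11ec b.val ∧ stmt11ec b.val < m := by
    have := b.isLt; unfold stmt11ec; split <;> constructor <;> omega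
  have hn0 : n = 0 := by
    rcases lt_trichotomy n 0 with h' | h' | h'
    · exfalso; nlinarith [hba.1, hba.2, hbb.1, hbb.2, hd, Int.add_one_le_iff.mpr h',
        (Int.natCast_pos.mpr hm0 : (0:ℤ) < m)]
    · exact h'
    · exfalso; nlinarith [hba.1, hba.2, hbb.1, hbb.2, hd, Int.add_one_le_iff.mpr h',
        (Int.natCast_pos.mpr hm0 : (0:ℤ) < m)]
  have hd0 : d = 0 := by rw [hn0] at hdn; simpa using hdn
  have : stmt11ec a.val = stmt11ec b.val := by omega
  exact Fin.ext (stmt11ec_inj this)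

lemma stmt11L1 (z w : ℂ) :
    Complex.cos z * (Complex.exp (w * Complex.I))⁻¹ +
      Complex.sin z * (Complex.I * (Complex.exp (w * Complex.I))⁻¹) =
    Complex.exp ((z - w) * Complex.I) := by
  rw [← Complex.exp_neg, show (z - w) * Complex.I = z * Complex.I + -(w * Complex.I) by ring,
    Complex.exp_add, Complex.exp_mul_I]
  ring

lemma stmt11L2 (z w : ℂ) :
    Complex.cos z * Complex.exp (w * Complex.I) +
      Complex.sin z * (-Complex.I * Complex.exp (w * Complex.I)) =
    Complex.exp ((w - z) * Complex.I) := by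
  rw [show (w - z) * Complex.I = w * Complex.I + (-z) * Complex.I by ring, Complex.exp_add]
  simp only [Complex.exp_mul_I, Complex.cos_neg, Complex.sin_neg]
  ring

lemma stmt11det (m : ℕ) (hm0 : 0 < m) :
    (Matrix.of fun l c : Fin m => stmt11node m c.val ^ (l.val)).det ≠ 0 := by
  have : (Matrix.of fun l c : Fin m => stmt11node m c.val ^ (l.val)) =
      (Matrix.vandermonde fun c : Fin m => stmt11node m c.val)ᵀ := by
    ext l c; simp [Matrix.vandermonde]
  rw [this, Matrix.det_transpose, Matrix.det_vandermonde]
  refine Finset.prod_ne_zero_iff.mpr fun i _ => Finset.prod_ne_zero_iff.mpr fun j hj => ?_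
  rw [sub_ne_zero]
  exact fun h => absurd (stmt11node_inj hm0 h) (Finset.mem_Ioi.mp hj).ne'

lemma stmt11key (m : ℕ) (hm2 : m % 2 = 1) (β : ℝ)
    (B : Matrix (Fin m) (Fin m) ℝ)
    (hB : ∀ l c : Fin m, B l c =
      if c.val = 0 then (1 : ℝ)
      else if c.val % 2 = 1
      then Real.cos (β * Real.sin (((((c.val + 1) / 2 : ℕ)) : ℝ) * Real.pi / (m : ℝ)) +
        (l.val : ℝ) * ((((c.val + 1) / 2 : ℕ)) : ℝ) * Real.pi / (m : ℝ))
      else Real.sin (β * Real.sin ((((c.val / 2 : ℕ)) : ℝ) * Real.pi / (m : ℝ)) +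
        (l.val : ℝ) * (((c.val / 2 : ℕ)) : ℝ) * Real.pi / (m : ℝ))) :
    B.map Complex.ofReal * stmt11S m β =
      Matrix.of fun l c : Fin m => stmt11node m c.val ^ (l.val) := by
  have hm0 : 0 < m := by omega
  ext l c'
  rw [Matrix.mul_apply, Matrix.of_apply]
  by_cases hc0 : c'.val = 0
  · rw [Finset.sum_eq_single (⟨0, hm0⟩ : Fin m)]
    · rw [Matrix.map_apply, hB]
      simp [stmt11S, hc0, stmt11node, stmt11ec]
    · intro c _ hne
      have : c.val ≠ 0 := fun h => hne (Fin.ext h)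
      simp [stmt11S, hc0, this]
    · intro h; exact absurd (Finset.mem_univ _) h
  · set k := stmt11kOf c'.val with hk
    have hc'lt := c'.isLt
    have hk1 : 1 ≤ k := by rw [hk]; unfold stmt11kOf; split <;> omega
    have hk2 : 2 * k < m := by rw [hk]; unfold stmt11kOf; split <;> omega
    set a : Fin m := ⟨2*k-1, by omega⟩ with ha
    set b : Fin m := ⟨2*k, by omega⟩ with hb
    have hav : a.val = 2*k-1 := rfl
    have hbv : b.val = 2*k := rfl
    have hab : a ≠ b := by rw [Fin.ne_iff_vne, hav, hbv]; omega
    have hv : ∀ x ∈ Finset.univ, x ∉ ({a, b} : Finset (Fin m)) →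
        (B.map Complex.ofReal) l x * stmt11S m β x c' = 0 := by
      intro c _ hc
      have hcne : c ≠ a ∧ c ≠ b := by simpa using hc
      suffices h : stmt11S m β c c' = 0 by rw [h, mul_zero]
      simp only [stmt11S]
      rw [if_neg hc0]
      by_cases h0 : c.val = 0
      · rw [if_pos h0]
      · rw [if_neg h0]
        by_cases hkc : stmt11kOf c.val = stmt11kOf c'.val
        · exfalso
          have hcv : c.val = 2*k-1 ∨ c.val = 2*k := by
            rw [← hk] at hkc; unfold stmt11kOf at hkc; split at hkc <;> omega
          rcases hcv with h' | h'
          · exact hcne.1 (Fin.ext (by rw [h', hav]))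
          · exact hcne.2 (Fin.ext (by rw [h', hbv]))
        · rw [if_neg hkc]
    rw [← Finset.sum_subset (Finset.subset_univ {a, b}) hv, Finset.sum_pair hab]
    have ha0 : a.val ≠ 0 := by omega
    have ha1 : a.val % 2 = 1 := by omega
    have hak : (a.val + 1) / 2 = k := by omega
    have hb0 : b.val ≠ 0 := by omega
    have hb1 : ¬ (b.val % 2 = 1) := by omega
    have hbk : b.val / 2 = k := by omega
    have hkOfa : stmt11kOf a.val = stmt11kOf c'.val := by
      rw [← hk]; unfold stmt11kOf; rw [if_pos ha1, hak]
    have hkOfb : stmt11kOf b.val = stmt11kOf c'.val := by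
      rw [← hk]; unfold stmt11kOf; rw [if_neg hb1, hbk]
    rw [Matrix.map_apply, Matrix.map_apply, hB, hB]
    rw [if_neg ha0, if_pos ha1, hak, if_neg hb0, if_neg hb1, hbk]
    simp only [stmt11S]
    rw [if_neg hc0, if_neg hc0, if_neg ha0, if_neg hb0, if_pos hkOfa, if_pos hkOfb, ← hk]
    rcases Nat.even_or_odd c'.val with he | ho
    · have ho' : ¬ (c'.val % 2 = 1) := by rw [Nat.even_iff] at he; omega
      rw [if_neg ho', if_neg ho', if_pos ha1, if_neg hb1]
      rw [Complex.ofReal_cos, Complex.ofReal_sin, stmt11L2]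
      have hec : stmt11ec c'.val = -(k : ℤ) := by
        rw [hk]; unfold stmt11ec stmt11kOf; rw [if_neg ho', if_neg ho']
      rw [stmt11node, hec, ← Complex.exp_int_mul, ← Complex.exp_nat_mul]
      congr 1
      push_cast
      ring
    · have ho' : c'.val % 2 = 1 := Nat.odd_iff.mp ho
      rw [if_pos ho', if_pos ho', if_pos ha1, if_neg hb1]
      rw [Complex.ofReal_cos, Complex.ofReal_sin, stmt11L1]
      have hec : stmt11ec c'.val = (k : ℤ) := by
        rw [hk]; unfold stmt11ec stmt11kOf; rw [if_pos ho', if_pos ho']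
      rw [stmt11node, hec, ← Complex.exp_int_mul, ← Complex.exp_nat_mul]
      congr 1
      push_cast
      ring

end Stmt11Aux

/-- Invertibility of the boundary-condition matrix `B^o_{22}` of Lemma 3 (odd `m`):
with `ω_k = sin(kπ/m)` and `ζ_{k,ℓ} = βω_k + ℓkπ/m`, the `m × m` matrix whose row `ℓ` is
`(1, cos(ζ_{1,ℓ}), sin(ζ_{1,ℓ}), …, cos(ζ_{(m−1)/2,ℓ}), sin(ζ_{(m−1)/2,ℓ}))`
is invertible for every `β ∈ ℝ`. -/
theorem stmt_11 (m : ℕ) (hm : Odd m) (hm0 : 0 < m) (β : ℝ)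
    (B : Matrix (Fin m) (Fin m) ℝ)
    (hB : ∀ l c : Fin m, B l c =
      if c.val = 0 then (1 : ℝ)
      else if c.val % 2 = 1
      then Real.cos (β * Real.sin (((((c.val + 1) / 2 : ℕ)) : ℝ) * Real.pi / (m : ℝ)) +
        (l.val : ℝ) * ((((c.val + 1) / 2 : ℕ)) : ℝ) * Real.pi / (m : ℝ))
      else Real.sin (β * Real.sin ((((c.val / 2 : ℕ)) : ℝ) * Real.pi / (m : ℝ)) +
        (l.val : ℝ) * (((c.val / 2 : ℕ)) : ℝ) * Real.pi / (m : ℝ))) :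
    IsUnit B := by
  have hm2 : m % 2 = 1 := Nat.odd_iff.mp hm
  have key := stmt11key m hm2 β B hB
  have hdet : B.det ≠ 0 := by
    intro h0
    apply stmt11det m hm0
    rw [← key, Matrix.det_mul]
    have hmap : (B.map Complex.ofReal).det = ((B.det : ℝ) : ℂ) := by
      have := (RingHom.map_det Complex.ofRealHom B).symm
      rw [RingHom.mapMatrix_apply] at this
      exact this
    rw [hmap, h0]
    simp
  exact (Matrix.isUnit_iff_isUnit_det B).mpr (isUnit_iff_ne_zero.mpr hdet)
end

section
/- Let m ≥ 1 and N ≥ 2m+1 be integers, let D_m be the (N−m)×N real matrix with entries (D_m)_{j,ℓ} = (−1)^{m−(ℓ−j)} binom(m, ℓ−j) if 0 ≤ ℓ−j ≤ m and 0 otherwise, and let C be the N×N lower-triangular matrix with C_{ij} = 1 for j ≤ i and 0 otherwise. Fix k with 1 ≤ k ≤ m and set ω_j = (−1)^m (−1)^{2m−k−j} binom(2m−k, j) for j = 0, …, 2m−k. Then: (a) the last k rows of C^k D_m^T D_m are identically zero; and (b) for every row index i with m−k+1 ≤ i ≤ N−m, row i of C^k D_m^T D_m has the form (0, …, 0, ω_0,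 ω_1, …, ω_{2m−k}, 0, …, 0) with ω_0 in column i−m+k; i.e., (C^k D_m^T D_m)_{i, i−m+k+j} = ω_j for j = 0, …, 2m−k and all other entries of row i vanish. -/
open Finset

lemma neg_one_pow_parity (a b : ℕ) (h : a % 2 = b % 2) : ((-1:ℝ))^a = (-1)^b := by
  rcases Nat.even_or_odd a with h1 | h1
  · have h2 : Even b := Nat.even_iff.mpr (by rw [← h]; exact Nat.even_iff.mp h1)
    rw [h1.neg_one_pow, h2.neg_one_pow]
  · have h2 : Odd b := Nat.odd_iff.mpr (by rw [← h]; exact Nat.odd_iff.mp h1)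
    rw [h1.neg_one_pow, h2.neg_one_pow]

lemma neg_one_pow_sub (a b : ℕ) (h : b ≤ a) : ((-1:ℝ))^(a-b) = (-1)^a * (-1)^b := by
  rw [← pow_add]
  exact neg_one_pow_parity _ _ (by omega)

lemma alt_partial (n s : ℕ) (hn : 1 ≤ n) :
    ∑ t ∈ Finset.range (s+1), (-1:ℝ)^t * (n.choose t : ℝ) = (-1)^s * ((n-1).choose s : ℝ) := by
  induction s with
  | zero => simp
  | succ s ih =>
    rw [Finset.sum_range_succ, ih]
    have h : n.choose (s+1) = (n-1).choose s + (n-1).choose (s+1) := by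
      cases n with
      | zero => omega
      | succ n => simp [Nat.choose_succ_succ]
    rw [h]
    push_cast
    ring

lemma sum_window (N a b : ℕ) (hb : b < N) (f : ℕ → ℝ) :
    ∑ p ∈ Finset.range N, (if a ≤ p ∧ p ≤ b then f p else 0)
      = ∑ t ∈ Finset.range (b + 1 - a), f (a + t) := by
  have h1 : ∀ p ∈ Finset.range N, (if a ≤ p ∧ p ≤ b then f p else 0)
      = if p ∈ Finset.Icc a b then f p else 0 := by
    intro p _; simp [Finset.mem_Icc]
  rw [Finset.sum_congr rfl h1, Finset.sum_ite_mem]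
  have h2 : Finset.range N ∩ Finset.Icc a b = Finset.Icc a b :=
    Finset.inter_eq_right.mpr (fun x hx =>
      Finset.mem_range.mpr (lt_of_le_of_lt (Finset.mem_Icc.mp hx).2 hb))
  rw [h2, ← Finset.Ico_add_one_right_eq_Icc, Finset.sum_Ico_eq_sum_range]

lemma vand (μ m i l : ℕ) (hμi : μ ≤ i) (hil : i ≤ l + μ) :
    ∑ j ∈ Finset.range (min i l + 1), ((μ.choose (i - j) : ℝ) * (m.choose (l - j) : ℝ))
      = ((μ + m).choose (l + μ - i) : ℝ) := by
  have hstep1 : ∑ j ∈ Finset.range (min i l + 1), ((μ.choose (i - j) : ℝ) * (m.choose (l - j) : ℝ))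
      = ∑ j ∈ Finset.Ico (i - μ) (min i l + 1), ((μ.choose (i - j) : ℝ) * (m.choose (l - j) : ℝ)) := by
    rw [Finset.range_eq_Ico]
    refine (Finset.sum_subset (Finset.Ico_subset_Ico (Nat.zero_le _) le_rfl) ?_).symm
    intro x hx hx2
    simp only [Finset.mem_Ico] at hx hx2
    have : μ < i - x := by omega
    rw [Nat.choose_eq_zero_of_lt this]
    simp
  rw [hstep1, Finset.sum_Ico_eq_sum_range]
  have hlen : min i l + 1 - (i - μ) = min μ (l + μ - i) + 1 := by omega
  rw [hlen]
  have hstep2 : ∀ x ∈ Finset.range (min μ (l + μ - i) + 1),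
      ((μ.choose (i - (i - μ + x)) : ℝ) * (m.choose (l - (i - μ + x)) : ℝ))
        = ((μ.choose x : ℝ) * (m.choose ((l + μ - i) - x) : ℝ)) := by
    intro x hx
    simp only [Finset.mem_range] at hx
    have e1 : i - (i - μ + x) = μ - x := by omega
    have e2 : l - (i - μ + x) = (l + μ - i) - x := by omega
    rw [e1, e2, Nat.choose_symm (by omega)]
  rw [Finset.sum_congr rfl hstep2]
  have hstep3 : ∑ x ∈ Finset.range (min μ (l + μ - i) + 1), ((μ.choose x : ℝ) * (m.choose ((l + μ - i) - x) : ℝ))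
      = ∑ x ∈ Finset.range ((l + μ - i) + 1), ((μ.choose x : ℝ) * (m.choose ((l + μ - i) - x) : ℝ)) := by
    refine Finset.sum_subset (by intro x hx; simp only [Finset.mem_range] at *; omega) ?_
    intro x hx hx2
    simp only [Finset.mem_range] at hx hx2
    rw [Nat.choose_eq_zero_of_lt (show μ < x by omega)]
    simp
  rw [hstep3]
  have hv := Nat.add_choose_eq μ m (l + μ - i)
  rw [Finset.Nat.sum_antidiagonal_eq_sum_range_succ_mk] at hv
  rw [show ((μ + m).choose (l + μ - i) : ℝ)
      = ((∑ x ∈ Finset.range (l + μ - i + 1), μ.choose x * m.choose (l + μ - i - x) : ℕ) : ℝ) by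
    rw [← hv]]
  push_cast
  rfl

/-- Structural claim of Section 2 on `C^k D_m^T D_m` for `1 ≤ k ≤ m`: (a) its last `k`
rows vanish; (b) each row `i` with `m−k+1 ≤ i ≤ N−m` (1-based) has the form
`(0, …, 0, ω_0, …, ω_{2m−k}, 0, …, 0)` with `ω_j = (−1)^m (−1)^{2m−k−j} C(2m−k, j)` and
`ω_0` in column `i − m + k`. -/
theorem stmt_13 (m N k : ℕ) (hm : 1 ≤ m) (hN : 2 * m + 1 ≤ N) (hk1 : 1 ≤ k) (hk2 : k ≤ m)
    (D : Matrix (Fin (N - m)) (Fin N) ℝ)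
    (hD : ∀ (j : Fin (N - m)) (l : Fin N), D j l =
      if j.val ≤ l.val ∧ l.val ≤ j.val + m
      then (-1 : ℝ) ^ (m - (l.val - j.val)) * (Nat.choose m (l.val - j.val) : ℝ)
      else 0)
    (C : Matrix (Fin N) (Fin N) ℝ)
    (hC : ∀ i j : Fin N, C i j = if j.val ≤ i.val then (1 : ℝ) else 0)
    (ω : ℕ → ℝ)
    (hω : ∀ j : ℕ, ω j =
      (-1 : ℝ) ^ m * (-1 : ℝ) ^ (2 * m - k - j) * (Nat.choose (2 * m - k) j : ℝ))
    (M : Matrix (Fin N) (Fin N) ℝ) (hM : M = C ^ k * D.transpose * D) :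
    (∀ i : Fin N, N - k ≤ i.val → ∀ l : Fin N, M i l = 0) ∧
    (∀ i : Fin N, m - k + 1 ≤ i.val + 1 → i.val + 1 ≤ N - m →
      (∀ j : ℕ, j ≤ 2 * m - k → ∀ hc : i.val + k + j - m < N,
          M i ⟨i.val + k + j - m, hc⟩ = ω j) ∧
      (∀ l : Fin N, (∀ j : ℕ, j ≤ 2 * m - k → l.val ≠ i.val + k + j - m) → M i l = 0)) := by
  -- key structural lemma : C^r * Dᵀ
  have hCkD : ∀ r, r ≤ k → ∀ (i : Fin N) (j : Fin (N - m)),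
      (C ^ r * D.transpose) i j =
        (-1:ℝ)^r * (if j.val ≤ i.val ∧ i.val ≤ j.val + (m - r)
          then (-1:ℝ)^((m - r) - (i.val - j.val)) * ((m - r).choose (i.val - j.val) : ℝ) else 0) := by
    intro r
    induction r with
    | zero =>
      intro _ i j
      rw [pow_zero, Matrix.one_mul, Matrix.transpose_apply, hD j i]
      simp
    | succ r ih =>
      intro hr i j
      have hrk : r ≤ k := by omega
      have hμr : 1 ≤ m - r := by omega
      rw [pow_succ', Matrix.mul_assoc, Matrix.mul_apply]
      have hterm : ∀ p : Fin N, C i p * ((C ^ r * D.transpose) p j)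
          = (fun q : ℕ => if j.val ≤ q ∧ q ≤ min i.val (j.val + (m - r))
              then (-1:ℝ)^r * ((-1:ℝ)^((m - r) - (q - j.val)) * ((m - r).choose (q - j.val) : ℝ))
              else 0) p.val := by
        intro p
        dsimp only
        rw [hC, ih hrk p j]
        split_ifs with h1 h2 h3 <;> first | ring1 | (exfalso; omega)
      have hsum : ∑ p : Fin N, C i p * ((C ^ r * D.transpose) p j)
          = ∑ t ∈ Finset.range (min i.val (j.val + (m - r)) + 1 - j.val),
              (-1:ℝ)^r * ((-1:ℝ)^((m - r) - t) * ((m - r).choose t : ℝ)) := by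
        rw [Finset.sum_congr rfl (fun p _ => hterm p),
          Fin.sum_univ_eq_sum_range
            (fun q : ℕ => if j.val ≤ q ∧ q ≤ min i.val (j.val + (m - r))
              then (-1:ℝ)^r * ((-1:ℝ)^((m - r) - (q - j.val)) * ((m - r).choose (q - j.val) : ℝ))
              else 0) N,
          sum_window N j.val _ (by have := i.isLt; omega)]
        refine Finset.sum_congr rfl (fun t _ => ?_)
        rw [Nat.add_sub_cancel_left]
      rw [hsum]
      rcases Nat.lt_or_ge i.val j.val with hij | hij
      · rw [show min i.val (j.val + (m - r)) + 1 - j.val = 0 by omega]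
        rw [if_neg (by omega : ¬(j.val ≤ i.val ∧ i.val ≤ j.val + (m - (r+1))))]
        simp
      · rw [show min i.val (j.val + (m - r)) + 1 - j.val = min (i.val - j.val) (m - r) + 1 by omega]
        have hterm2 : ∀ t ∈ Finset.range (min (i.val - j.val) (m - r) + 1),
            (-1:ℝ)^r * ((-1:ℝ)^((m - r) - t) * ((m - r).choose t : ℝ))
              = ((-1:ℝ)^r * (-1:ℝ)^(m - r)) * ((-1:ℝ)^t * ((m - r).choose t : ℝ)) := by
          intro t ht
          simp only [Finset.mem_range] at ht
          rw [neg_one_pow_sub _ _ (by omega)]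
          ring
        rw [Finset.sum_congr rfl hterm2, ← Finset.mul_sum, alt_partial _ _ hμr]
        by_cases hcnd : i.val ≤ j.val + (m - (r+1))
        · rw [if_pos ⟨hij, hcnd⟩]
          rw [show min (i.val - j.val) (m - r) = i.val - j.val by omega]
          rw [show m - (r+1) = (m - r) - 1 by omega]
          rw [neg_one_pow_sub ((m - r) - 1) (i.val - j.val) (by omega)]
          have hsign : (-1:ℝ)^r * (-1:ℝ)^(m - r) = (-1:ℝ)^(r+1) * (-1:ℝ)^((m - r) - 1) := by
            rw [← pow_add, ← pow_add]; exact neg_one_pow_parity _ _ (by omega)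
          linear_combination ((-1:ℝ)^(i.val - j.val) * (((m - r) - 1).choose (i.val - j.val) : ℝ)) * hsign
        · rw [if_neg (fun h => hcnd h.2)]
          rw [show min (i.val - j.val) (m - r) = m - r by omega]
          rw [Nat.choose_eq_zero_of_lt (by omega : (m - r) - 1 < m - r)]
          simp
  have key := hCkD k le_rfl
  constructor
  · -- part (a)
    intro i hi l
    rw [hM, Matrix.mul_apply]
    refine Finset.sum_eq_zero (fun j _ => ?_)
    rw [key i j]
    have hcf : ¬(j.val ≤ i.val ∧ i.val ≤ j.val + (m - k)) := by
      have hj := j.isLt; omega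
    rw [if_neg hcf]
    ring
  · -- part (b)
    intro i hi1 hi2
    have hiμ : m - k ≤ i.val := by omega
    have hiN : i.val < N - m := by omega
    have hval : ∀ (l : Fin N), i.val ≤ l.val + (m - k) →
        M i l = (-1:ℝ)^(k + ((m - k) + m + (i.val + l.val)))
          * (((m - k) + m).choose (l.val + (m - k) - i.val) : ℝ) := by
      intro l hl1
      rw [hM, Matrix.mul_apply]
      have hterm : ∀ j : Fin (N - m), (C ^ k * D.transpose) i j * D j l
          = (fun q : ℕ => if (q ≤ i.val ∧ i.val ≤ q + (m - k)) ∧ (q ≤ l.val ∧ l.val ≤ q + m)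
              then ((-1:ℝ)^k * ((-1:ℝ)^((m - k) - (i.val - q)) * ((m - k).choose (i.val - q) : ℝ)))
                   * ((-1:ℝ)^(m - (l.val - q)) * (m.choose (l.val - q) : ℝ))
              else 0) j.val := by
        intro j
        dsimp only
        rw [key i j, hD j l]
        split_ifs with h1 h2 h3 <;> first | ring1 | (exfalso; omega)
      rw [Finset.sum_congr rfl (fun j _ => hterm j),
        Fin.sum_univ_eq_sum_range
          (fun q : ℕ => if (q ≤ i.val ∧ i.val ≤ q + (m - k)) ∧ (q ≤ l.val ∧ l.val ≤ q + m)
              then ((-1:ℝ)^k * ((-1:ℝ)^((m - k) - (i.val - q)) * ((m - k).choose (i.val - q) : ℝ)))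
                   * ((-1:ℝ)^(m - (l.val - q)) * (m.choose (l.val - q) : ℝ))
              else 0) (N - m)]
      have hres : ∑ q ∈ Finset.range (N - m),
          (if (q ≤ i.val ∧ i.val ≤ q + (m - k)) ∧ (q ≤ l.val ∧ l.val ≤ q + m)
            then ((-1:ℝ)^k * ((-1:ℝ)^((m - k) - (i.val - q)) * ((m - k).choose (i.val - q) : ℝ)))
                 * ((-1:ℝ)^(m - (l.val - q)) * (m.choose (l.val - q) : ℝ))
            else 0)
          = ∑ q ∈ Finset.range (min i.val l.val + 1),
            (if (q ≤ i.val ∧ i.val ≤ q + (m - k)) ∧ (q ≤ l.val ∧ l.val ≤ q + m)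
              then ((-1:ℝ)^k * ((-1:ℝ)^((m - k) - (i.val - q)) * ((m - k).choose (i.val - q) : ℝ)))
                   * ((-1:ℝ)^(m - (l.val - q)) * (m.choose (l.val - q) : ℝ))
              else 0) := by
        refine (Finset.sum_subset (by intro x hx; simp only [Finset.mem_range] at *; omega) ?_).symm
        intro x hx hx2
        simp only [Finset.mem_range] at hx hx2
        rw [if_neg (by omega)]
      rw [hres]
      have hcongr : ∀ q ∈ Finset.range (min i.val l.val + 1),
          (if (q ≤ i.val ∧ i.val ≤ q + (m - k)) ∧ (q ≤ l.val ∧ l.val ≤ q + m)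
            then ((-1:ℝ)^k * ((-1:ℝ)^((m - k) - (i.val - q)) * ((m - k).choose (i.val - q) : ℝ)))
                 * ((-1:ℝ)^(m - (l.val - q)) * (m.choose (l.val - q) : ℝ))
            else 0)
          = ((-1:ℝ)^k * (-1:ℝ)^((m - k) + m + (i.val + l.val)))
              * (((m - k).choose (i.val - q) : ℝ) * (m.choose (l.val - q) : ℝ)) := by
        intro q hq
        simp only [Finset.mem_range] at hq
        by_cases hcnd : (q ≤ i.val ∧ i.val ≤ q + (m - k)) ∧ (q ≤ l.val ∧ l.val ≤ q + m)
        · rw [if_pos hcnd]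
          rw [neg_one_pow_sub (m - k) (i.val - q) (by omega),
            neg_one_pow_sub m (l.val - q) (by omega),
            neg_one_pow_sub i.val q (by omega),
            neg_one_pow_sub l.val q (by omega)]
          have hp : ((-1:ℝ)^q) * ((-1:ℝ)^q) = 1 := by
            rw [← pow_add]; exact Even.neg_one_pow ⟨q, rfl⟩
          rw [show (-1:ℝ)^((m - k) + m + (i.val + l.val))
              = (-1:ℝ)^(m-k) * (-1:ℝ)^m * ((-1:ℝ)^i.val * (-1:ℝ)^l.val) by
            rw [pow_add, pow_add, pow_add]]
          linear_combination ((-1:ℝ)^k * (-1:ℝ)^(m-k) * (-1:ℝ)^m * (-1:ℝ)^i.val * (-1:ℝ)^l.val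
            * (((m - k).choose (i.val - q) : ℝ)) * ((m.choose (l.val - q) : ℝ))) * hp
        · rw [if_neg hcnd]
          rcases (by omega : m - k < i.val - q ∨ m < l.val - q) with hcc | hcc
          · rw [Nat.choose_eq_zero_of_lt hcc]; push_cast; ring
          · rw [Nat.choose_eq_zero_of_lt hcc]; push_cast; ring
      rw [Finset.sum_congr rfl hcongr, ← Finset.mul_sum, vand (m - k) m i.val l.val hiμ hl1,
        ← pow_add]
    constructor
    · -- values
      intro j0 hj0 hc
      rw [hval ⟨i.val + k + j0 - m, hc⟩ (by simp only; omega)]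
      simp only
      rw [show i.val + k + j0 - m + (m - k) - i.val = j0 by omega,
        show (m - k) + m = 2 * m - k by omega, hω j0,
        show (-1:ℝ)^m * (-1:ℝ)^(2*m-k-j0) = (-1:ℝ)^(m + (2*m-k-j0)) from (pow_add _ _ _).symm]
      exact congrArg (· * _) (neg_one_pow_parity _ _ (by omega))
    · -- zeros
      intro l hl
      have hcase : i.val + m < l.val ∨ l.val + (m - k) < i.val := by
        by_contra hcon
        push_neg at hcon
        exact hl (l.val + m - (i.val + k)) (by omega) (by omega)
      rw [hM, Matrix.mul_apply]
      refine Finset.sum_eq_zero (fun j _ => ?_)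
      rw [key i j, hD j l]
      by_cases h1 : j.val ≤ i.val ∧ i.val ≤ j.val + (m - k)
      · by_cases h2 : j.val ≤ l.val ∧ l.val ≤ j.val + m
        · exfalso; omega
        · rw [if_neg h2]; ring
      · rw [if_neg h1]; ring
end

section
/- Let m ≥ 1 and N ≥ 2m+1 be integers, let D_m be the (N−m)×N real matrix with entries (D_m)_{j,ℓ} = (−1)^{m−(ℓ−j)} binom(m, ℓ−j) if 0 ≤ ℓ−j ≤ m and 0 otherwise, and let C be the N×N lower-triangular matrix with C_{ij} = 1 for j ≤ i and 0 otherwise. Then for every b ∈ ℝ^N, C^m D_m^T D_m b = (−1)^m (Δ^m b_{m+1}, Δ^m b_{m+2}, …, Δ^m b_N, 0, …, 0)^T, where Δ^m b_k = Σ_{j=0}^m (−1)^{m−j} binom(m,j) b_{k−m+j}; that is, (C^m D_m^T D_m b)_i = (−1)^m Δ^m b_{m+i} for 1 ≤ i ≤ N−m and (C^m D_m^T D_m b)_i = 0 for N−m < i ≤ N. -/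
open Finset fwdDiff

private lemma neg_one_pow_sub_real (m d : ℕ) (h : d ≤ m) :
    ((-1 : ℝ)) ^ (m - d) = (-1) ^ m * (-1) ^ d := by
  have h1 : (-1 : ℝ) ^ m = (-1) ^ (m - d) * (-1) ^ d := by
    rw [← pow_add]; congr 1; omega
  rw [h1, mul_assoc, ← pow_add]
  have h2 : d + d = 2 * d := by ring
  rw [h2, pow_mul]
  norm_num

private lemma sum_reindex_add (Nn j m : ℕ) (hj : j + m < Nn) (g : ℕ → ℝ) :
    ∑ l ∈ Finset.range Nn, (if j ≤ l ∧ l ≤ j + m then g (l - j) else 0)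
      = ∑ k ∈ Finset.range (m + 1), g k := by
  rw [← Finset.sum_filter]
  refine Finset.sum_nbij' (fun l => l - j) (fun k => j + k) ?_ ?_ ?_ ?_ ?_
  · intro a ha; simp only [Finset.mem_filter, Finset.mem_range] at ha ⊢; omega
  · intro a ha; simp only [Finset.mem_filter, Finset.mem_range] at ha ⊢; omega
  · intro a ha; simp only [Finset.mem_filter, Finset.mem_range] at ha; omega
  · intro a ha; simp only [Finset.mem_range] at ha; omega
  · intro a ha; rfl

private lemma sum_reindex_sub (A B L : ℕ) (f : ℕ → ℝ) :
    ∑ j ∈ Finset.range A, (if j ≤ L ∧ L ≤ j + B then f (L - j) else 0)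
      = ∑ d ∈ Finset.range (B + 1), (if d ≤ L ∧ L - d < A then f d else 0) := by
  rw [← Finset.sum_filter, ← Finset.sum_filter]
  refine Finset.sum_nbij' (fun j => L - j) (fun d => L - d) ?_ ?_ ?_ ?_ ?_
  · intro a ha; simp only [Finset.mem_filter, Finset.mem_range] at ha ⊢; omega
  · intro a ha; simp only [Finset.mem_filter, Finset.mem_range] at ha ⊢; omega
  · intro a ha; simp only [Finset.mem_filter, Finset.mem_range] at ha; omega
  · intro a ha; simp only [Finset.mem_filter, Finset.mem_range] at ha; omega
  · intro a ha; rfl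

private lemma cumsum_mulVec {N : ℕ} (C : Matrix (Fin N) (Fin N) ℝ)
    (hC : ∀ i j : Fin N, C i j = if j.val ≤ i.val then (1 : ℝ) else 0)
    (s w : Fin N → ℝ)
    (hs : ∀ i : Fin N, s i = w i - (if h : 1 ≤ i.val then w ⟨i.val - 1, by omega⟩ else 0)) :
    C.mulVec s = w := by
  classical
  funext i
  set G : ℕ → ℝ := fun k => if h : 0 < k ∧ k ≤ N then w ⟨k - 1, by omega⟩ else 0 with hGdef
  have key : ∀ j : Fin N, s j = G (j.val + 1) - G j.val := by
    intro j
    rw [hs]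
    have h1 : G (j.val + 1) = w j := by
      simp only [hGdef]
      rw [dif_pos ⟨Nat.succ_pos _, j.isLt⟩]
      exact congrArg w (Fin.ext (by simp))
    by_cases h2 : 1 ≤ j.val
    · rw [dif_pos h2, h1]
      simp only [hGdef]
      rw [dif_pos ⟨h2, by omega⟩]
    · rw [dif_neg h2, h1]
      simp only [hGdef]
      rw [dif_neg (by omega)]
  have hmv : C.mulVec s i = ∑ j ∈ Finset.range N, (if j ≤ i.val then G (j + 1) - G j else 0) := by
    rw [Matrix.mulVec, dotProduct]
    rw [← Fin.sum_univ_eq_sum_range (fun j => if j ≤ i.val then G (j + 1) - G j else 0) N]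
    refine Finset.sum_congr rfl (fun j _ => ?_)
    rw [hC, key]
    split_ifs <;> simp
  rw [hmv]
  have hsub : ∑ j ∈ Finset.range N, (if j ≤ i.val then G (j + 1) - G j else 0)
      = ∑ j ∈ Finset.range (i.val + 1), (if j ≤ i.val then G (j + 1) - G j else 0) := by
    refine (Finset.sum_subset
      (by intro x hx; simp only [Finset.mem_range] at hx ⊢; have := i.isLt; omega) ?_).symm
    intro x _ hx
    simp only [Finset.mem_range] at hx
    rw [if_neg (by omega)]
  rw [hsub]
  have heq : ∑ j ∈ Finset.range (i.val + 1), (if j ≤ i.val then G (j + 1) - G j else 0)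
      = ∑ j ∈ Finset.range (i.val + 1), (G (j + 1) - G j) := by
    refine Finset.sum_congr rfl (fun j hj => ?_)
    simp only [Finset.mem_range] at hj
    rw [if_pos (by omega)]
  rw [heq, Finset.sum_range_sub G (i.val + 1)]
  have hG0 : G 0 = 0 := by simp only [hGdef]; rw [dif_neg (by omega)]
  have hGi : G (i.val + 1) = w i := by
    simp only [hGdef]; rw [dif_pos ⟨Nat.succ_pos _, i.isLt⟩]
    exact congrArg w (Fin.ext (by simp))
  rw [hG0, hGi, sub_zero]

private lemma pow_cumsum_mulVec {N : ℕ} (C : Matrix (Fin N) (Fin N) ℝ) (r : ℕ)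
    (ts : ℕ → Fin N → ℝ) (hstep : ∀ k, C.mulVec (ts (k + 1)) = ts k) :
    (C ^ r).mulVec (ts r) = ts 0 := by
  induction r with
  | zero => simp [Matrix.one_mulVec]
  | succ r ih =>
    rw [pow_succ, ← Matrix.mulVec_mulVec, hstep, ih]

/-- Identity (equ:dd) of Section 2: `C^m D_m^T D_m b` equals
`(−1)^m (Δ^m b_{m+1}, …, Δ^m b_N, 0, …, 0)^T`, where
`Δ^m b_k = Σ_{j=0}^m (−1)^{m−j} C(m,j) b_{k−m+j}`. -/
theorem stmt_14 (m N : ℕ) (hm : 1 ≤ m) (hN : 2 * m + 1 ≤ N)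
    (D : Matrix (Fin (N - m)) (Fin N) ℝ)
    (hD : ∀ (j : Fin (N - m)) (l : Fin N), D j l =
      if j.val ≤ l.val ∧ l.val ≤ j.val + m
      then (-1 : ℝ) ^ (m - (l.val - j.val)) * (Nat.choose m (l.val - j.val) : ℝ)
      else 0)
    (C : Matrix (Fin N) (Fin N) ℝ)
    (hC : ∀ i j : Fin N, C i j = if j.val ≤ i.val then (1 : ℝ) else 0)
    (b : Fin N → ℝ) :
    (∀ (i : Fin N) (_hi : i.val + 1 ≤ N - m),
      ((C ^ m * D.transpose * D).mulVec b) i =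
        (-1 : ℝ) ^ m * ∑ j : Fin (m + 1),
          (-1 : ℝ) ^ (m - j.val) * (Nat.choose m j.val : ℝ) *
            b ⟨i.val + j.val, by have := j.isLt; omega⟩) ∧
    (∀ i : Fin N, N - m < i.val + 1 → ((C ^ m * D.transpose * D).mulVec b) i = 0) := by
  classical
  set u : Fin (N - m) → ℝ := D.mulVec b with hu
  set ue : ℕ → ℝ := fun k => if h : k < N - m then u ⟨k, h⟩ else 0 with hue
  set q : ℤ → ℝ := fun k => if 0 ≤ k then (-1 : ℝ) ^ m * ue k.toNat else 0 with hq
  -- sum formula for iterated backward differences of q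
  have hsum : ∀ (r : ℕ) (k : ℤ), (Δ_[(-1 : ℤ)])^[r] q k
      = ∑ j ∈ Finset.range (r + 1), (-1 : ℝ) ^ (r - j) * (r.choose j : ℝ) * q (k - j) := by
    intro r k
    rw [fwdDiff_iter_eq_sum_shift]
    refine Finset.sum_congr rfl (fun j hj => ?_)
    have harg : k + j • (-1 : ℤ) = k - j := by rw [nsmul_eq_mul]; ring
    rw [harg, zsmul_eq_mul]
    push_cast
    ring
  -- vanishing for negative arguments
  have hvan : ∀ (r : ℕ) (k : ℤ), k < 0 → (Δ_[(-1 : ℤ)])^[r] q k = 0 := by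
    intro r k hk
    rw [hsum]
    refine Finset.sum_eq_zero (fun j _ => ?_)
    have hz : q (k - j) = 0 := by simp only [hq]; rw [if_neg (by omega)]
    rw [hz, mul_zero]
  -- the family ts
  set ts : ℕ → Fin N → ℝ := fun r i => (-1 : ℝ) ^ r * (Δ_[(-1 : ℤ)])^[r] q i.val with hts
  have hstep : ∀ r, C.mulVec (ts (r + 1)) = ts r := by
    intro r
    refine cumsum_mulVec C hC _ _ (fun i => ?_)
    simp only [hts]
    rw [Function.iterate_succ_apply']
    have hfd : Δ_[(-1 : ℤ)] ((Δ_[(-1 : ℤ)])^[r] q) (i.val : ℤ)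
        = (Δ_[(-1 : ℤ)])^[r] q ((i.val : ℤ) - 1) - (Δ_[(-1 : ℤ)])^[r] q (i.val : ℤ) := by
      simp only [fwdDiff]
      rw [← sub_eq_add_neg]
    rw [hfd]
    by_cases h2 : 1 ≤ i.val
    · rw [dif_pos h2]
      have harg : ((i.val : ℤ) - 1) = ((i.val - 1 : ℕ) : ℤ) := by omega
      rw [harg, pow_succ]
      ring
    · rw [dif_neg h2]
      have harg : ((i.val : ℤ) - 1) = (-1 : ℤ) := by omega
      rw [harg, hvan r (-1) (by omega), pow_succ]
      ring
  have hmain : (C ^ m * D.transpose * D).mulVec b = ts 0 := by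
    have h1 : (C ^ m * D.transpose * D).mulVec b = (C ^ m).mulVec (D.transpose.mulVec u) := by
      rw [hu, Matrix.mulVec_mulVec, Matrix.mulVec_mulVec]
    rw [h1]
    have h2 : D.transpose.mulVec u = ts m := by
      funext l
      have lhs1 : D.transpose.mulVec u l
          = ∑ j ∈ Finset.range (N - m), (if j ≤ l.val ∧ l.val ≤ j + m
              then (-1 : ℝ) ^ (m - (l.val - j)) * (m.choose (l.val - j) : ℝ) * ue (l.val - (l.val - j))
              else 0) := by
        rw [Matrix.mulVec, dotProduct]
        rw [← Fin.sum_univ_eq_sum_range (fun j => if j ≤ l.val ∧ l.val ≤ j + m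
              then (-1 : ℝ) ^ (m - (l.val - j)) * (m.choose (l.val - j) : ℝ) * ue (l.val - (l.val - j))
              else 0) (N - m)]
        refine Finset.sum_congr rfl (fun j _ => ?_)
        rw [Matrix.transpose_apply, hD]
        split_ifs with hcond
        · have hj : l.val - (l.val - j.val) = j.val := by omega
          rw [hj]
          simp only [hue]
          rw [dif_pos j.isLt]
        · rw [zero_mul]
      rw [lhs1]
      rw [sum_reindex_sub (N - m) m l.val
        (fun d => (-1 : ℝ) ^ (m - d) * (m.choose d : ℝ) * ue (l.val - d))]
      simp only [hts]
      rw [hsum, Finset.mul_sum]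
      refine Finset.sum_congr rfl (fun d hd => ?_)
      simp only [Finset.mem_range] at hd
      have hdm : d ≤ m := by omega
      by_cases hdl : d ≤ l.val
      · have hq1 : q ((l.val : ℤ) - d) = (-1 : ℝ) ^ m * ue (l.val - d) := by
          simp only [hq]
          rw [if_pos (by omega)]
          congr 2
          omega
        rw [hq1]
        by_cases hA : l.val - d < N - m
        · rw [if_pos ⟨hdl, hA⟩]
          rw [neg_one_pow_sub_real m d hdm]
          have hsq : (-1 : ℝ) ^ m * (-1 : ℝ) ^ m = 1 := by
            rw [← pow_add]
            have h2m : m + m = 2 * m := by ring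
            rw [h2m, pow_mul]; norm_num
          linear_combination (-((-1 : ℝ) ^ m * (-1 : ℝ) ^ d * (m.choose d : ℝ) * ue (l.val - d))) * hsq
        · rw [if_neg (by tauto)]
          have hz : ue (l.val - d) = 0 := by
            simp only [hue]; rw [dif_neg hA]
          rw [hz]; ring
      · rw [if_neg (by tauto)]
        have hz : q ((l.val : ℤ) - d) = 0 := by simp only [hq]; rw [if_neg (by omega)]
        rw [hz]; ring
    rw [h2]
    exact pow_cumsum_mulVec C m ts hstep
  -- extension of b and formula for u
  set be : ℕ → ℝ := fun k => if h : k < N then b ⟨k, h⟩ else 0 with hbe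
  have hufor : ∀ j : Fin (N - m), u j = ∑ k ∈ Finset.range (m + 1),
      (-1 : ℝ) ^ (m - k) * (m.choose k : ℝ) * be (j.val + k) := by
    intro j
    have hjm : j.val + m < N := by have := j.isLt; omega
    have lhs1 : u j = ∑ l ∈ Finset.range N, (if j.val ≤ l ∧ l ≤ j.val + m
        then (-1 : ℝ) ^ (m - (l - j.val)) * (m.choose (l - j.val) : ℝ) * be (j.val + (l - j.val))
        else 0) := by
      rw [hu, Matrix.mulVec, dotProduct]
      rw [← Fin.sum_univ_eq_sum_range (fun l => if j.val ≤ l ∧ l ≤ j.val + m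
        then (-1 : ℝ) ^ (m - (l - j.val)) * (m.choose (l - j.val) : ℝ) * be (j.val + (l - j.val))
        else 0) N]
      refine Finset.sum_congr rfl (fun l _ => ?_)
      rw [hD]
      split_ifs with hcond
      · have hl : j.val + (l.val - j.val) = l.val := by omega
        rw [hl]
        simp only [hbe]
        rw [dif_pos l.isLt]
      · rw [zero_mul]
    rw [lhs1, sum_reindex_add N j.val m hjm
      (fun k => (-1 : ℝ) ^ (m - k) * (m.choose k : ℝ) * be (j.val + k))]
  have hts0 : ∀ i : Fin N, ts 0 i = q i.val := by
    intro i
    simp only [hts, pow_zero, one_mul, Function.iterate_zero, id]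
  constructor
  · intro i hi
    rw [hmain, hts0]
    have hq1 : q (i.val : ℤ) = (-1 : ℝ) ^ m * ue i.val := by
      simp only [hq]
      rw [if_pos (by omega)]
      congr 2
    rw [hq1]
    have hue1 : ue i.val = u ⟨i.val, by omega⟩ := by
      simp only [hue]
      rw [dif_pos (by omega : i.val < N - m)]
    rw [hue1, hufor]
    congr 1
    rw [← Fin.sum_univ_eq_sum_range
      (fun k => (-1 : ℝ) ^ (m - k) * (m.choose k : ℝ) * be (i.val + k)) (m + 1)]
    refine Finset.sum_congr rfl (fun k _ => ?_)
    congr 1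
    simp only [hbe]
    rw [dif_pos (by have := k.isLt; omega : i.val + k.val < N)]
  · intro i hi
    rw [hmain, hts0]
    simp only [hq]
    rw [if_pos (by omega)]
    have hz : ue ((i.val : ℤ)).toNat = 0 := by
      simp only [hue]
      rw [dif_neg (by omega)]
    rw [hz, mul_zero]
end

section
/- Define K : ℝ → ℝ by K(t) = (1/(2√2)) e^{−|t|/√2} ( cos(|t|/√2) + sin(|t|/√2) ). Then ∫_{−∞}^{∞} K(t) dt = 1 and ∫_{−∞}^{∞} t^k K(t) dt = 0 for k = 1, 2, 3; that is, K is a kernel of order 4. -/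
open Real Filter MeasureTheory Set Topology

private lemma pow_mul_exp_tendsto (k : ℕ) {s : ℝ} (hs : 0 < s) :
    Tendsto (fun t : ℝ => t ^ k * Real.exp (-t / s)) atTop (𝓝 0) := by
  have h1 : Tendsto (fun t : ℝ => t / s) atTop atTop :=
    tendsto_id.atTop_div_const hs
  have h2 := ((tendsto_pow_mul_exp_neg_atTop_nhds_zero k).comp h1).const_mul (s ^ k)
  rw [mul_zero] at h2
  refine h2.congr fun t => ?_
  simp only [Function.comp]
  rw [neg_div, div_pow]
  field_simp

private lemma aux_int0 {s : ℝ} (hs : 0 < s) :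
    ∫ t in Ioi (0:ℝ), Real.exp (-t / s) * (Real.cos (t / s) + Real.sin (t / s)) = s := by
  have hsne : s ≠ 0 := hs.ne'
  set F : ℝ → ℝ := fun t => -(s * (Real.exp (-t / s) * Real.cos (t / s))) with hF
  have hderiv : ∀ t ∈ Ici (0:ℝ), HasDerivAt F
      (Real.exp (-t / s) * (Real.cos (t / s) + Real.sin (t / s))) t := by
    intro t _
    have h1 : HasDerivAt (fun t : ℝ => -t / s) (-1 / s) t :=
      (hasDerivAt_id t).neg.div_const s
    have h2 : HasDerivAt (fun t : ℝ => t / s) (1 / s) t :=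
      (hasDerivAt_id t).div_const s
    have he : HasDerivAt (fun t : ℝ => Real.exp (-t / s))
        (Real.exp (-t / s) * (-1 / s)) t := h1.exp
    have hc : HasDerivAt (fun t : ℝ => Real.cos (t / s))
        (-Real.sin (t / s) * (1 / s)) t := h2.cos
    have := ((he.mul hc).const_mul s).neg
    refine this.congr_deriv ?_
    field_simp
    ring
  have hlim : Tendsto F atTop (𝓝 0) := by
    apply squeeze_zero_norm (a := fun t => s * Real.exp (-t / s))
    · intro t
      rw [hF]
      simp only [norm_neg, norm_mul, Real.norm_eq_abs]
      rw [abs_of_pos hs, abs_of_pos (Real.exp_pos _)]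
      have h1 : |Real.cos (t / s)| ≤ 1 := Real.abs_cos_le_one _
      have h2 := (Real.exp_pos (-t / s)).le
      nlinarith [mul_le_mul_of_nonneg_left (mul_le_mul_of_nonneg_left h1 h2) hs.le]
    · have := (pow_mul_exp_tendsto 0 hs).const_mul s
      rw [mul_zero] at this
      refine this.congr fun t => by simp
  have hint : IntegrableOn (fun t : ℝ =>
      Real.exp (-t / s) * (Real.cos (t / s) + Real.sin (t / s))) (Ioi 0) := by
    apply integrable_of_isBigO_exp_neg (b := 1 / s) (by positivity)
    · fun_prop
    · rw [Asymptotics.isBigO_iff]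
      refine ⟨2, Eventually.of_forall fun t => ?_⟩
      simp only [Real.norm_eq_abs, abs_mul, Real.abs_exp]
      rw [show -(1 / s) * t = -t / s by ring]
      have h1 : |Real.cos (t / s) + Real.sin (t / s)| ≤ 2 := by
        calc |Real.cos (t / s) + Real.sin (t / s)|
            ≤ |Real.cos (t / s)| + |Real.sin (t / s)| := abs_add_le _ _
          _ ≤ 1 + 1 := add_le_add (Real.abs_cos_le_one _) (Real.abs_sin_le_one _)
          _ = 2 := by norm_num
      nlinarith [Real.exp_pos (-t / s)]
  rw [integral_Ioi_of_hasDerivAt_of_tendsto' hderiv hint hlim]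
  simp [hF]

private lemma aux_int2 {s : ℝ} (hs : 0 < s) :
    ∫ t in Ioi (0:ℝ), t ^ 2 *
      (Real.exp (-t / s) * (Real.cos (t / s) + Real.sin (t / s))) = 0 := by
  have hsne : s ≠ 0 := hs.ne'
  set F : ℝ → ℝ := fun t => Real.exp (-t / s) *
      ((-s * t ^ 2 - s ^ 2 * t) * Real.cos (t / s)
        + (s ^ 2 * t + s ^ 3) * Real.sin (t / s)) with hF
  have hderiv : ∀ t ∈ Ici (0:ℝ), HasDerivAt F
      (t ^ 2 * (Real.exp (-t / s) * (Real.cos (t / s) + Real.sin (t / s)))) t := by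
    intro t _
    have h1 : HasDerivAt (fun t : ℝ => -t / s) (-1 / s) t :=
      (hasDerivAt_id t).neg.div_const s
    have h2 : HasDerivAt (fun t : ℝ => t / s) (1 / s) t :=
      (hasDerivAt_id t).div_const s
    have he : HasDerivAt (fun t : ℝ => Real.exp (-t / s))
        (Real.exp (-t / s) * (-1 / s)) t := h1.exp
    have hc : HasDerivAt (fun t : ℝ => Real.cos (t / s))
        (-Real.sin (t / s) * (1 / s)) t := h2.cos
    have hsin : HasDerivAt (fun t : ℝ => Real.sin (t / s))
        (Real.cos (t / s) * (1 / s)) t := h2.sin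
    have hp1 : HasDerivAt (fun t : ℝ => -s * t ^ 2 - s ^ 2 * t)
        (-s * (2 * t) - s ^ 2) t := by
      have := ((hasDerivAt_pow 2 t).const_mul (-s)).sub ((hasDerivAt_id t).const_mul (s ^ 2))
      refine this.congr_deriv ?_; ring
    have hp2 : HasDerivAt (fun t : ℝ => s ^ 2 * t + s ^ 3) (s ^ 2) t := by
      have := ((hasDerivAt_id t).const_mul (s ^ 2)).add_const (s ^ 3)
      refine this.congr_deriv ?_; ring
    have := he.mul ((hp1.mul hc).add (hp2.mul hsin))
    refine this.congr_deriv ?_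
    simp only [Pi.mul_apply, Pi.add_apply]
    field_simp
    ring
  have hlim : Tendsto F atTop (𝓝 0) := by
    apply squeeze_zero_norm' (a := fun t =>
      (s * t ^ 2 + s ^ 2 * t) * Real.exp (-t / s) + (s ^ 2 * t + s ^ 3) * Real.exp (-t / s))
    · filter_upwards [Ioi_mem_atTop (0:ℝ)] with t ht
      have ht0 : 0 < t := ht
      rw [hF]
      simp only [Real.norm_eq_abs, abs_mul, Real.abs_exp]
      have hE := Real.exp_pos (-t / s)
      have hA : |(-s * t ^ 2 - s ^ 2 * t)| ≤ s * t ^ 2 + s ^ 2 * t := by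
        rw [abs_le]; constructor <;> nlinarith
      have hB : |s ^ 2 * t + s ^ 3| ≤ s ^ 2 * t + s ^ 3 := by
        rw [abs_le]; constructor <;> nlinarith
      have h1 : |(-s * t ^ 2 - s ^ 2 * t) * Real.cos (t / s)
          + (s ^ 2 * t + s ^ 3) * Real.sin (t / s)|
          ≤ (s * t ^ 2 + s ^ 2 * t) + (s ^ 2 * t + s ^ 3) := by
        calc |(-s * t ^ 2 - s ^ 2 * t) * Real.cos (t / s)
            + (s ^ 2 * t + s ^ 3) * Real.sin (t / s)|
            ≤ |(-s * t ^ 2 - s ^ 2 * t) * Real.cos (t / s)|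
              + |(s ^ 2 * t + s ^ 3) * Real.sin (t / s)| := abs_add_le _ _
          _ = |(-s * t ^ 2 - s ^ 2 * t)| * |Real.cos (t / s)|
              + |(s ^ 2 * t + s ^ 3)| * |Real.sin (t / s)| := by rw [abs_mul, abs_mul]
          _ ≤ (s * t ^ 2 + s ^ 2 * t) * 1 + (s ^ 2 * t + s ^ 3) * 1 :=
              add_le_add
                (mul_le_mul hA (Real.abs_cos_le_one _) (abs_nonneg _) (by nlinarith))
                (mul_le_mul hB (Real.abs_sin_le_one _) (abs_nonneg _) (by nlinarith))
          _ = (s * t ^ 2 + s ^ 2 * t) + (s ^ 2 * t + s ^ 3) := by ring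
      calc Real.exp (-t / s) * |(-s * t ^ 2 - s ^ 2 * t) * Real.cos (t / s)
            + (s ^ 2 * t + s ^ 3) * Real.sin (t / s)|
          ≤ Real.exp (-t / s) * ((s * t ^ 2 + s ^ 2 * t) + (s ^ 2 * t + s ^ 3)) := by
            exact mul_le_mul_of_nonneg_left h1 hE.le
        _ = (s * t ^ 2 + s ^ 2 * t) * Real.exp (-t / s)
            + (s ^ 2 * t + s ^ 3) * Real.exp (-t / s) := by ring
    · have h2 := (pow_mul_exp_tendsto 2 hs).const_mul s
      have h1 := (pow_mul_exp_tendsto 1 hs).const_mul (s ^ 2)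
      have h0 := (pow_mul_exp_tendsto 0 hs).const_mul (s ^ 3)
      rw [mul_zero] at h2 h1 h0
      have hsum := (h2.add h1).add (h1.add h0)
      rw [add_zero, add_zero] at hsum
      exact hsum.congr fun t => by ring
  have hint : IntegrableOn (fun t : ℝ => t ^ 2 *
      (Real.exp (-t / s) * (Real.cos (t / s) + Real.sin (t / s)))) (Ioi 0) := by
    apply integrable_of_isBigO_exp_neg (b := 1 / (2 * s)) (by positivity)
    · fun_prop
    · rw [Asymptotics.isBigO_iff]
      have hten : Tendsto (fun t : ℝ => 2 * (t ^ 2 * Real.exp (-t / (2 * s))))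
          atTop (𝓝 0) := by
        have := (pow_mul_exp_tendsto 2 (by positivity : (0:ℝ) < 2 * s)).const_mul 2
        rwa [mul_zero] at this
      refine ⟨1, ?_⟩
      filter_upwards [(hten.eventually (eventually_le_nhds (by norm_num : (0:ℝ) < 1))),
        Ioi_mem_atTop (0:ℝ)] with t hb ht0
      simp only [Real.norm_eq_abs, abs_mul, Real.abs_exp, abs_pow, one_mul]
      have hcs : |Real.cos (t / s) + Real.sin (t / s)| ≤ 2 := by
        calc |Real.cos (t / s) + Real.sin (t / s)|
            ≤ |Real.cos (t / s)| + |Real.sin (t / s)| := abs_add_le _ _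
          _ ≤ 1 + 1 := add_le_add (Real.abs_cos_le_one _) (Real.abs_sin_le_one _)
          _ = 2 := by norm_num
      have habs : |t| = t := abs_of_pos ht0
      rw [habs]
      have hsplit : Real.exp (-t / s) = Real.exp (-t / (2 * s)) * Real.exp (-t / (2 * s)) := by
        rw [← Real.exp_add]; congr 1; field_simp; ring
      have hE2 := Real.exp_pos (-t / (2 * s))
      calc t ^ 2 * (Real.exp (-t / s) * |Real.cos (t / s) + Real.sin (t / s)|)
          ≤ t ^ 2 * (Real.exp (-t / s) * 2) := by
            apply mul_le_mul_of_nonneg_left _ (by positivity)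
            exact mul_le_mul_of_nonneg_left hcs (Real.exp_pos _).le
        _ = 2 * (t ^ 2 * Real.exp (-t / (2 * s))) * Real.exp (-t / (2 * s)) := by
            rw [hsplit]; ring
        _ ≤ 1 * Real.exp (-t / (2 * s)) := by
            apply mul_le_mul_of_nonneg_right hb hE2.le
        _ = Real.exp (-(1 / (2 * s)) * t) := by rw [one_mul]; congr 1; field_simp
  rw [integral_Ioi_of_hasDerivAt_of_tendsto' hderiv hint hlim]
  simp [hF]

/-- Example 1, `m = 2`: the equivalent kernel
`K(t) = (1/(2√2)) e^{−|t|/√2} (cos(|t|/√2) + sin(|t|/√2))` is a kernel of order 4. -/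
theorem stmt_15 (K : ℝ → ℝ)
    (hK : ∀ t : ℝ, K t = 1 / (2 * Real.sqrt 2) * Real.exp (-|t| / Real.sqrt 2) *
      (Real.cos (|t| / Real.sqrt 2) + Real.sin (|t| / Real.sqrt 2))) :
    (∫ t : ℝ, K t) = 1 ∧ ∀ k : ℕ, 1 ≤ k → k ≤ 3 → (∫ t : ℝ, t ^ k * K t) = 0 := by
  have hs : (0:ℝ) < Real.sqrt 2 := Real.sqrt_pos.mpr (by norm_num)
  have hsne : Real.sqrt 2 ≠ 0 := hs.ne'
  have hKeven : ∀ t : ℝ, K (-t) = K t := by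
    intro t; rw [hK, hK, abs_neg]
  constructor
  · have h0 : (∫ t : ℝ, K t) =
        ∫ t : ℝ, (fun u => 1 / (2 * Real.sqrt 2) * (Real.exp (-u / Real.sqrt 2) *
          (Real.cos (u / Real.sqrt 2) + Real.sin (u / Real.sqrt 2)))) |t| := by
      congr 1; ext t; rw [hK]; ring
    rw [h0, integral_comp_abs (f := fun u => 1 / (2 * Real.sqrt 2) * (Real.exp (-u / Real.sqrt 2) *
          (Real.cos (u / Real.sqrt 2) + Real.sin (u / Real.sqrt 2))))]
    rw [integral_const_mul, aux_int0 hs]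
    field_simp
  · intro k hk1 hk3
    have hodd : ∀ (g : ℝ → ℝ), (∀ t, g (-t) = -g t) → (∫ t : ℝ, g t) = 0 := by
      intro g hg
      have h := integral_neg_eq_self g (volume : Measure ℝ)
      simp_rw [hg, integral_neg] at h
      linarith
    interval_cases k
    · exact hodd _ fun t => by rw [hKeven]; ring
    · have h0 : (∫ t : ℝ, t ^ 2 * K t) =
          ∫ t : ℝ, (fun u => 1 / (2 * Real.sqrt 2) * (u ^ 2 * (Real.exp (-u / Real.sqrt 2) *
            (Real.cos (u / Real.sqrt 2) + Real.sin (u / Real.sqrt 2))))) |t| := by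
        congr 1; ext t; rw [hK, ← sq_abs]; ring
      rw [h0, integral_comp_abs (f := fun u => 1 / (2 * Real.sqrt 2) * (u ^ 2 * (Real.exp (-u / Real.sqrt 2) *
            (Real.cos (u / Real.sqrt 2) + Real.sin (u / Real.sqrt 2))))), integral_const_mul, aux_int2 hs]
      ring
    · exact hodd _ fun t => by rw [hKeven]; ring
end
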